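/- arXiv:1507.00807 — 11 statements merged into one kernel-verified Lean document; each statement's English description precedes it below -/
import Mathlib

section
/- Let a < b be real numbers, let w : [a,b] → [0,∞) be a concave function, and let f ∈ C²[a,b] satisfy f(a) = f(b) = 0. Then (∫ₐᵇ w(x) f'(x)² dx)² ≤ (∫ₐᵇ w(x) f(x)² dx) · (∫ₐᵇ w(x) f''(x)² dx). -/
open Set MeasureTheory intervalIntegral
open scoped Interval

section helpers

variable {a b : ℝ} {w : ℝ → ℝ}

/-- Integrability of (shifted w) * continuous function. -/
lemma hl_integrable (hwcont : ContinuousOn w (Ioo a b))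
    {M : ℝ} (hM : ∀ x ∈ Icc a b, |w x| ≤ M)
    (e c d : ℝ) (h1 : a ≤ c + e) (h2 : d + e ≤ b) (hcd : c ≤ d)
    {φ : ℝ → ℝ} (hφ : ContinuousOn φ (Icc c d)) :
    IntervalIntegrable (fun y => w (y + e) * φ y) volume c d := by
  obtain ⟨B, hB⟩ := isCompact_Icc.exists_bound_of_continuousOn hφ
  rw [intervalIntegrable_iff, uIoc_of_le hcd]
  have hrestr : volume.restrict (Ioo c d) = volume.restrict (Ioc c d) :=
    Measure.restrict_congr_set Ioo_ae_eq_Ioc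
  have hcont : ContinuousOn (fun y => w (y + e) * φ y) (Ioo c d) := by
    apply ContinuousOn.mul
    · apply hwcont.comp (continuous_add_right e).continuousOn
      intro y hy
      show y + e ∈ Ioo a b
      exact ⟨lt_of_le_of_lt h1 (by linarith [hy.1]), lt_of_lt_of_le (by linarith [hy.2]) h2⟩
    · exact hφ.mono Ioo_subset_Icc_self
  have hmeas : AEStronglyMeasurable (fun y => w (y + e) * φ y) (volume.restrict (Ioc c d)) := by
    rw [← hrestr]
    exact hcont.aestronglyMeasurable measurableSet_Ioo
  refine Integrable.mono' (g := fun _ => M * B) ?_ hmeas ?_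
  · exact (integrableOn_const measure_Ioc_lt_top.ne)
  · filter_upwards [ae_restrict_mem measurableSet_Ioc] with y hy
    have hy1 : y + e ∈ Icc a b := ⟨by linarith [hy.1], by linarith [hy.2]⟩
    have hy2 : y ∈ Icc c d := Ioc_subset_Icc_self hy
    calc ‖w (y + e) * φ y‖ = |w (y + e)| * |φ y| := by rw [norm_mul]; rfl
    _ ≤ M * B := by
        apply mul_le_mul (hM _ hy1) (hB y hy2) (abs_nonneg _)
        exact le_trans (abs_nonneg _) (hM _ hy1)

/-- FTC on subintervals. -/
lemma hl_ftc {v v' : ℝ → ℝ}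
    (hv : ∀ x ∈ Icc a b, HasDerivWithinAt v (v' x) (Icc a b) x)
    (hv'c : ContinuousOn v' (Icc a b))
    (c d : ℝ) (hac : a ≤ c) (hcd : c ≤ d) (hdb : d ≤ b) :
    ∫ x in c..d, v' x = v d - v c := by
  apply integral_eq_sub_of_hasDeriv_right_of_le hcd
  · have hvc : ContinuousOn v (Icc a b) := fun x hx => (hv x hx).continuousWithinAt
    exact hvc.mono (Icc_subset_Icc hac hdb)
  · intro x hx
    have hx' : x ∈ Icc a b := ⟨le_trans hac hx.1.le, le_trans hx.2.le hdb⟩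
    have hmem : Icc a b ∈ nhds x :=
      Icc_mem_nhds (lt_of_le_of_lt hac hx.1) (lt_of_lt_of_le hx.2 hdb)
    exact ((hv x hx').hasDerivAt hmem).hasDerivWithinAt
  · exact (hv'c.mono (Icc_subset_Icc hac hdb)).intervalIntegrable_of_Icc hcd

end helpers

set_option maxHeartbeats 4000000 in
/-- Key step: for a nonnegative concave weight and a nonnegative C² function `u`
vanishing to first order at both endpoints, `∫ w u'' ≤ 0`. -/
lemma hl_key (a b : ℝ) (hab : a < b) (w u u' u'' : ℝ → ℝ)
    (hw0 : ∀ x ∈ Icc a b, 0 ≤ w x)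
    (hwconc : ConcaveOn ℝ (Icc a b) w)
    (hu' : ∀ x ∈ Icc a b, HasDerivWithinAt u (u' x) (Icc a b) x)
    (hu'' : ∀ x ∈ Icc a b, HasDerivWithinAt u' (u'' x) (Icc a b) x)
    (hu''c : ContinuousOn u'' (Icc a b))
    (hu0 : ∀ x ∈ Icc a b, 0 ≤ u x)
    (hua : u a = 0) (hub : u b = 0) (hu'a : u' a = 0) (hu'b : u' b = 0) :
    ∫ x in a..b, w x * u'' x ≤ 0 := by
  have hab' : a ≤ b := hab.le
  have hwcont : ContinuousOn w (Ioo a b) := by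
    have := hwconc.continuousOn_interior
    rwa [interior_Icc] at this
  -- bound on w
  have hmid : (a + b) / 2 ∈ Icc a b := ⟨by linarith, by linarith⟩
  set M := 2 * w ((a + b) / 2) with hMdef
  have hM : ∀ x ∈ Icc a b, |w x| ≤ M := by
    intro x hx
    have hx' : a + b - x ∈ Icc a b := ⟨by linarith [hx.2], by linarith [hx.1]⟩
    have h2 := hwconc.2 hx hx' (by norm_num : (0:ℝ) ≤ 1/2) (by norm_num : (0:ℝ) ≤ 1/2)
      (by norm_num)
    have e : (1/2 : ℝ) • x + (1/2 : ℝ) • (a + b - x) = (a + b) / 2 := by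
      simp only [smul_eq_mul]; ring
    rw [e] at h2
    simp only [smul_eq_mul] at h2
    rw [abs_of_nonneg (hw0 x hx)]
    have := hw0 _ hx'
    simp only [hMdef]
    linarith
  have hM0 : 0 ≤ M := le_trans (abs_nonneg _) (hM a ⟨le_rfl, hab'⟩)
  -- bound on u''
  obtain ⟨L, hL⟩ := isCompact_Icc.exists_bound_of_continuousOn hu''c
  have hL0 : 0 ≤ L := le_trans (norm_nonneg _) (hL a ⟨le_rfl, hab'⟩)
  have hu'c : ContinuousOn u' (Icc a b) := fun x hx => (hu'' x hx).continuousWithinAt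
  have huc : ContinuousOn u (Icc a b) := fun x hx => (hu' x hx).continuousWithinAt
  -- first-order bounds on u'
  have hu'bd1 : ∀ x ∈ Icc a b, |u' x| ≤ L * (x - a) := by
    intro x hx
    have e : u' x = ∫ t in a..x, u'' t := by
      rw [hl_ftc hu'' hu''c a x le_rfl hx.1 hx.2, hu'a, sub_zero]
    have hb : ∀ t ∈ Ι a x, ‖u'' t‖ ≤ L := by
      intro t ht
      rw [uIoc_of_le hx.1] at ht
      exact hL t ⟨ht.1.le, le_trans ht.2 hx.2⟩
    have := norm_integral_le_of_norm_le_const hb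
    rw [← e, Real.norm_eq_abs, abs_of_nonneg (by linarith [hx.1] : (0:ℝ) ≤ x - a)] at this
    exact this
  have hu'bd2 : ∀ x ∈ Icc a b, |u' x| ≤ L * (b - x) := by
    intro x hx
    have e : (∫ t in x..b, u'' t) = - u' x := by
      rw [hl_ftc hu'' hu''c x b hx.1 hx.2 le_rfl, hu'b, zero_sub]
    have hb : ∀ t ∈ Ι x b, ‖u'' t‖ ≤ L := by
      intro t ht
      rw [uIoc_of_le hx.2] at ht
      exact hL t ⟨le_trans hx.1 ht.1.le, ht.2⟩
    have := norm_integral_le_of_norm_le_const hb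
    rw [e, norm_neg, Real.norm_eq_abs, abs_of_nonneg (by linarith [hx.2] : (0:ℝ) ≤ b - x)]
      at this
    exact this
  -- second-order bounds on u
  have hubd1 : ∀ x ∈ Icc a b, u x ≤ L / 2 * (x - a) ^ 2 := by
    intro x hx
    have e : u x = ∫ t in a..x, u' t := by
      rw [hl_ftc hu' hu'c a x le_rfl hx.1 hx.2, hua, sub_zero]
    have hbnd : ∀ᵐ t ∂(volume.restrict (Ι a x)), ‖u' t‖ ≤ L * (t - a) := by
      filter_upwards [ae_restrict_mem measurableSet_uIoc] with t ht
      rw [uIoc_of_le hx.1] at ht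
      exact hu'bd1 t ⟨ht.1.le, le_trans ht.2 hx.2⟩
    have hgint : IntervalIntegrable (fun t => L * (t - a)) volume a x :=
      Continuous.intervalIntegrable (continuous_const.mul (continuous_id.sub continuous_const)) a x
    have h1 := norm_integral_le_abs_of_norm_le hbnd hgint
    have e2 : ∫ t in a..x, L * (t - a) = L / 2 * (x - a) ^ 2 := by
      rw [intervalIntegral.integral_const_mul]
      rw [intervalIntegral.integral_comp_sub_right (fun t => t) a, integral_id]
      ring
    rw [← e, e2, Real.norm_eq_abs,
      abs_of_nonneg (by positivity : (0:ℝ) ≤ L / 2 * (x - a) ^ 2)] at h1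
    exact le_trans (le_abs_self _) h1
  have hubd2 : ∀ x ∈ Icc a b, u x ≤ L / 2 * (b - x) ^ 2 := by
    intro x hx
    have e : (∫ t in x..b, u' t) = - u x := by
      rw [hl_ftc hu' hu'c x b hx.1 hx.2 le_rfl, hub, zero_sub]
    have hbnd : ∀ᵐ t ∂(volume.restrict (Ι x b)), ‖u' t‖ ≤ L * (b - t) := by
      filter_upwards [ae_restrict_mem measurableSet_uIoc] with t ht
      rw [uIoc_of_le hx.2] at ht
      exact hu'bd2 t ⟨le_trans hx.1 ht.1.le, ht.2⟩
    have hgint : IntervalIntegrable (fun t => L * (b - t)) volume x b :=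
      Continuous.intervalIntegrable (continuous_const.mul (continuous_const.sub continuous_id)) x b
    have h1 := norm_integral_le_abs_of_norm_le hbnd hgint
    have e2 : ∫ t in x..b, L * (b - t) = L / 2 * (b - x) ^ 2 := by
      rw [intervalIntegral.integral_const_mul]
      rw [intervalIntegral.integral_comp_sub_left (fun t => t) b, integral_id]
      ring
    rw [e, norm_neg, e2, Real.norm_eq_abs,
      abs_of_nonneg (by positivity : (0:ℝ) ≤ L / 2 * (b - x) ^ 2)] at h1
    exact le_trans (le_abs_self _) h1
  -- reduce to: for every ε > 0 the integral is at most ε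
  set I := ∫ x in a..b, w x * u'' x with hIdef
  by_contra hcon
  push_neg at hcon
  suffices hsuff : ∀ ε > 0, I ≤ ε by
    have := hsuff (I / 2) (by linarith)
    linarith
  intro ε hε
  set ε₁ := ε / (2 * (M * (b - a) + 1)) with hε₁def
  have hε₁ : 0 < ε₁ := by
    apply div_pos hε
    nlinarith [mul_nonneg hM0 (by linarith : (0:ℝ) ≤ b - a)]
  -- uniform continuity of u''
  have hUC := isCompact_Icc.uniformContinuousOn_of_continuous hu''c
  rw [Metric.uniformContinuousOn_iff] at hUC
  obtain ⟨δ, hδ0, hδ⟩ := hUC ε₁ hε₁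
  have hMLpos : (0:ℝ) < 2 * (10 * M * L + 1) := by positivity
  set h := min (min (δ / 2) ((b - a) / 8)) (ε / (2 * (10 * M * L + 1))) with hhdef
  have hh0 : 0 < h := by
    apply lt_min (lt_min (by linarith) (by linarith))
    positivity
  have hhδ : h < δ :=
    lt_of_le_of_lt (le_trans (min_le_left _ _) (min_le_left _ _)) (by linarith)
  have hh8 : 8 * h ≤ b - a := by
    have h1 : h ≤ (b - a) / 8 := le_trans (min_le_left _ _) (min_le_right _ _)
    linarith
  have hhε : 10 * M * L * h ≤ ε / 2 := by
    have h1 : h ≤ ε / (2 * (10 * M * L + 1)) := min_le_right _ _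
    have h2 : (0:ℝ) ≤ 10 * M * L := by positivity
    have hq : ε / (2 * (10 * M * L + 1)) * (2 * (10 * M * L + 1)) = ε :=
      div_mul_cancel₀ _ (by positivity)
    nlinarith [mul_le_mul_of_nonneg_left h1 h2, hh0]
  -- the pointwise second-difference estimate
  have hD : ∀ x ∈ Icc (a + h) (b - h),
      |u (x + h) - 2 * u x + u (x - h) - h ^ 2 * u'' x| ≤ ε₁ * h ^ 2 := by
    intro x hx
    have hxa : a ≤ x - h := by linarith [hx.1]
    have hxb : x + h ≤ b := by linarith [hx.2]
    have hxm : x ∈ Icc a b := ⟨by linarith [hx.1], by linarith [hx.2]⟩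
    -- inner estimate
    have key1 : ∀ s ∈ Icc x (x + h), |u' s - u' (s - h) - h * u'' x| ≤ ε₁ * h := by
      intro s hs
      have e1 : u' s - u' (s - h) = ∫ r in (s - h)..s, u'' r := by
        rw [hl_ftc hu'' hu''c (s - h) s (by linarith [hs.1]) (by linarith)
          (by linarith [hs.2])]
      have e2 : h * u'' x = ∫ r in (s - h)..s, u'' x := by
        rw [intervalIntegral.integral_const]
        simp only [smul_eq_mul]
        ring
      have hbnd : ∀ r ∈ Ι (s - h) s, ‖u'' r - u'' x‖ ≤ ε₁ := by
        intro r hr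
        rw [uIoc_of_le (by linarith : s - h ≤ s)] at hr
        have hrm : r ∈ Icc a b := ⟨by linarith [hr.1.le, hs.1], by linarith [hr.2, hs.2]⟩
        have hdist : dist r x < δ := by
          rw [Real.dist_eq, abs_lt]
          constructor
          · linarith [hr.1.le, hs.1]
          · linarith [hr.2, hs.2]
        have := hδ r hrm x hxm hdist
        rw [Real.dist_eq] at this
        exact le_of_lt this
      have hi1 : IntervalIntegrable u'' volume (s - h) s :=
        (hu''c.mono (Icc_subset_Icc (by linarith [hs.1]) (by linarith [hs.2]))
          ).intervalIntegrable_of_Icc (by linarith)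
      have hi2 : IntervalIntegrable (fun _ => u'' x) volume (s - h) s :=
        intervalIntegrable_const
      have e3 : u' s - u' (s - h) - h * u'' x = ∫ r in (s - h)..s, (u'' r - u'' x) := by
        rw [intervalIntegral.integral_sub hi1 hi2, ← e1, ← e2]
      rw [e3, ← Real.norm_eq_abs]
      have := norm_integral_le_of_norm_le_const hbnd
      rwa [show s - (s - h) = h by ring, abs_of_nonneg hh0.le] at this
    -- outer estimate
    have e1 : u (x + h) - u x = ∫ s in x..(x + h), u' s := by
      rw [hl_ftc hu' hu'c x (x + h) (by linarith [hx.1]) (by linarith) hxb]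
    have e2 : u x - u (x - h) = ∫ s in x..(x + h), u' (s - h) := by
      rw [intervalIntegral.integral_comp_sub_right (fun s => u' s) h,
        show x + h - h = x by ring,
        hl_ftc hu' hu'c (x - h) x hxa (by linarith) (by linarith [hx.2])]
    have e3 : h ^ 2 * u'' x = ∫ s in x..(x + h), h * u'' x := by
      rw [intervalIntegral.integral_const]
      simp only [smul_eq_mul]
      ring
    have hi1 : IntervalIntegrable u' volume x (x + h) :=
      (hu'c.mono (Icc_subset_Icc (by linarith [hx.1]) hxb)).intervalIntegrable_of_Icc
        (by linarith)
    have hi2 : IntervalIntegrable (fun s => u' (s - h)) volume x (x + h) := by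
      have base : IntervalIntegrable u' volume (x - h) x :=
        (hu'c.mono (Icc_subset_Icc hxa (by linarith [hx.2]))).intervalIntegrable_of_Icc
          (by linarith)
      have := base.comp_sub_right h
      rwa [show x - h + h = x by ring] at this
    have hi3 : IntervalIntegrable (fun _ => h * u'' x) volume x (x + h) :=
      intervalIntegrable_const
    have e4 : u (x + h) - 2 * u x + u (x - h) - h ^ 2 * u'' x
        = ∫ s in x..(x + h), (u' s - u' (s - h) - h * u'' x) := by
      rw [intervalIntegral.integral_sub (hi1.sub hi2) hi3,
        intervalIntegral.integral_sub hi1 hi2, ← e1, ← e2, ← e3]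
      ring
    rw [e4, ← Real.norm_eq_abs]
    have hbnd : ∀ s ∈ Ι x (x + h), ‖u' s - u' (s - h) - h * u'' x‖ ≤ ε₁ * h := by
      intro s hs
      rw [uIoc_of_le (by linarith : x ≤ x + h)] at hs
      exact key1 s ⟨hs.1.le, hs.2⟩
    have := norm_integral_le_of_norm_le_const hbnd
    rwa [show x + h - x = h by ring, abs_of_nonneg hh0.le, mul_assoc, ← sq] at this
  -- notation for the cut points
  have hne : h ≠ 0 := ne_of_gt hh0
  have hpq : a + h ≤ b - h := by linarith
  have hp2q2 : a + 2 * h ≤ b - 2 * h := by linarith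
  have hsubpq : Icc (a + h) (b - h) ⊆ Icc a b := Icc_subset_Icc (by linarith) (by linarith)
  -- integrability machine
  have hInt0 : ∀ c d : ℝ, a ≤ c → c ≤ d → d ≤ b → ∀ {φ : ℝ → ℝ},
      ContinuousOn φ (Icc c d) → IntervalIntegrable (fun y => w y * φ y) volume c d := by
    intro c d hc hcd hd φ hφ
    have := hl_integrable hwcont hM 0 c d (by linarith) (by linarith) hcd hφ
    simpa using this
  have hIntm : ∀ c d : ℝ, a + h ≤ c → c ≤ d → d ≤ b → ∀ {φ : ℝ → ℝ},
      ContinuousOn φ (Icc c d) → IntervalIntegrable (fun y => w (y - h) * φ y) volume c d := by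
    intro c d hc hcd hd φ hφ
    have := hl_integrable hwcont hM (-h) c d (by linarith) (by linarith) hcd hφ
    simpa [sub_eq_add_neg] using this
  have hIntp : ∀ c d : ℝ, a ≤ c → c ≤ d → d ≤ b - h → ∀ {φ : ℝ → ℝ},
      ContinuousOn φ (Icc c d) → IntervalIntegrable (fun y => w (y + h) * φ y) volume c d := by
    intro c d hc hcd hd φ hφ
    exact hl_integrable hwcont hM h c d (by linarith) (by linarith) hcd hφ
  -- continuity of shifts of u
  have hcu_p : ContinuousOn (fun x => u (x + h)) (Icc (a + h) (b - h)) := by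
    apply huc.comp (continuous_add_right h).continuousOn
    intro y hy
    show y + h ∈ Icc a b
    exact ⟨by linarith [hy.1], by linarith [hy.2]⟩
  have hcu_m : ContinuousOn (fun x => u (x - h)) (Icc (a + h) (b - h)) := by
    apply huc.comp (continuous_sub_right h).continuousOn
    intro y hy
    show y - h ∈ Icc a b
    exact ⟨by linarith [hy.1], by linarith [hy.2]⟩
  have hcDq : ContinuousOn (fun x => u (x + h) - 2 * u x + u (x - h)) (Icc (a + h) (b - h)) :=
    (hcu_p.sub (continuousOn_const.mul (huc.mono hsubpq))).add hcu_m
  -- splitting of I at a+h and b-h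
  have int_l : IntervalIntegrable (fun x => w x * u'' x) volume a (a + h) :=
    hInt0 a (a + h) le_rfl (by linarith) (by linarith)
      (hu''c.mono (Icc_subset_Icc le_rfl (by linarith)))
  have int_m : IntervalIntegrable (fun x => w x * u'' x) volume (a + h) (b - h) :=
    hInt0 (a + h) (b - h) (by linarith) hpq (by linarith) (hu''c.mono hsubpq)
  have int_r : IntervalIntegrable (fun x => w x * u'' x) volume (b - h) b :=
    hInt0 (b - h) b (by linarith) (by linarith) le_rfl
      (hu''c.mono (Icc_subset_Icc (by linarith) le_rfl))
  have splitI : I = ((∫ x in a..(a + h), w x * u'' x)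
      + ∫ x in (a + h)..(b - h), w x * u'' x) + ∫ x in (b - h)..b, w x * u'' x := by
    rw [hIdef, ← integral_add_adjacent_intervals (int_l.trans int_m) int_r,
      ← integral_add_adjacent_intervals int_l int_m]
  -- end bounds
  have hwu''bd : ∀ x ∈ Icc a b, ‖w x * u'' x‖ ≤ M * L := by
    intro x hx
    rw [norm_mul, Real.norm_eq_abs]
    exact mul_le_mul (hM x hx) (hL x hx) (norm_nonneg _) hM0
  have end_l : (∫ x in a..(a + h), w x * u'' x) ≤ M * L * h := by
    have hbnd : ∀ x ∈ Ι a (a + h), ‖w x * u'' x‖ ≤ M * L := by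
      intro x hx
      rw [uIoc_of_le (by linarith : a ≤ a + h)] at hx
      exact hwu''bd x ⟨hx.1.le, by linarith [hx.2]⟩
    have := norm_integral_le_of_norm_le_const hbnd
    rw [show a + h - a = h by ring, abs_of_nonneg hh0.le] at this
    exact le_trans (le_abs_self _) this
  have end_r : (∫ x in (b - h)..b, w x * u'' x) ≤ M * L * h := by
    have hbnd : ∀ x ∈ Ι (b - h) b, ‖w x * u'' x‖ ≤ M * L := by
      intro x hx
      rw [uIoc_of_le (by linarith : b - h ≤ b)] at hx
      exact hwu''bd x ⟨by linarith [hx.1], hx.2⟩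
    have := norm_integral_le_of_norm_le_const hbnd
    rw [show b - (b - h) = h by ring, abs_of_nonneg hh0.le] at this
    exact le_trans (le_abs_self _) this
  -- middle decomposition
  have int_wE : IntervalIntegrable
      (fun x => w x * (u'' x - (u (x + h) - 2 * u x + u (x - h)) / h ^ 2))
      volume (a + h) (b - h) :=
    hInt0 (a + h) (b - h) (by linarith) hpq (by linarith)
      ((hu''c.mono hsubpq).sub (hcDq.div_const _))
  have int_wDq : IntervalIntegrable
      (fun x => w x * (u (x + h) - 2 * u x + u (x - h))) volume (a + h) (b - h) :=
    hInt0 (a + h) (b - h) (by linarith) hpq (by linarith) hcDq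
  have mid_eq : (∫ x in (a + h)..(b - h), w x * u'' x)
      = (∫ x in (a + h)..(b - h), w x * (u'' x - (u (x + h) - 2 * u x + u (x - h)) / h ^ 2))
        + (1 / h ^ 2) * ∫ x in (a + h)..(b - h), w x * (u (x + h) - 2 * u x + u (x - h)) := by
    rw [← intervalIntegral.integral_const_mul,
      ← intervalIntegral.integral_add int_wE (int_wDq.const_mul _)]
    apply intervalIntegral.integral_congr
    intro x hx
    field_simp
    ring
  have mid1 : (∫ x in (a + h)..(b - h),
      w x * (u'' x - (u (x + h) - 2 * u x + u (x - h)) / h ^ 2)) ≤ M * ε₁ * (b - a) := by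
    have hbnd : ∀ x ∈ Ι (a + h) (b - h),
        ‖w x * (u'' x - (u (x + h) - 2 * u x + u (x - h)) / h ^ 2)‖ ≤ M * ε₁ := by
      intro x hx
      rw [uIoc_of_le hpq] at hx
      have hxm : x ∈ Icc (a + h) (b - h) := Ioc_subset_Icc_self hx
      have h2 := hD x hxm
      rw [norm_mul, Real.norm_eq_abs, Real.norm_eq_abs]
      apply mul_le_mul (hM x (hsubpq hxm)) ?_ (abs_nonneg _) hM0
      have e : u'' x - (u (x + h) - 2 * u x + u (x - h)) / h ^ 2
          = -(u (x + h) - 2 * u x + u (x - h) - h ^ 2 * u'' x) / h ^ 2 := by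
        field_simp
        ring
      rw [e, abs_div, abs_neg, abs_of_pos (by positivity : (0:ℝ) < h ^ 2),
        div_le_iff₀ (by positivity : (0:ℝ) < h ^ 2)]
      exact h2
    have := norm_integral_le_of_norm_le_const hbnd
    have habs : |b - h - (a + h)| = b - a - 2 * h := by
      rw [abs_of_nonneg (by linarith)]
      ring
    rw [habs] at this
    have h3 := le_trans (le_abs_self _) this
    nlinarith [mul_nonneg hM0 hε₁.le]
  -- change of variables for the shifted pieces
  have A1 : (∫ x in (a + h)..(b - h), w x * u (x + h))
      = ∫ y in (a + 2 * h)..b, w (y - h) * u y := by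
    have e := intervalIntegral.integral_comp_add_right (a := a + h) (b := b - h)
      (fun y => w (y - h) * u y) h
    simp only [add_sub_cancel_right] at e
    rw [show a + h + h = a + 2 * h by ring, show b - h + h = b by ring] at e
    exact e
  have A2 : (∫ x in (a + h)..(b - h), w x * u (x - h))
      = ∫ y in a..(b - 2 * h), w (y + h) * u y := by
    have e := intervalIntegral.integral_comp_sub_right (a := a + h) (b := b - h)
      (fun y => w (y + h) * u y) h
    simp only [sub_add_cancel] at e
    rw [show a + h - h = a by ring, show b - h - h = b - 2 * h by ring] at e
    exact e
  -- integrability of all the pieces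
  have hsub_all : ∀ c d : ℝ, a ≤ c → d ≤ b → Icc c d ⊆ Icc a b :=
    fun c d hc hd => Icc_subset_Icc hc hd
  have iX1 : IntervalIntegrable (fun y => w (y - h) * u y) volume (a + 2 * h) (b - 2 * h) :=
    hIntm _ _ (by linarith) hp2q2 (by linarith)
      (huc.mono (hsub_all _ _ (by linarith) (by linarith)))
  have iS1 : IntervalIntegrable (fun y => w (y - h) * u y) volume (b - 2 * h) b :=
    hIntm _ _ (by linarith) (by linarith) le_rfl
      (huc.mono (hsub_all _ _ (by linarith) le_rfl))
  have iS2 : IntervalIntegrable (fun y => w (y + h) * u y) volume a (a + 2 * h) :=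
    hIntp _ _ le_rfl (by linarith) (by linarith)
      (huc.mono (hsub_all _ _ le_rfl (by linarith)))
  have iX2 : IntervalIntegrable (fun y => w (y + h) * u y) volume (a + 2 * h) (b - 2 * h) :=
    hIntp _ _ (by linarith) hp2q2 (by linarith)
      (huc.mono (hsub_all _ _ (by linarith) (by linarith)))
  have iT1 : IntervalIntegrable (fun y => w y * u y) volume (a + h) (a + 2 * h) :=
    hInt0 _ _ (by linarith) (by linarith) (by linarith)
      (huc.mono (hsub_all _ _ (by linarith) (by linarith)))
  have iX3 : IntervalIntegrable (fun y => w y * u y) volume (a + 2 * h) (b - 2 * h) :=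
    hInt0 _ _ (by linarith) hp2q2 (by linarith)
      (huc.mono (hsub_all _ _ (by linarith) (by linarith)))
  have iT2 : IntervalIntegrable (fun y => w y * u y) volume (b - 2 * h) (b - h) :=
    hInt0 _ _ (by linarith) (by linarith) (by linarith)
      (huc.mono (hsub_all _ _ (by linarith) (by linarith)))
  have iP : IntervalIntegrable (fun x => w x * u (x + h)) volume (a + h) (b - h) :=
    hInt0 _ _ (by linarith) hpq (by linarith) hcu_p
  have iM : IntervalIntegrable (fun x => w x * u (x - h)) volume (a + h) (b - h) :=
    hInt0 _ _ (by linarith) hpq (by linarith) hcu_m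
  have iWU : IntervalIntegrable (fun x => w x * u x) volume (a + h) (b - h) :=
    hInt0 _ _ (by linarith) hpq (by linarith) (huc.mono hsubpq)
  -- expand the second-difference integral
  have expand : (∫ x in (a + h)..(b - h), w x * (u (x + h) - 2 * u x + u (x - h)))
      = (∫ x in (a + h)..(b - h), w x * u (x + h))
        + (∫ x in (a + h)..(b - h), w x * u (x - h))
        - 2 * ∫ x in (a + h)..(b - h), w x * u x := by
    rw [← intervalIntegral.integral_const_mul,
      ← intervalIntegral.integral_add iP iM,
      ← intervalIntegral.integral_sub (iP.add iM) (iWU.const_mul 2)]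
    apply intervalIntegral.integral_congr
    intro x hx
    ring
  -- splits at a+2h and b-2h
  have split1 : (∫ y in (a + 2 * h)..b, w (y - h) * u y)
      = (∫ y in (a + 2 * h)..(b - 2 * h), w (y - h) * u y)
        + ∫ y in (b - 2 * h)..b, w (y - h) * u y :=
    (integral_add_adjacent_intervals iX1 iS1).symm
  have split2 : (∫ y in a..(b - 2 * h), w (y + h) * u y)
      = (∫ y in a..(a + 2 * h), w (y + h) * u y)
        + ∫ y in (a + 2 * h)..(b - 2 * h), w (y + h) * u y :=
    (integral_add_adjacent_intervals iS2 iX2).symm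
  have split3 : (∫ x in (a + h)..(b - h), w x * u x)
      = ((∫ x in (a + h)..(a + 2 * h), w x * u x)
        + ∫ x in (a + 2 * h)..(b - 2 * h), w x * u x)
        + ∫ x in (b - 2 * h)..(b - h), w x * u x := by
    rw [← integral_add_adjacent_intervals (iT1.trans iX3) iT2,
      ← integral_add_adjacent_intervals iT1 iX3]
  -- the core concavity estimate
  have coreSum : (∫ y in (a + 2 * h)..(b - 2 * h), w (y - h) * u y)
      + (∫ y in (a + 2 * h)..(b - 2 * h), w (y + h) * u y)
      - 2 * (∫ y in (a + 2 * h)..(b - 2 * h), w y * u y)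
      = ∫ y in (a + 2 * h)..(b - 2 * h),
          (w (y - h) * u y + w (y + h) * u y - 2 * (w y * u y)) := by
    rw [intervalIntegral.integral_sub (iX1.add iX2) (iX3.const_mul 2),
      intervalIntegral.integral_add iX1 iX2, intervalIntegral.integral_const_mul]
  have core : (∫ y in (a + 2 * h)..(b - 2 * h),
      (w (y - h) * u y + w (y + h) * u y - 2 * (w y * u y))) ≤ 0 := by
    have hnn : 0 ≤ ∫ y in (a + 2 * h)..(b - 2 * h),
        (2 * (w y * u y) - (w (y - h) * u y + w (y + h) * u y)) := by
      apply intervalIntegral.integral_nonneg hp2q2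
      intro y hy
      have hym : y ∈ Icc a b := ⟨by linarith [hy.1], by linarith [hy.2]⟩
      have hymh : y - h ∈ Icc a b := ⟨by linarith [hy.1], by linarith [hy.2]⟩
      have hyph : y + h ∈ Icc a b := ⟨by linarith [hy.1], by linarith [hy.2]⟩
      have hconc := hwconc.2 hymh hyph (by norm_num : (0:ℝ) ≤ 1/2)
        (by norm_num : (0:ℝ) ≤ 1/2) (by norm_num)
      have e : (1/2 : ℝ) • (y - h) + (1/2 : ℝ) • (y + h) = y := by
        simp only [smul_eq_mul]; ring
      rw [e] at hconc
      simp only [smul_eq_mul] at hconc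
      nlinarith [hu0 y hym]
    have e : (fun y => w (y - h) * u y + w (y + h) * u y - 2 * (w y * u y))
        = fun y => -(2 * (w y * u y) - (w (y - h) * u y + w (y + h) * u y)) :=
      funext fun y => by ring
    rw [e, intervalIntegral.integral_neg]
    linarith
  -- strip estimates
  have strip1 : (∫ y in (b - 2 * h)..b, w (y - h) * u y) ≤ 4 * M * L * h ^ 3 := by
    have hbnd : ∀ y ∈ Ι (b - 2 * h) b, ‖w (y - h) * u y‖ ≤ M * (2 * L * h ^ 2) := by
      intro y hy
      rw [uIoc_of_le (by linarith : b - 2 * h ≤ b)] at hy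
      have hym : y ∈ Icc a b := ⟨by linarith [hy.1], hy.2⟩
      have hymh : y - h ∈ Icc a b := ⟨by linarith [hy.1], by linarith [hy.2]⟩
      rw [norm_mul, Real.norm_eq_abs, Real.norm_eq_abs,
        abs_of_nonneg (hu0 y hym)]
      apply mul_le_mul (hM _ hymh) ?_ (hu0 y hym) hM0
      have := hubd2 y hym
      nlinarith [mul_nonneg (mul_nonneg hL0
        (by linarith [hy.1] : (0:ℝ) ≤ 2 * h - (b - y)))
        (by linarith [hy.2] : (0:ℝ) ≤ 2 * h + (b - y))]
    have := norm_integral_le_of_norm_le_const hbnd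
    rw [show b - (b - 2 * h) = 2 * h by ring, abs_of_nonneg (by linarith : (0:ℝ) ≤ 2 * h)]
      at this
    have h2 := le_trans (le_abs_self _) this
    nlinarith [h2]
  have strip2 : (∫ y in a..(a + 2 * h), w (y + h) * u y) ≤ 4 * M * L * h ^ 3 := by
    have hbnd : ∀ y ∈ Ι a (a + 2 * h), ‖w (y + h) * u y‖ ≤ M * (2 * L * h ^ 2) := by
      intro y hy
      rw [uIoc_of_le (by linarith : a ≤ a + 2 * h)] at hy
      have hym : y ∈ Icc a b := ⟨hy.1.le, by linarith [hy.2]⟩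
      have hyph : y + h ∈ Icc a b := ⟨by linarith [hy.1], by linarith [hy.2]⟩
      rw [norm_mul, Real.norm_eq_abs, Real.norm_eq_abs,
        abs_of_nonneg (hu0 y hym)]
      apply mul_le_mul (hM _ hyph) ?_ (hu0 y hym) hM0
      have := hubd1 y hym
      nlinarith [mul_nonneg (mul_nonneg hL0
        (by linarith [hy.2] : (0:ℝ) ≤ 2 * h - (y - a)))
        (by linarith [hy.1.le] : (0:ℝ) ≤ 2 * h + (y - a))]
    have := norm_integral_le_of_norm_le_const hbnd
    rw [show a + 2 * h - a = 2 * h by ring, abs_of_nonneg (by linarith : (0:ℝ) ≤ 2 * h)]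
      at this
    have h2 := le_trans (le_abs_self _) this
    nlinarith [h2]
  have strip3 : 0 ≤ ∫ x in (a + h)..(a + 2 * h), w x * u x := by
    apply intervalIntegral.integral_nonneg (by linarith)
    intro y hy
    have hym : y ∈ Icc a b := ⟨by linarith [hy.1], by linarith [hy.2]⟩
    exact mul_nonneg (hw0 y hym) (hu0 y hym)
  have strip4 : 0 ≤ ∫ x in (b - 2 * h)..(b - h), w x * u x := by
    apply intervalIntegral.integral_nonneg (by linarith)
    intro y hy
    have hym : y ∈ Icc a b := ⟨by linarith [hy.1], by linarith [hy.2]⟩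
    exact mul_nonneg (hw0 y hym) (hu0 y hym)
  -- total bound on the second-difference integral
  have Jbd : (∫ x in (a + h)..(b - h), w x * (u (x + h) - 2 * u x + u (x - h)))
      ≤ 8 * M * L * h ^ 3 := by
    rw [expand, A1, A2, split1, split2, split3]
    have hcore := coreSum
    linarith [core, strip1, strip2, strip3, strip4, hcore]
  have mid2 : (1 / h ^ 2) * (∫ x in (a + h)..(b - h),
      w x * (u (x + h) - 2 * u x + u (x - h))) ≤ 8 * M * L * h := by
    have hpos : (0:ℝ) ≤ 1 / h ^ 2 := by positivity
    have := mul_le_mul_of_nonneg_left Jbd hpos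
    calc (1 / h ^ 2) * (∫ x in (a + h)..(b - h),
        w x * (u (x + h) - 2 * u x + u (x - h)))
        ≤ (1 / h ^ 2) * (8 * M * L * h ^ 3) := this
      _ = 8 * M * L * h := by field_simp
  -- final arithmetic
  have hε₁half : M * ε₁ * (b - a) ≤ ε / 2 := by
    have hden : (0:ℝ) < 2 * (M * (b - a) + 1) := by
      nlinarith [mul_nonneg hM0 (by linarith : (0:ℝ) ≤ b - a)]
    have hq : ε₁ * (2 * (M * (b - a) + 1)) = ε := by
      rw [hε₁def]
      field_simp
      exact div_self (by linarith : (0:ℝ) < M * (b - a) + 1).ne'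
    nlinarith [hε₁.le, mul_nonneg hM0 (by linarith : (0:ℝ) ≤ b - a)]
  rw [splitI, mid_eq]
  have hMLh : 0 ≤ M * L * h := by positivity
  linarith [end_l, end_r, mid1, mid2, hhε]

set_option maxHeartbeats 1000000 in
/-- Hardy–Littlewood integral inequality on a finite interval with a concave
weight: for concave `w : [a,b] → [0,∞)` and `f ∈ C²[a,b]` with
`f a = f b = 0`, `(∫ₐᵇ w f'²)² ≤ (∫ₐᵇ w f²) (∫ₐᵇ w f''²)`. -/
theorem hardy_littlewood_concave_weight
    (a b : ℝ) (hab : a < b) (w f f' f'' : ℝ → ℝ)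
    (hw0 : ∀ x ∈ Set.Icc a b, 0 ≤ w x)
    (hwconc : ConcaveOn ℝ (Set.Icc a b) w)
    (hf' : ∀ x ∈ Set.Icc a b, HasDerivWithinAt f (f' x) (Set.Icc a b) x)
    (hf'' : ∀ x ∈ Set.Icc a b, HasDerivWithinAt f' (f'' x) (Set.Icc a b) x)
    (hf''cont : ContinuousOn f'' (Set.Icc a b))
    (hfa : f a = 0) (hfb : f b = 0) :
    (∫ x in a..b, w x * f' x ^ 2) ^ 2 ≤
      (∫ x in a..b, w x * f x ^ 2) * (∫ x in a..b, w x * f'' x ^ 2) := by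
  have hab' : a ≤ b := hab.le
  have hfc : ContinuousOn f (Icc a b) := fun x hx => (hf' x hx).continuousWithinAt
  have hf'c : ContinuousOn f' (Icc a b) := fun x hx => (hf'' x hx).continuousWithinAt
  have hwcont : ContinuousOn w (Ioo a b) := by
    have := hwconc.continuousOn_interior
    rwa [interior_Icc] at this
  have hmid : (a + b) / 2 ∈ Icc a b := ⟨by linarith, by linarith⟩
  have hM : ∀ x ∈ Icc a b, |w x| ≤ 2 * w ((a + b) / 2) := by
    intro x hx
    have hx' : a + b - x ∈ Icc a b := ⟨by linarith [hx.2], by linarith [hx.1]⟩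
    have h2 := hwconc.2 hx hx' (by norm_num : (0:ℝ) ≤ 1/2) (by norm_num : (0:ℝ) ≤ 1/2)
      (by norm_num)
    have e : (1/2 : ℝ) • x + (1/2 : ℝ) • (a + b - x) = (a + b) / 2 := by
      simp only [smul_eq_mul]; ring
    rw [e] at h2
    simp only [smul_eq_mul] at h2
    rw [abs_of_nonneg (hw0 x hx)]
    have := hw0 _ hx'
    linarith
  have hInt : ∀ {φ : ℝ → ℝ}, ContinuousOn φ (Icc a b) →
      IntervalIntegrable (fun y => w y * φ y) volume a b := by
    intro φ hφ
    have := hl_integrable hwcont hM 0 a b (by linarith) (by linarith) hab' hφ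
    simpa using this
  have hPint : IntervalIntegrable (fun x => w x * f' x ^ 2) volume a b :=
    hInt (hf'c.pow 2)
  have hQint : IntervalIntegrable (fun x => w x * f x ^ 2) volume a b :=
    hInt (hfc.pow 2)
  have hRint : IntervalIntegrable (fun x => w x * f'' x ^ 2) volume a b :=
    hInt (hf''cont.pow 2)
  have hSint : IntervalIntegrable (fun x => w x * (f x * f'' x)) volume a b :=
    hInt (hfc.mul hf''cont)
  -- apply the key lemma to u = f²
  have hukey := hl_key a b hab w (fun x => f x * f x)
    (fun x => f' x * f x + f x * f' x)
    (fun x => (f'' x * f x + f' x * f' x) + (f' x * f' x + f x * f'' x))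
    hw0 hwconc
    (fun x hx => (hf' x hx).mul (hf' x hx))
    (fun x hx => ((hf'' x hx).mul (hf' x hx)).add ((hf' x hx).mul (hf'' x hx)))
    (((hf''cont.mul hfc).add (hf'c.mul hf'c)).add ((hf'c.mul hf'c).add (hfc.mul hf''cont)))
    (fun x _ => mul_self_nonneg _)
    (by simp [hfa]) (by simp [hfb]) (by simp [hfa]) (by simp [hfb])
  set P := ∫ x in a..b, w x * f' x ^ 2 with hPdef
  set Q := ∫ x in a..b, w x * f x ^ 2 with hQdef
  set R := ∫ x in a..b, w x * f'' x ^ 2 with hRdef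
  set S := ∫ x in a..b, w x * (f x * f'' x) with hSdef
  have hsplit : (∫ x in a..b,
      w x * ((f'' x * f x + f' x * f' x) + (f' x * f' x + f x * f'' x)))
      = 2 * P + 2 * S := by
    have e : (fun x => w x * ((f'' x * f x + f' x * f' x) + (f' x * f' x + f x * f'' x)))
        = fun x => 2 * (w x * f' x ^ 2) + 2 * (w x * (f x * f'' x)) :=
      funext fun x => by ring
    rw [e, intervalIntegral.integral_add (hPint.const_mul 2) (hSint.const_mul 2),
      intervalIntegral.integral_const_mul, intervalIntegral.integral_const_mul]
  rw [hsplit] at hukey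
  have hPS : P ≤ -S := by linarith
  have hP0 : 0 ≤ P :=
    intervalIntegral.integral_nonneg hab' (fun x hx => mul_nonneg (hw0 x hx) (sq_nonneg _))
  -- Cauchy–Schwarz via the discriminant
  have hq : ∀ t : ℝ, 0 ≤ Q * (t * t) + (2 * S) * t + R := by
    intro t
    have h0 : 0 ≤ ∫ x in a..b, w x * (t * f x + f'' x) ^ 2 :=
      intervalIntegral.integral_nonneg hab'
        (fun x hx => mul_nonneg (hw0 x hx) (sq_nonneg _))
    have e : (fun x => w x * (t * f x + f'' x) ^ 2)
        = fun x => (t * t) * (w x * f x ^ 2)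
          + ((2 * t) * (w x * (f x * f'' x)) + (w x * f'' x ^ 2)) :=
      funext fun x => by ring
    rw [e, intervalIntegral.integral_add (hQint.const_mul _)
        ((hSint.const_mul _).add hRint),
      intervalIntegral.integral_add (hSint.const_mul _) hRint,
      intervalIntegral.integral_const_mul, intervalIntegral.integral_const_mul] at h0
    linarith
  have hdisc := discrim_le_zero hq
  rw [discrim] at hdisc
  have hP2 : P ^ 2 ≤ S ^ 2 := by nlinarith
  nlinarith
end

section
/- Let a < b be real numbers, let n be a natural number ≥ 1 and λ a real number, and set f(x) = λ sin(nπ(x−a)/(b−a)). Let w : [a,b] → [0,∞) be a concave function that is linear (affine) on each of the subintervals J_k = [a + (k−1)(b−a)/n, a + k(b−a)/n], k = 1, …, n. Then (∫ₐᵇ w(x) f'(x)² dx)² = (∫ₐᵇ w(x) f(x)² dx) · (∫ₐᵇ w(x) f''(x)² dx). -/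
open Real MeasureTheory intervalIntegral


/-- Equality case (sufficiency): if `f x = λ sin (nπ(x-a)/(b-a))` and the
nonnegative concave weight `w` is affine on each subinterval
`J_k = [a + (k-1)(b-a)/n, a + k(b-a)/n]`, `k = 1, …, n`, then equality holds
in the Hardy–Littlewood inequality. -/
theorem equality_sufficiency_dirichlet
    (a b : ℝ) (hab : a < b) (n : ℕ) (hn : 1 ≤ n) (lam : ℝ)
    (w : ℝ → ℝ)
    (hw0 : ∀ x ∈ Set.Icc a b, 0 ≤ w x)
    (hwconc : ConcaveOn ℝ (Set.Icc a b) w)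
    (hwlin : ∀ k : ℕ, 1 ≤ k → k ≤ n → ∃ α β : ℝ,
      ∀ x ∈ Set.Icc (a + ((k : ℝ) - 1) * (b - a) / n) (a + (k : ℝ) * (b - a) / n),
        w x = α * x + β)
    (f : ℝ → ℝ)
    (hf : ∀ x, f x = lam * Real.sin (n * Real.pi * (x - a) / (b - a))) :
    (∫ x in a..b, w x * deriv f x ^ 2) ^ 2 =
      (∫ x in a..b, w x * f x ^ 2) * (∫ x in a..b, w x * deriv (deriv f) x ^ 2) := by
  have hba : (0:ℝ) < b - a := sub_pos.mpr hab
  have hba' : b - a ≠ 0 := ne_of_gt hba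
  have hn0 : (n:ℝ) ≠ 0 := by positivity
  set c : ℝ := n * Real.pi / (b - a) with hc
  have hπ := Real.pi_pos
  have hcpos : 0 < c := by positivity
  have hc0 : c ≠ 0 := ne_of_gt hcpos
  -- rewrite f
  have hfe : f = fun x => lam * Real.sin (c * (x - a)) := by
    funext x
    rw [hf x]
    congr 1
    rw [hc]; ring
  -- derivatives
  have hd1 : ∀ x, HasDerivAt f (lam * c * Real.cos (c * (x - a))) x := by
    intro x
    rw [hfe]
    have h0 : HasDerivAt (fun x : ℝ => c * (x - a)) c x := by
      simpa using ((hasDerivAt_id x).sub_const a).const_mul c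
    have h1 := (Real.hasDerivAt_sin (c * (x - a))).comp x h0
    have := h1.const_mul lam
    refine this.congr_deriv ?_
    ring
  have hderiv1 : deriv f = fun x => lam * c * Real.cos (c * (x - a)) := by
    funext x; exact (hd1 x).deriv
  have hd2 : ∀ x, HasDerivAt (deriv f) (-(lam * c ^ 2) * Real.sin (c * (x - a))) x := by
    intro x
    rw [hderiv1]
    have h0 : HasDerivAt (fun x : ℝ => c * (x - a)) c x := by
      simpa using ((hasDerivAt_id x).sub_const a).const_mul c
    have h1 := (Real.hasDerivAt_cos (c * (x - a))).comp x h0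
    have := h1.const_mul (lam * c)
    refine this.congr_deriv ?_
    ring
  have hderiv2 : deriv (deriv f) = fun x => -(lam * c ^ 2) * Real.sin (c * (x - a)) := by
    funext x; exact (hd2 x).deriv
  -- partition points
  set t : ℕ → ℝ := fun k => a + k * (b - a) / n with ht
  have ht0 : t 0 = a := by simp [ht]
  have htn : t n = b := by
    simp only [ht]
    field_simp
    ring
  have htmono : ∀ k : ℕ, t k ≤ t (k + 1) := by
    intro k
    simp only [ht]
    have : (k:ℝ) * (b - a) / n ≤ ((k:ℝ)+1) * (b - a) / n := by
      apply div_le_div_of_nonneg_right _ (by positivity)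
      nlinarith
    push_cast
    linarith
  -- affine on each subinterval
  have haff : ∀ k : ℕ, k < n → ∃ α β : ℝ,
      ∀ x ∈ Set.Icc (t k) (t (k+1)), w x = α * x + β := by
    intro k hk
    obtain ⟨α, β, hαβ⟩ := hwlin (k+1) (Nat.le_add_left 1 k) hk
    refine ⟨α, β, fun x hx => hαβ x ?_⟩
    have e1 : a + ((k:ℝ)+1-1) * (b-a) / n = t k := by simp only [ht]; push_cast; ring_nf
    have e2 : a + ((k:ℝ)+1) * (b-a) / n = t (k+1) := by simp only [ht]; push_cast; ring_nf
    push_cast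
    rw [e1, e2]
    exact hx
  -- integrability of w * g for continuous g, on subintervals and [a,b]
  have hint : ∀ g : ℝ → ℝ, Continuous g → ∀ k < n,
      IntervalIntegrable (fun x => w x * g x) volume (t k) (t (k+1)) := by
    intro g hg k hk
    obtain ⟨α, β, hαβ⟩ := haff k hk
    have hcont : IntervalIntegrable (fun x => (α * x + β) * g x) volume (t k) (t (k+1)) :=
      (Continuous.intervalIntegrable (by fun_prop) _ _)
    apply hcont.congr
    have hsub : Set.uIoc (t k) (t (k+1)) ⊆ Set.Icc (t k) (t (k+1)) := by
      rw [Set.uIoc_of_le (htmono k)]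
      exact Set.Ioc_subset_Icc_self
    intro x hx
    simp only [hαβ x (hsub hx)]
  have hintab : ∀ g : ℝ → ℝ, Continuous g →
      IntervalIntegrable (fun x => w x * g x) volume a b := by
    intro g hg
    rw [← ht0, ← htn]
    exact IntervalIntegrable.trans_iterate (fun k hk => hint g hg k hk)
  -- the key cancellation: ∫ w cos(2c(x-a)) = 0
  have hK : (∫ x in a..b, w x * Real.cos (2 * c * (x - a))) = 0 := by
    have hsum := intervalIntegral.sum_integral_adjacent_intervals
        (f := fun x => w x * Real.cos (2 * c * (x - a))) (μ := volume) (a := t)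
        (fun k (hk : k < n) => hint _ (by fun_prop) k hk)
    rw [ht0, htn] at hsum
    rw [← hsum]
    apply Finset.sum_eq_zero
    intro k hk
    rw [Finset.mem_range] at hk
    obtain ⟨α, β, hαβ⟩ := haff k hk
    have hcg : (∫ x in t k..t (k+1), w x * Real.cos (2 * c * (x - a)))
        = ∫ x in t k..t (k+1), (α * x + β) * Real.cos (2 * c * (x - a)) := by
      apply intervalIntegral.integral_congr
      intro x hx
      rw [Set.uIcc_of_le (htmono k)] at hx
      simp only [hαβ x hx]
    rw [hcg]
    -- antiderivative
    set F : ℝ → ℝ := fun x => (α * x + β) * Real.sin (2 * c * (x - a)) / (2 * c)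
        + α * Real.cos (2 * c * (x - a)) / (4 * c ^ 2) with hF
    have hFd : ∀ x ∈ Set.uIcc (t k) (t (k+1)),
        HasDerivAt F ((α * x + β) * Real.cos (2 * c * (x - a))) x := by
      intro x _
      have h0 : HasDerivAt (fun x : ℝ => 2 * c * (x - a)) (2 * c) x := by
        simpa using ((hasDerivAt_id x).sub_const a).const_mul (2 * c)
      have hs := (Real.hasDerivAt_sin (2 * c * (x - a))).comp x h0
      have hcc := (Real.hasDerivAt_cos (2 * c * (x - a))).comp x h0
      have hl : HasDerivAt (fun x : ℝ => α * x + β) α x := by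
        simpa using (hasDerivAt_id x).const_mul α |>.add_const β
      have hh := ((hl.mul hs).div_const (2 * c)).add ((hcc.const_mul α).div_const (4 * c ^ 2))
      refine hh.congr_deriv ?_
      simp only [Function.comp_apply]
      field_simp
      ring
    have := intervalIntegral.integral_eq_sub_of_hasDerivAt hFd
      (Continuous.intervalIntegrable (by fun_prop) _ _)
    rw [this]
    -- endpoint values
    have hval : ∀ j : ℕ, F (t j) = α / (4 * c ^ 2) := by
      intro j
      have harg : 2 * c * (t j - a) = (j:ℝ) * (2 * Real.pi) := by
        simp only [ht, hc]
        field_simp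
        ring
      simp only [hF, harg]
      rw [show ((j:ℝ)) * (2 * Real.pi) = ((2*j : ℕ):ℝ) * Real.pi by push_cast; ring]
      rw [Real.sin_nat_mul_pi]
      rw [show ((2*j : ℕ):ℝ) * Real.pi = ((j : ℕ):ℝ) * (2 * Real.pi) by push_cast; ring]
      rw [Real.cos_nat_mul_two_pi]
      ring
    rw [hval, hval]
    ring
  -- express the three integrals
  have hI1 : (∫ x in a..b, w x * f x ^ 2)
      = lam ^ 2 * ∫ x in a..b, w x * Real.sin (c * (x - a)) ^ 2 := by
    rw [← intervalIntegral.integral_const_mul]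
    apply intervalIntegral.integral_congr
    intro x _
    rw [hfe]
    ring
  have hI2 : (∫ x in a..b, w x * deriv f x ^ 2)
      = lam ^ 2 * c ^ 2 * ((∫ x in a..b, w x * Real.sin (c * (x - a)) ^ 2)
        + ∫ x in a..b, w x * Real.cos (2 * c * (x - a))) := by
    rw [← intervalIntegral.integral_add (hintab _ (by fun_prop)) (hintab _ (by fun_prop)),
      ← intervalIntegral.integral_const_mul]
    apply intervalIntegral.integral_congr
    intro x _
    rw [hderiv1]
    simp only
    have h2 : Real.cos (2 * (c * (x - a))) = Real.cos (c*(x-a))^2 - Real.sin (c*(x-a))^2 :=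
      Real.cos_two_mul' _
    rw [show 2 * c * (x - a) = 2 * (c * (x-a)) by ring, h2]
    ring
  have hI3 : (∫ x in a..b, w x * deriv (deriv f) x ^ 2)
      = lam ^ 2 * c ^ 4 * ∫ x in a..b, w x * Real.sin (c * (x - a)) ^ 2 := by
    rw [← intervalIntegral.integral_const_mul]
    apply intervalIntegral.integral_congr
    intro x _
    rw [hderiv2]
    ring
  rw [hI1, hI2, hI3, hK]
  ring
end

section
/- Let a < b be real numbers, let w : [a,b] → [0,∞) be a concave and (monotonically) increasing function, and let f ∈ C²[a,b] satisfy f(a) = 0 and f'(b) = 0. Then (∫ₐᵇ w(x) f'(x)² dx)² ≤ (∫ₐᵇ w(x) f(x)² dx) · (∫ₐᵇ w(x) f''(x)² dx). -/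
open intervalIntegral MeasureTheory Set Finset

private lemma abel_sum' (n : ℕ) (W P : ℕ → ℝ) :
    ∑ i ∈ range n, W i * (P (i+1) - P i)
      = W n * P n - W 0 * P 0 - ∑ i ∈ range n, (W (i+1) - W i) * P (i+1) := by
  induction n with
  | zero => simp
  | succ n ih => rw [sum_range_succ, sum_range_succ, ih]; ring

private lemma ftc_sub {a b : ℝ} {g g' : ℝ → ℝ}
    (hg : ∀ x ∈ Icc a b, HasDerivWithinAt g (g' x) (Icc a b) x)
    (hg' : ContinuousOn g' (Icc a b)) {x y : ℝ} (hx : a ≤ x) (hxy : x ≤ y) (hy : y ≤ b) :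
    ∫ t in x..y, g' t = g y - g x := by
  have hsub : Icc x y ⊆ Icc a b := Icc_subset_Icc hx hy
  apply integral_eq_sub_of_hasDeriv_right_of_le hxy
  · exact fun t ht => ((hg t (hsub ht)).continuousWithinAt).mono hsub
  · intro t ht
    apply (hg t ⟨hx.trans ht.1.le, ht.2.le.trans hy⟩).mono_of_mem_nhdsWithin
    apply mem_nhdsWithin.2 ⟨Iio b, isOpen_Iio, lt_of_lt_of_le ht.2 hy, ?_⟩
    rintro z ⟨hz1, hz2⟩
    exact ⟨(hx.trans ht.1.le).trans (le_of_lt hz2), le_of_lt hz1⟩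
  · exact (hg'.mono (by rw [uIcc_of_le hxy]; exact hsub)).intervalIntegrable

private lemma key_ineq (a b : ℝ) (hab : a < b) (w h h1 h2 : ℝ → ℝ)
    (hwconc : ConcaveOn ℝ (Set.Icc a b) w)
    (hwmono : MonotoneOn w (Set.Icc a b))
    (hh1 : ∀ x ∈ Set.Icc a b, HasDerivWithinAt h (h1 x) (Set.Icc a b) x)
    (hh2 : ∀ x ∈ Set.Icc a b, HasDerivWithinAt h1 (h2 x) (Set.Icc a b) x)
    (h2cont : ContinuousOn h2 (Set.Icc a b))
    (hpos : ∀ x ∈ Set.Icc a b, 0 ≤ h x)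
    (hha : h a = 0) (h1a : h1 a = 0) (h1b : h1 b = 0) :
    ∫ x in a..b, w x * h2 x ≤ 0 := by
  obtain ⟨M, hM⟩ := (isCompact_Icc (a := a) (b := b)).exists_bound_of_continuousOn h2cont
  have haI : a ∈ Icc a b := ⟨le_refl a, hab.le⟩
  have hbI : b ∈ Icc a b := ⟨hab.le, le_refl b⟩
  have hM0 : 0 ≤ M := le_trans (norm_nonneg _) (hM a haI)
  -- Lipschitz bound for h1
  have hLip : ∀ x ∈ Icc a b, ∀ y ∈ Icc a b, ‖h1 y - h1 x‖ ≤ M * ‖y - x‖ := fun x hx y hy =>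
    (convex_Icc a b).norm_image_sub_le_of_norm_hasDerivWithin_le hh2 hM hx hy
  -- Taylor bound
  have hTay : ∀ u v : ℝ, u ∈ Icc a b → v ∈ Icc a b → u ≤ v →
      |h u - h v - (u - v) * h1 v| ≤ M * (v - u) ^ 2 := by
    intro u v hu hv huv
    have hsub : Icc u v ⊆ Icc a b := Icc_subset_Icc hu.1 hv.2
    have hder : ∀ t ∈ Icc u v, HasDerivWithinAt (fun t => h t - h1 v * t)
        (h1 t - h1 v) (Icc u v) t := by
      intro t ht
      have := ((hh1 t (hsub ht)).mono hsub).sub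
        (((hasDerivWithinAt_id t (Icc u v)).const_mul (h1 v)))
      simp only [mul_one] at this; exact this
    have hbd : ∀ t ∈ Icc u v, ‖h1 t - h1 v‖ ≤ M * (v - u) := by
      intro t ht
      calc ‖h1 t - h1 v‖ ≤ M * ‖t - v‖ := hLip v hv t (hsub ht)
        _ ≤ M * (v - u) := by
            apply mul_le_mul_of_nonneg_left _ hM0
            rw [Real.norm_eq_abs, abs_sub_comm, abs_of_nonneg (by linarith [ht.2])]
            linarith [ht.1]
    have := (convex_Icc u v).norm_image_sub_le_of_norm_hasDerivWithin_le hder hbd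
      (right_mem_Icc.2 huv) (left_mem_Icc.2 huv)
    rw [Real.norm_eq_abs, Real.norm_eq_abs] at this
    calc |h u - h v - (u - v) * h1 v|
        = |(h u - h1 v * u) - (h v - h1 v * v)| := by ring_nf
      _ ≤ M * (v - u) * |u - v| := this
      _ = M * (v - u) ^ 2 := by
          rw [abs_sub_comm, abs_of_nonneg (by linarith)]; ring
  set K := 2 * M * (w b - w a) * (b - a) with hK
  have hmain : ∀ n : ℕ, 1 ≤ n → (∫ x in a..b, w x * h2 x) ≤ K / n := by
    intro n hn
    have hn0 : (0:ℝ) < n := by exact_mod_cast hn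
    set δ := (b - a) / n with hδdef
    have hδ : 0 < δ := div_pos (by linarith) hn0
    set X : ℕ → ℝ := fun i => a + (min i n : ℕ) * δ with hX
    have hXmem : ∀ i, X i ∈ Icc a b := by
      intro i
      have h1' : (0:ℝ) ≤ (min i n : ℕ) * δ := by positivity
      have h2' : ((min i n : ℕ) : ℝ) ≤ n := by exact_mod_cast min_le_right i n
      have h3' : ((min i n : ℕ) : ℝ) * δ ≤ n * δ :=
        mul_le_mul_of_nonneg_right h2' hδ.le
      have h4' : (n : ℝ) * δ = b - a := by
        rw [hδdef]; field_simp
      constructor <;> simp only [hX] <;> nlinarith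
    have hX0 : X 0 = a := by simp [hX]
    have hXn : X n = b := by
      have h4' : (n : ℝ) * δ = b - a := by rw [hδdef]; field_simp
      simp [hX, h4']
    have hXmono : ∀ i, X i ≤ X (i + 1) := by
      intro i
      have : ((min i n : ℕ) : ℝ) ≤ ((min (i+1) n : ℕ) : ℝ) := by
        exact_mod_cast min_le_min (Nat.le_succ i) (le_refl n)
      simp only [hX]
      nlinarith
    have hstep : ∀ i, i < n → X (i + 1) = X i + δ := by
      intro i hi
      simp only [hX, min_eq_left hi.le, min_eq_left (Nat.succ_le_of_lt hi)]
      push_cast; ring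
    set W : ℕ → ℝ := fun i => w (X i) with hWdef
    set P : ℕ → ℝ := fun i => h1 (X i) with hPdef
    set H : ℕ → ℝ := fun i => h (X i) with hHdef
    set c : ℕ → ℝ := fun i => W (i + 1) - W i with hcdef
    have hc0 : ∀ i, 0 ≤ c i := fun i =>
      sub_nonneg.2 (hwmono (hXmem i) (hXmem (i+1)) (hXmono i))
    have hcn : c n = 0 := by
      have : X (n + 1) = X n := by
        have emin : min (n+1) n = n := by omega
        have emin2 : min n n = n := by omega
        simp only [hX]; rw [emin, emin2]
      simp [hcdef, hWdef, this]
    have hcanti : ∀ i, c (i + 1) ≤ c i := by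
      intro i
      by_cases hcase : i + 2 ≤ n
      · have e1 : X (i+1) = X i + δ := hstep i (by omega)
        have e2 : X (i+2) = X (i+1) + δ := hstep (i+1) (by omega)
        have hmid : X (i+1) = (1/2 : ℝ) * X i + (1/2 : ℝ) * X (i+2) := by
          rw [e2, e1]; ring
        have hconc := hwconc.2 (hXmem i) (hXmem (i+2)) (by norm_num : (0:ℝ) ≤ 1/2)
          (by norm_num : (0:ℝ) ≤ 1/2) (by norm_num)
        rw [smul_eq_mul, smul_eq_mul, smul_eq_mul, smul_eq_mul, ← hmid] at hconc
        simp only [hcdef, hWdef]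
        linarith
      · have h1' : n ≤ i + 1 := by omega
        have emin : min (i+2) n = min (i+1) n := by omega
        have e : X (i + 2) = X (i + 1) := by simp only [hX]; rw [emin]
        have : c (i + 1) = 0 := by simp [hcdef, hWdef, e]
        rw [this]; exact hc0 i
    have hH0 : H 0 = 0 := by simp [hHdef, hX0, hha]
    have hHpos : ∀ i, 0 ≤ H i := fun i => hpos _ (hXmem i)
    have hP0 : P 0 = 0 := by simp [hPdef, hX0, h1a]
    have hPn : P n = 0 := by simp [hPdef, hXn, h1b]
    have hftc : ∀ i, ∫ t in X i..X (i+1), h2 t = P (i+1) - P i := fun i =>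
      ftc_sub hh2 h2cont (hXmem i).1 (hXmono i) (hXmem (i+1)).2
    have hWint : ∀ i, IntervalIntegrable w volume (X i) (X (i+1)) := by
      intro i
      apply MonotoneOn.intervalIntegrable
      apply hwmono.mono
      rw [uIcc_of_le (hXmono i)]
      exact Icc_subset_Icc (hXmem i).1 (hXmem (i+1)).2
    have hint : ∀ i, IntervalIntegrable (fun t => w t * h2 t) volume (X i) (X (i+1)) := by
      intro i
      apply (hWint i).mul_continuousOn
      apply h2cont.mono
      rw [uIcc_of_le (hXmono i)]
      exact Icc_subset_Icc (hXmem i).1 (hXmem (i+1)).2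
    have hsplit : ∫ x in a..b, w x * h2 x
        = ∑ i ∈ range n, ∫ x in X i..X (i+1), w x * h2 x := by
      rw [sum_integral_adjacent_intervals (fun k _ => hint k), hX0, hXn]
    -- per-interval bound
    have hper : ∀ i ∈ range n,
        (∫ x in X i..X (i+1), w x * h2 x) ≤ W i * (P (i+1) - P i) + c i * M * δ := by
      intro i hi
      have hiI : Icc (X i) (X (i+1)) ⊆ Icc a b :=
        Icc_subset_Icc (hXmem i).1 (hXmem (i+1)).2
      have hsub : ∫ x in X i..X (i+1), (w x - W i) * h2 x
          = (∫ x in X i..X (i+1), w x * h2 x) - W i * (P (i+1) - P i) := by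
        have e1 : ∫ x in X i..X (i+1), W i * h2 x = W i * (P (i+1) - P i) := by
          rw [intervalIntegral.integral_const_mul, hftc i]
        rw [← e1, ← intervalIntegral.integral_sub (hint i)]
        · congr 1; ext x; ring
        · apply IntervalIntegrable.const_mul
          apply ContinuousOn.intervalIntegrable
          apply h2cont.mono
          rwa [uIcc_of_le (hXmono i)]
      have hbound : ∫ x in X i..X (i+1), (w x - W i) * h2 x ≤ c i * M * δ := by
        have hmono' : ∀ x ∈ Icc (X i) (X (i+1)), (w x - W i) * h2 x ≤ c i * M := by
          intro x hx
          have hx' : x ∈ Icc a b := hiI hx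
          have hw1 : 0 ≤ w x - W i := sub_nonneg.2 (hwmono (hXmem i) hx' hx.1)
          have hw2 : w x - W i ≤ c i := by
            have := hwmono hx' (hXmem (i+1)) hx.2
            simp only [hcdef, hWdef]; linarith
          have hh2b : h2 x ≤ M := le_trans (le_abs_self _) (hM x hx')
          calc (w x - W i) * h2 x ≤ (w x - W i) * M :=
                mul_le_mul_of_nonneg_left hh2b hw1
            _ ≤ c i * M := mul_le_mul_of_nonneg_right hw2 hM0
        have hconst : ∫ _x in X i..X (i+1), c i * M = c i * M * δ := by
          rw [intervalIntegral.integral_const, hstep i (mem_range.1 hi), smul_eq_mul]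
          ring
        rw [← hconst]
        apply intervalIntegral.integral_mono_on (hXmono i) _ intervalIntegrable_const hmono'
        · apply IntervalIntegrable.mul_continuousOn
          · exact (hWint i).sub intervalIntegrable_const
          · apply h2cont.mono; rwa [uIcc_of_le (hXmono i)]
      linarith [hsub, hbound]
    have hsum1 : ∫ x in a..b, w x * h2 x
        ≤ ∑ i ∈ range n, (W i * (P (i+1) - P i) + c i * M * δ) := by
      rw [hsplit]; exact Finset.sum_le_sum hper
    have habel : ∑ i ∈ range n, W i * (P (i+1) - P i)
        = - ∑ i ∈ range n, c i * P (i+1) := by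
      rw [abel_sum' n W P, hPn, hP0]; simp [hcdef]
    have hcsum : ∑ i ∈ range n, c i = w b - w a := by
      have := Finset.sum_range_sub W n
      simp only [hcdef] at this ⊢
      rw [this, hWdef]; simp [hX0, hXn]
    -- lower bound for ∑ c i * P (i+1)
    have hPlow : ∀ i ∈ range n, (H (i+1) - H i) / δ - M * δ ≤ P (i+1) := by
      intro i hi
      have e1 : X (i+1) = X i + δ := hstep i (mem_range.1 hi)
      have := hTay (X i) (X (i+1)) (hXmem i) (hXmem (i+1)) (hXmono i)
      rw [e1] at this
      have h2' : |H i - H (i+1) + δ * P (i+1)| ≤ M * δ ^ 2 := by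
        have e2 : H i - H (i+1) + δ * P (i+1)
            = h (X i) - h (X i + δ) - (X i - (X i + δ)) * h1 (X i + δ) := by
          simp only [hHdef, hPdef, e1]; ring
        rw [e2]
        simpa using this
      have h3' := neg_le_of_abs_le h2'
      rw [div_sub' hδ.ne', div_le_iff₀ hδ]
      nlinarith
    have hsum2 : ∑ i ∈ range n, c i * ((H (i+1) - H i) / δ - M * δ)
        ≤ ∑ i ∈ range n, c i * P (i+1) := by
      apply Finset.sum_le_sum
      intro i hi
      exact mul_le_mul_of_nonneg_left (hPlow i hi) (hc0 i)
    have hU : 0 ≤ ∑ i ∈ range n, c i * (H (i+1) - H i) := by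
      rw [abel_sum' n c H, hcn, hH0]
      simp only [zero_mul, mul_zero, zero_sub, sub_zero]
      rw [neg_nonneg]
      apply Finset.sum_nonpos
      intro i _
      apply mul_nonpos_of_nonpos_of_nonneg
      · linarith [hcanti i]
      · exact hHpos (i+1)
    have hexp : ∑ i ∈ range n, c i * ((H (i+1) - H i) / δ - M * δ)
        = (∑ i ∈ range n, c i * (H (i+1) - H i)) / δ - M * δ * (w b - w a) := by
      rw [← hcsum, Finset.sum_div, Finset.mul_sum, ← Finset.sum_sub_distrib]
      apply Finset.sum_congr rfl
      intro i _
      field_simp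
    have hfinal : ∫ x in a..b, w x * h2 x ≤ 2 * M * (w b - w a) * δ := by
      have e1 : ∑ i ∈ range n, (W i * (P (i+1) - P i) + c i * M * δ)
          = - ∑ i ∈ range n, c i * P (i+1) + M * δ * (w b - w a) := by
        rw [Finset.sum_add_distrib, habel, ← Finset.sum_mul, ← Finset.sum_mul, hcsum]
        ring
      have e2 : (∑ i ∈ range n, c i * (H (i+1) - H i)) / δ - M * δ * (w b - w a)
          ≤ ∑ i ∈ range n, c i * P (i+1) := hexp ▸ hsum2
      have e3 : 0 ≤ (∑ i ∈ range n, c i * (H (i+1) - H i)) / δ :=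
        div_nonneg hU hδ.le
      calc ∫ x in a..b, w x * h2 x
          ≤ - ∑ i ∈ range n, c i * P (i+1) + M * δ * (w b - w a) := by
            rw [hsplit]; calc ∑ i ∈ range n, ∫ x in X i..X (i+1), w x * h2 x
                                ≤ ∑ i ∈ range n, (W i * (P (i+1) - P i) + c i * M * δ) :=
                                  Finset.sum_le_sum hper
              _ = _ := e1
        _ ≤ 2 * M * (w b - w a) * δ := by linarith
    calc ∫ x in a..b, w x * h2 x ≤ 2 * M * (w b - w a) * δ := hfinal
      _ = K / n := by rw [hK, hδdef]; ring
  -- conclude by letting n → ∞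
  have htend : Filter.Tendsto (fun n : ℕ => K / n) Filter.atTop (nhds 0) :=
    tendsto_const_div_atTop_nhds_zero_nat K
  apply ge_of_tendsto htend
  filter_upwards [Filter.eventually_ge_atTop 1] with n hn
  exact hmain n hn

/-- Corollary: the Hardy–Littlewood inequality for a concave and increasing
weight `w : [a,b] → [0,∞)` and `f ∈ C²[a,b]` with `f a = 0`, `f' b = 0`. -/
theorem hardy_littlewood_concave_increasing_weight
    (a b : ℝ) (hab : a < b) (w f f' f'' : ℝ → ℝ)
    (hw0 : ∀ x ∈ Set.Icc a b, 0 ≤ w x)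
    (hwconc : ConcaveOn ℝ (Set.Icc a b) w)
    (hwmono : MonotoneOn w (Set.Icc a b))
    (hf' : ∀ x ∈ Set.Icc a b, HasDerivWithinAt f (f' x) (Set.Icc a b) x)
    (hf'' : ∀ x ∈ Set.Icc a b, HasDerivWithinAt f' (f'' x) (Set.Icc a b) x)
    (hf''cont : ContinuousOn f'' (Set.Icc a b))
    (hfa : f a = 0) (hf'b : f' b = 0) :
    (∫ x in a..b, w x * f' x ^ 2) ^ 2 ≤
      (∫ x in a..b, w x * f x ^ 2) * (∫ x in a..b, w x * f'' x ^ 2) := by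
  have fc0 : ContinuousOn f (Set.Icc a b) := fun x hx => (hf' x hx).continuousWithinAt
  have f'c0 : ContinuousOn f' (Set.Icc a b) := fun x hx => (hf'' x hx).continuousWithinAt
  have key_ineq : ∫ x in a..b,
      w x * ((f'' x * f x + f' x * f' x) + (f' x * f' x + f x * f'' x)) ≤ 0 :=
    key_ineq a b hab w (fun x => f x * f x) (fun x => f' x * f x + f x * f' x) _
      hwconc hwmono
      (fun x hx => (hf' x hx).mul (hf' x hx))
      (fun x hx => ((hf'' x hx).mul (hf' x hx)).add ((hf' x hx).mul (hf'' x hx)))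
      (((hf''cont.mul fc0).add (f'c0.mul f'c0)).add ((f'c0.mul f'c0).add (fc0.mul hf''cont)))
      (fun x _ => mul_self_nonneg _)
      (by simp [hfa]) (by simp [hfa]) (by simp [hf'b])
  have fc : ContinuousOn f (Set.Icc a b) := fun x hx => (hf' x hx).continuousWithinAt
  have f'c : ContinuousOn f' (Set.Icc a b) := fun x hx => (hf'' x hx).continuousWithinAt
  have hicc : uIcc a b = Set.Icc a b := uIcc_of_le hab.le
  have wInt : IntervalIntegrable w volume a b :=
    MonotoneOn.intervalIntegrable (by rwa [hicc])
  have intI : IntervalIntegrable (fun x => w x * f' x ^ 2) volume a b :=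
    wInt.mul_continuousOn (by rw [hicc]; exact f'c.pow 2)
  have intA : IntervalIntegrable (fun x => w x * f x ^ 2) volume a b :=
    wInt.mul_continuousOn (by rw [hicc]; exact fc.pow 2)
  have intB : IntervalIntegrable (fun x => w x * f'' x ^ 2) volume a b :=
    wInt.mul_continuousOn (by rw [hicc]; exact hf''cont.pow 2)
  have intC : IntervalIntegrable (fun x => w x * (f x * f'' x)) volume a b :=
    wInt.mul_continuousOn (by rw [hicc]; exact fc.mul hf''cont)
  set I := ∫ x in a..b, w x * f' x ^ 2 with hIdef
  set A := ∫ x in a..b, w x * f x ^ 2 with hAdef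
  set B := ∫ x in a..b, w x * f'' x ^ 2 with hBdef
  set C := ∫ x in a..b, w x * (f x * f'' x) with hCdef
  have hkey2 : (∫ x in a..b,
      w x * ((f'' x * f x + f' x * f' x) + (f' x * f' x + f x * f'' x)))
      = 2 * I + 2 * C := by
    calc (∫ x in a..b, w x * ((f'' x * f x + f' x * f' x) + (f' x * f' x + f x * f'' x)))
        = ∫ x in a..b, (2 * (w x * f' x ^ 2) + 2 * (w x * (f x * f'' x))) :=
          intervalIntegral.integral_congr (fun x _ => by ring)
      _ = 2 * I + 2 * C := by
          rw [intervalIntegral.integral_add (intI.const_mul 2) (intC.const_mul 2),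
            intervalIntegral.integral_const_mul, intervalIntegral.integral_const_mul]
  have hIC : I + C ≤ 0 := by rw [hkey2] at key_ineq; linarith
  have hI0 : 0 ≤ I := intervalIntegral.integral_nonneg hab.le
    (fun x hx => mul_nonneg (hw0 x hx) (sq_nonneg _))
  have hquad : ∀ t : ℝ, 0 ≤ A * (t * t) + (2 * C) * t + B := by
    intro t
    have h0 : 0 ≤ ∫ x in a..b, w x * (t * f x + f'' x) ^ 2 :=
      intervalIntegral.integral_nonneg hab.le
        (fun x hx => mul_nonneg (hw0 x hx) (sq_nonneg _))
    have he : (∫ x in a..b, w x * (t * f x + f'' x) ^ 2)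
        = A * (t * t) + ((2 * t) * C + B) := by
      calc (∫ x in a..b, w x * (t * f x + f'' x) ^ 2)
          = ∫ x in a..b, ((t * t) * (w x * f x ^ 2)
              + ((2 * t) * (w x * (f x * f'' x)) + w x * f'' x ^ 2)) :=
            intervalIntegral.integral_congr (fun x _ => by ring)
        _ = _ := by
            rw [intervalIntegral.integral_add (intA.const_mul _)
                ((intC.const_mul _).add intB),
              intervalIntegral.integral_add (intC.const_mul _) intB,
              intervalIntegral.integral_const_mul, intervalIntegral.integral_const_mul,
              ← hAdef, ← hCdef, ← hBdef]
            ring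
    rw [he] at h0; linarith
  have hdisc := discrim_le_zero hquad
  rw [discrim] at hdisc
  have hCAB : C ^ 2 ≤ A * B := by nlinarith [hdisc]
  have hI2 : I ^ 2 ≤ C ^ 2 := by nlinarith
  linarith
end

section
/- Let a < b be real numbers, let n be a natural number ≥ 1 and λ a real number, and set f(x) = λ sin((2n−1)π(x−a)/(2(b−a))). Let w : [a,b] → [0,∞) be a concave increasing function that is linear (affine) on each of the subintervals I_k = [a + 2(k−1)(b−a)/(2n−1), a + 2k(b−a)/(2n−1)], k = 1, …, n−1, and constant on the subinterval I = [a + 2(n−1)(b−a)/(2n−1), b]. Then (∫ₐᵇ w(x) f'(x)² dx)² = (∫ₐᵇ w(x) f(x)² dx) · (∫ₐᵇ w(x) f''(x)² dx). -/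
open intervalIntegral Real

lemma piece_integral (a c α β p q : ℝ) (hc : c ≠ 0)
    (hp : Real.sin (2 * c * (p - a)) = 0) (hq : Real.sin (2 * c * (q - a)) = 0)
    (hpq : α * Real.cos (2 * c * (p - a)) = α * Real.cos (2 * c * (q - a))) :
    (∫ x in p..q, (α * x + β) * Real.cos (2 * c * (x - a))) = 0 := by
  set F : ℝ → ℝ := fun x =>
    (α * x + β) * Real.sin (2 * c * (x - a)) / (2 * c)
      + α * Real.cos (2 * c * (x - a)) / (4 * c ^ 2) with hFdef
  have hF : ∀ x, HasDerivAt F ((α * x + β) * Real.cos (2 * c * (x - a))) x := by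
    intro x
    have hu : HasDerivAt (fun x : ℝ => 2 * c * (x - a)) (2 * c) x := by
      simpa using ((hasDerivAt_id x).sub_const a).const_mul (2 * c)
    have hsin : HasDerivAt (fun x : ℝ => Real.sin (2 * c * (x - a)))
        (Real.cos (2 * c * (x - a)) * (2 * c)) x :=
      (Real.hasDerivAt_sin _).comp x hu
    have hcos : HasDerivAt (fun x : ℝ => Real.cos (2 * c * (x - a)))
        (-Real.sin (2 * c * (x - a)) * (2 * c)) x :=
      (Real.hasDerivAt_cos _).comp x hu
    have hlin : HasDerivAt (fun x : ℝ => α * x + β) α x := by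
      simpa using ((hasDerivAt_id x).const_mul α).add_const β
    have h1 := ((hlin.mul hsin).div_const (2 * c)).add ((hcos.const_mul α).div_const (4 * c ^ 2))
    refine h1.congr_deriv ?_
    field_simp
    ring
  have hcont : Continuous fun x : ℝ => (α * x + β) * Real.cos (2 * c * (x - a)) := by
    continuity
  rw [intervalIntegral.integral_eq_sub_of_hasDerivAt (fun x _ => hF x)
    (hcont.intervalIntegrable p q)]
  simp only [hFdef, hp, hq]
  field_simp
  linarith

lemma weight_cos_integral_zero (a b : ℝ) (hab : a < b) (n : ℕ) (hn : 1 ≤ n)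
    (w : ℝ → ℝ)
    (hwint : IntervalIntegrable w MeasureTheory.volume a b)
    (hwlin : ∀ k : ℕ, 1 ≤ k → k ≤ n - 1 → ∃ α β : ℝ,
      ∀ x ∈ Set.Icc (a + 2 * ((k : ℝ) - 1) * (b - a) / (2 * (n : ℝ) - 1))
                    (a + 2 * (k : ℝ) * (b - a) / (2 * (n : ℝ) - 1)),
        w x = α * x + β)
    (hwconst : ∃ c : ℝ,
      ∀ x ∈ Set.Icc (a + 2 * ((n : ℝ) - 1) * (b - a) / (2 * (n : ℝ) - 1)) b,
        w x = c) :
    (∫ x in a..b,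
      w x * Real.cos (2 * ((2 * (n : ℝ) - 1) * Real.pi / (2 * (b - a))) * (x - a))) = 0 := by
  set N : ℝ := 2 * (n : ℝ) - 1 with hN
  have hn1 : (1 : ℝ) ≤ (n : ℝ) := by exact_mod_cast hn
  have hNpos : 0 < N := by simp only [hN]; linarith
  have hba : 0 < b - a := by linarith
  set c : ℝ := N * Real.pi / (2 * (b - a)) with hc
  have hcne : c ≠ 0 := by
    have := Real.pi_pos
    positivity
  set pts : ℕ → ℝ := fun k => if k < n then a + 2 * (k : ℝ) * (b - a) / N else b with hpts
  have hpts0 : pts 0 = a := by simp [hpts, hn, Nat.lt_of_lt_of_le Nat.zero_lt_one hn]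
  have hptsn : pts n = b := by simp [hpts]
  have hptsval : ∀ k, k < n → pts k = a + 2 * (k : ℝ) * (b - a) / N := by
    intro k hk; simp [hpts, hk]
  have hmem : ∀ k, k ≤ n → a ≤ pts k ∧ pts k ≤ b := by
    intro k hk
    by_cases h : k < n
    · rw [hptsval k h]
      constructor
      · have : 0 ≤ 2 * (k : ℝ) * (b - a) / N := by positivity
        linarith
      · have hk' : (k : ℝ) ≤ (n : ℝ) - 1 := by
          have : (k : ℝ) + 1 ≤ (n : ℝ) := by exact_mod_cast h
          linarith
        have h2 : 2 * (k : ℝ) * (b - a) / N ≤ b - a := by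
          rw [div_le_iff₀ hNpos]
          nlinarith
        linarith
    · have : k = n := le_antisymm hk (not_lt.mp h)
      simp [this, hptsn, le_of_lt hab]
  have hmono : ∀ k, k < n → pts k ≤ pts (k + 1) := by
    intro k hk
    rcases Nat.lt_or_ge (k + 1) n with h | h
    · rw [hptsval k hk, hptsval (k + 1) h]
      push_cast
      have h2 : 2 * (k : ℝ) * (b - a) / N ≤ 2 * ((k : ℝ) + 1) * (b - a) / N := by
        rw [div_le_div_iff₀ hNpos hNpos]
        nlinarith
      linarith
    · have h' : k + 1 = n := by omega
      rw [h', hptsn]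
      exact (hmem k (le_of_lt hk)).2
  -- trig values at nodes
  have htrig : ∀ k, k < n → Real.sin (2 * c * (pts k - a)) = 0
      ∧ Real.cos (2 * c * (pts k - a)) = 1 := by
    intro k hk
    have harg : 2 * c * (pts k - a) = (k : ℝ) * (2 * Real.pi) := by
      rw [hptsval k hk, hc]
      field_simp
      ring
    constructor
    · rw [harg]
      have : (k : ℝ) * (2 * Real.pi) = ((2 * k : ℕ) : ℝ) * Real.pi := by push_cast; ring
      rw [this, Real.sin_nat_mul_pi]
    · rw [harg, Real.cos_nat_mul_two_pi]
  have htrigb : Real.sin (2 * c * (b - a)) = 0 := by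
    have harg : 2 * c * (b - a) = ((2 * n - 1 : ℕ) : ℝ) * Real.pi := by
      rw [hc]
      have : ((2 * n - 1 : ℕ) : ℝ) = N := by
        rw [hN]; push_cast [Nat.cast_sub (by omega : 1 ≤ 2 * n)]; ring
      rw [this]
      field_simp
    rw [harg, Real.sin_nat_mul_pi]
  set g : ℝ → ℝ := fun x => w x * Real.cos (2 * c * (x - a)) with hg
  have hgint : IntervalIntegrable g MeasureTheory.volume a b :=
    hwint.mul_continuousOn ((Real.continuous_cos.comp (continuous_const.mul (continuous_sub_right a))).continuousOn)
  have hint : ∀ k < n, IntervalIntegrable g MeasureTheory.volume (pts k) (pts (k + 1)) := by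
    intro k hk
    apply hgint.mono_set
    rw [Set.uIcc_of_le (hmono k hk), Set.uIcc_of_le (le_of_lt hab)]
    exact Set.Icc_subset_Icc (hmem k (le_of_lt hk)).1 (hmem (k + 1) hk).2
  have hsplit := intervalIntegral.sum_integral_adjacent_intervals hint
  rw [hpts0, hptsn] at hsplit
  rw [← hsplit]
  apply Finset.sum_eq_zero
  intro k hk
  have hk' : k < n := Finset.mem_range.mp hk
  have hsinall : ∀ k, k ≤ n → Real.sin (2 * c * (pts k - a)) = 0 := by
    intro k hk
    rcases lt_or_eq_of_le hk with h | h
    · exact (htrig k h).1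
    · rw [h, hptsn]; exact htrigb
  -- obtain affine description on [pts k, pts (k+1)] together with endpoint cos condition
  obtain ⟨α, β, haff, hcoseq⟩ : ∃ α β : ℝ,
      (∀ x ∈ Set.Icc (pts k) (pts (k + 1)), w x = α * x + β) ∧
      α * Real.cos (2 * c * (pts k - a)) = α * Real.cos (2 * c * (pts (k+1) - a)) := by
    rcases Nat.lt_or_ge (k + 1) n with h | h
    · obtain ⟨α, β, hab'⟩ := hwlin (k + 1) (by omega) (by omega)
      refine ⟨α, β, fun x hx => hab' x ?_, by rw [(htrig k hk').2, (htrig (k+1) h).2]⟩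
      rw [hptsval k hk', hptsval (k + 1) h] at hx
      convert hx using 3 <;> push_cast <;> ring
    · have h : k + 1 = n := by omega
      obtain ⟨c0, hc0⟩ := hwconst
      refine ⟨0, c0, fun x hx => ?_, by ring⟩
      rw [hptsval k hk', h, hptsn] at hx
      have hx' : x ∈ Set.Icc (a + 2 * ((n : ℝ) - 1) * (b - a) / N) b := by
        convert hx using 3
        have hkr : (k : ℝ) = (n : ℝ) - 1 := by
          have : (k : ℝ) + 1 = (n : ℝ) := by exact_mod_cast congrArg (Nat.cast : ℕ → ℝ) h
          linarith
        rw [hkr]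
      rw [hc0 x hx']; ring
  have hcongr : (∫ x in (pts k)..(pts (k+1)), g x)
      = ∫ x in (pts k)..(pts (k+1)), (α * x + β) * Real.cos (2 * c * (x - a)) := by
    apply intervalIntegral.integral_congr
    intro x hx
    rw [Set.uIcc_of_le (hmono k hk')] at hx
    simp only [hg]
    rw [haff x hx]
  rw [hcongr]
  exact piece_integral a c α β _ _ hcne (hsinall k (le_of_lt hk')) (hsinall (k+1) hk') hcoseq

/-- Equality case of the corollary (sufficiency): if
`f x = λ sin ((2n-1)π(x-a)/(2(b-a)))` and the nonnegative concave increasing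
weight `w` is affine on each subinterval
`I_k = [a + 2(k-1)(b-a)/(2n-1), a + 2k(b-a)/(2n-1)]`, `k = 1, …, n-1`, and
constant on `I = [a + 2(n-1)(b-a)/(2n-1), b]`, then equality holds. -/
theorem equality_sufficiency_mixed
    (a b : ℝ) (hab : a < b) (n : ℕ) (hn : 1 ≤ n) (lam : ℝ)
    (w : ℝ → ℝ)
    (hw0 : ∀ x ∈ Set.Icc a b, 0 ≤ w x)
    (hwconc : ConcaveOn ℝ (Set.Icc a b) w)
    (hwmono : MonotoneOn w (Set.Icc a b))
    (hwlin : ∀ k : ℕ, 1 ≤ k → k ≤ n - 1 → ∃ α β : ℝ,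
      ∀ x ∈ Set.Icc (a + 2 * ((k : ℝ) - 1) * (b - a) / (2 * (n : ℝ) - 1))
                    (a + 2 * (k : ℝ) * (b - a) / (2 * (n : ℝ) - 1)),
        w x = α * x + β)
    (hwconst : ∃ c : ℝ,
      ∀ x ∈ Set.Icc (a + 2 * ((n : ℝ) - 1) * (b - a) / (2 * (n : ℝ) - 1)) b,
        w x = c)
    (f : ℝ → ℝ)
    (hf : ∀ x, f x = lam * Real.sin ((2 * (n : ℝ) - 1) * Real.pi * (x - a) / (2 * (b - a)))) :
    (∫ x in a..b, w x * deriv f x ^ 2) ^ 2 =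
      (∫ x in a..b, w x * f x ^ 2) * (∫ x in a..b, w x * deriv (deriv f) x ^ 2) := by
  have hba : 0 < b - a := by linarith
  have hn1 : (1 : ℝ) ≤ (n : ℝ) := by exact_mod_cast hn
  set c : ℝ := (2 * (n : ℝ) - 1) * Real.pi / (2 * (b - a)) with hc
  have hfe : f = fun x => lam * Real.sin (c * (x - a)) := by
    funext x
    rw [hf x]
    congr 1
    rw [hc]
    field_simp
  have hu : ∀ x : ℝ, HasDerivAt (fun x : ℝ => c * (x - a)) c x := fun x => by
    simpa using ((hasDerivAt_id x).sub_const a).const_mul c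
  have hd1 : ∀ x, HasDerivAt f (lam * c * Real.cos (c * (x - a))) x := by
    intro x
    rw [hfe]
    have := ((Real.hasDerivAt_sin (c * (x - a))).comp x (hu x)).const_mul lam
    refine this.congr_deriv ?_
    ring
  have hderiv1 : deriv f = fun x => lam * c * Real.cos (c * (x - a)) :=
    funext fun x => (hd1 x).deriv
  have hd2 : ∀ x, HasDerivAt (deriv f) (-(lam * c ^ 2) * Real.sin (c * (x - a))) x := by
    intro x
    rw [hderiv1]
    have := ((Real.hasDerivAt_cos (c * (x - a))).comp x (hu x)).const_mul (lam * c)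
    refine this.congr_deriv ?_
    ring
  have hderiv2 : deriv (deriv f) = fun x => -(lam * c ^ 2) * Real.sin (c * (x - a)) :=
    funext fun x => (hd2 x).deriv
  rw [hderiv2, hderiv1, hfe]
  have hwint : IntervalIntegrable w MeasureTheory.volume a b :=
    (Set.uIcc_of_le hab.le ▸ hwmono).intervalIntegrable
  have hcontc : Continuous fun x : ℝ => Real.cos (c * (x - a)) :=
    Real.continuous_cos.comp (continuous_const.mul (continuous_sub_right a))
  have hconts : Continuous fun x : ℝ => Real.sin (c * (x - a)) :=
    Real.continuous_sin.comp (continuous_const.mul (continuous_sub_right a))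
  have hint1 : IntervalIntegrable (fun x => w x * Real.cos (c * (x - a)) ^ 2)
      MeasureTheory.volume a b :=
    hwint.mul_continuousOn ((hcontc.pow 2).continuousOn)
  have hint2 : IntervalIntegrable (fun x => w x * Real.sin (c * (x - a)) ^ 2)
      MeasureTheory.volume a b :=
    hwint.mul_continuousOn ((hconts.pow 2).continuousOn)
  set A : ℝ := ∫ x in a..b, w x * Real.cos (c * (x - a)) ^ 2 with hA
  set B : ℝ := ∫ x in a..b, w x * Real.sin (c * (x - a)) ^ 2 with hB
  have E1 : (∫ x in a..b, w x * (lam * c * Real.cos (c * (x - a))) ^ 2)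
      = lam ^ 2 * c ^ 2 * A := by
    rw [hA, ← intervalIntegral.integral_const_mul]
    apply intervalIntegral.integral_congr
    intro x _
    ring
  have E2 : (∫ x in a..b, w x * (lam * Real.sin (c * (x - a))) ^ 2)
      = lam ^ 2 * B := by
    rw [hB, ← intervalIntegral.integral_const_mul]
    apply intervalIntegral.integral_congr
    intro x _
    ring
  have E3 : (∫ x in a..b, w x * (-(lam * c ^ 2) * Real.sin (c * (x - a))) ^ 2)
      = lam ^ 2 * c ^ 4 * B := by
    rw [hB, ← intervalIntegral.integral_const_mul]
    apply intervalIntegral.integral_congr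
    intro x _
    ring
  rw [E1, E2, E3]
  have hAB : A = B := by
    have hsub : A - B = ∫ x in a..b,
        (w x * Real.cos (c * (x - a)) ^ 2 - w x * Real.sin (c * (x - a)) ^ 2) :=
      (intervalIntegral.integral_sub hint1 hint2).symm
    have hcongr : (∫ x in a..b,
        (w x * Real.cos (c * (x - a)) ^ 2 - w x * Real.sin (c * (x - a)) ^ 2))
        = ∫ x in a..b, w x * Real.cos (2 * c * (x - a)) := by
      apply intervalIntegral.integral_congr
      intro x _
      simp only
      rw [show (2 : ℝ) * c * (x - a) = 2 * (c * (x - a)) by ring, Real.cos_two_mul']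
      ring
    have hzero := weight_cos_integral_zero a b hab n hn w hwint hwlin hwconst
    rw [← hc] at hzero
    have : A - B = 0 := by rw [hsub, hcongr, hzero]
    linarith
  rw [hAB]
  ring
end

section
/- Let a < b be real numbers, let w : [a,b] → [0,∞) be a concave and (monotonically) decreasing function, and let f ∈ C²[a,b] satisfy f'(a) = 0 and f(b) = 0. Then (∫ₐᵇ w(x) f'(x)² dx)² ≤ (∫ₐᵇ w(x) f(x)² dx) · (∫ₐᵇ w(x) f''(x)² dx). -/
open Set MeasureTheory intervalIntegral Filter Topology

lemma lemII (a b : ℝ) (hab : a < b) (G φ : ℝ → ℝ)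
    (hG : Monotone G) (hG0 : ∀ x, 0 ≤ G x)
    (hφ : Continuous φ)
    (hΦ : ∀ s ∈ Icc a b, (∫ t in s..b, φ t) ≤ 0) :
    (∫ s in a..b, G s * φ s) ≤ 0 := by
  set P : ℝ → ℝ := fun u => ∫ t in a..u, φ t with hPdef
  have hP : ∀ s : ℝ, HasDerivAt P (φ s) s := fun s =>
    integral_hasDerivAt_right (hφ.intervalIntegrable a s)
      hφ.stronglyMeasurable.stronglyMeasurableAtFilter hφ.continuousAt
  have Pcont : Continuous P := by
    rw [continuous_iff_continuousAt]; exact fun s => (hP s).continuousAt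
  set Φe : ℝ → ℝ := fun s => P b - P (min s b) with hΦedef
  have Φecont : Continuous Φe :=
    continuous_const.sub (Pcont.comp (continuous_id.min continuous_const))
  have hPdiff : ∀ u v : ℝ, P v - P u = ∫ t in u..v, φ t := by
    intro u v
    have := integral_add_adjacent_intervals (hφ.intervalIntegrable (μ := volume) a u) (hφ.intervalIntegrable (μ := volume) u v)
    simp only [hPdef]; linarith
  have key1 : ∀ s, a ≤ s → Φe s ≤ 0 := by
    intro s hs
    have hmem : min s b ∈ Icc a b := ⟨le_min hs hab.le, min_le_right _ _⟩
    have h2 := hΦ _ hmem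
    rw [← hPdiff (min s b) b] at h2
    simpa [hΦedef] using h2
  have key2 : ∀ s, b ≤ s → Φe s = 0 := by
    intro s hs; simp [hΦedef, min_eq_right hs]
  obtain ⟨Mφ, hMφ⟩ := isCompact_Icc.exists_bound_of_continuousOn (hφ.continuousOn (s := Icc a b))
  have intG : ∀ (c d : ℝ) (g q : ℝ → ℝ), Monotone g → Continuous q →
      IntervalIntegrable (fun s => g s * q s) volume c d := by
    intro c d g q hg hq
    exact ((hg.monotoneOn _).intervalIntegrable).mul_continuousOn hq.continuousOn
  -- per-ε inequality
  have step : ∀ ε : ℝ, 0 < ε → ε ≤ b - a →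
      (∫ s in a..b, G s * Φe s) ≤ ∫ s in a..b, G s * Φe (s + ε) := by
    intro ε hε hεb
    have hGε : Monotone (fun s => G (s - ε)) := fun x y hxy => hG (by linarith)
    have eq1 : (∫ s in a..b, G s * Φe (s + ε)) = ∫ s in a+ε..b+ε, G (s - ε) * Φe s := by
      have := integral_comp_add_right (fun t => G (t - ε) * Φe t) ε (a := a) (b := b)
      simpa using this
    have eq2 : (∫ s in a+ε..b+ε, G (s - ε) * Φe s)
        = (∫ s in a+ε..b, G (s - ε) * Φe s) + ∫ s in b..b+ε, G (s - ε) * Φe s :=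
      (integral_add_adjacent_intervals (intG _ _ _ _ hGε Φecont) (intG _ _ _ _ hGε Φecont)).symm
    have eq3 : (∫ s in b..b+ε, G (s - ε) * Φe s) = 0 := by
      rw [intervalIntegral.integral_congr (g := fun _ => (0:ℝ))]
      · simp
      · intro s hs
        rw [uIcc_of_le (by linarith)] at hs
        simp [key2 s hs.1]
    have eq4 : (∫ s in a..b, G s * Φe s)
        = (∫ s in a..a+ε, G s * Φe s) + ∫ s in a+ε..b, G s * Φe s :=
      (integral_add_adjacent_intervals (intG _ _ _ _ hG Φecont) (intG _ _ _ _ hG Φecont)).symm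
    have ineq1 : (∫ s in a+ε..b, G s * Φe s) ≤ ∫ s in a+ε..b, G (s - ε) * Φe s := by
      apply intervalIntegral.integral_mono_on (by linarith) (intG _ _ _ _ hG Φecont)
        (intG _ _ _ _ hGε Φecont)
      intro s hs
      have h1 : G s ≥ G (s - ε) := hG (by linarith)
      have h2 : Φe s ≤ 0 := key1 s (by linarith [hs.1])
      nlinarith
    have ineq2 : (∫ s in a..a+ε, G s * Φe s) ≤ 0 := by
      have h := intervalIntegral.integral_nonneg (f := fun s => -(G s * Φe s))
        (a := a) (b := a+ε) (μ := volume) (by linarith) (fun s hs => by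
          have h2 : Φe s ≤ 0 := key1 s hs.1
          show (0:ℝ) ≤ -(G s * Φe s)
          nlinarith [hG0 s])
      rw [intervalIntegral.integral_neg] at h; linarith
    linarith [eq1, eq2, eq3, eq4, ineq1, ineq2]
  have hMφ0 : 0 ≤ Mφ := le_trans (norm_nonneg _) (hMφ a ⟨le_refl a, hab.le⟩)
  set ε : ℕ → ℝ := fun n => (b - a)/(n+1) with hεdef
  have hεpos : ∀ n, 0 < ε n := fun n => by
    have : (0:ℝ) < (n:ℝ) + 1 := by positivity
    exact div_pos (by linarith) this
  have hεle : ∀ n, ε n ≤ b - a := fun n => by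
    rw [hεdef]
    have h1 : (1:ℝ) ≤ (n:ℝ) + 1 := by linarith [Nat.cast_nonneg (α := ℝ) n]
    exact div_le_self (by linarith) h1
  have hεto : Tendsto ε atTop (𝓝 0) := by
    have h1 : Tendsto (fun n : ℕ => 1/((n:ℝ)+1)) atTop (𝓝 0) :=
      tendsto_one_div_add_atTop_nhds_zero_nat
    have := h1.const_mul (b - a)
    simpa [hεdef, mul_one_div, mul_zero, div_eq_mul_inv] using this
  set F : ℕ → ℝ → ℝ := fun n s => G s * ((Φe s - Φe (s + ε n))/(ε n)) with hFdef
  have hEn : ∀ n, (∫ s in a..b, F n s) ≤ 0 := by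
    intro n
    have e1 : (∫ s in a..b, F n s)
        = (ε n)⁻¹ * ((∫ s in a..b, G s * Φe s) - ∫ s in a..b, G s * Φe (s + ε n)) := by
      rw [← intervalIntegral.integral_sub (intG a b G Φe hG Φecont)
        (intG a b G (fun s => Φe (s + ε n)) hG (Φecont.comp (continuous_add_right _)))]
      rw [← intervalIntegral.integral_const_mul]
      apply intervalIntegral.integral_congr
      intro s _
      show G s * ((Φe s - Φe (s + ε n))/(ε n)) = _
      ring
    rw [e1]
    have := step (ε n) (hεpos n) (hεle n)
    have hinv : (0:ℝ) ≤ (ε n)⁻¹ := (inv_pos.2 (hεpos n)).le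
    nlinarith
  have hto : Tendsto (fun n => ∫ s in a..b, F n s) atTop (𝓝 (∫ s in a..b, G s * φ s)) := by
    simp only [intervalIntegral.integral_of_le hab.le]
    apply MeasureTheory.tendsto_integral_of_dominated_convergence (bound := fun _ => G b * Mφ)
    · intro n
      apply Measurable.aestronglyMeasurable
      exact hG.measurable.mul (((Φecont.sub (Φecont.comp (continuous_id.add continuous_const))).measurable).div_const _)
    · exact MeasureTheory.integrableOn_const measure_Ioc_lt_top.ne
    · intro n
      rw [MeasureTheory.ae_restrict_iff' measurableSet_Ioc]
      apply Filter.Eventually.of_forall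
      intro s hs
      have hsa : a < s := hs.1
      have hsb : s ≤ b := hs.2
      have hd : Φe s - Φe (s + ε n) = ∫ t in (min s b)..(min (s + ε n) b), φ t := by
        rw [← hPdiff]
        simp only [hΦedef]
        ring
      have hm1 : min s b ≤ min (s + ε n) b := min_le_min (by linarith [hεpos n]) (le_refl b)
      have hbnd : ‖∫ t in (min s b)..(min (s + ε n) b), φ t‖ ≤ Mφ * |min (s + ε n) b - min s b| := by
        apply intervalIntegral.norm_integral_le_of_norm_le_const
        intro x hx
        rw [uIoc_of_le hm1] at hx
        apply hMφ
        constructor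
        · have : a ≤ min s b := le_min hsa.le hab.le
          linarith [hx.1]
        · exact le_trans hx.2 (min_le_right _ _)
      have habs : |min (s + ε n) b - min s b| ≤ ε n := by
        rw [abs_of_nonneg (by linarith)]
        have : min (s + ε n) b ≤ min s b + ε n := by
          rcases le_total (s + ε n) b with h | h
          · rw [min_eq_left h]; simp [min_def]; split <;> linarith
          · rw [min_eq_right h, min_def]; split <;> linarith [hεpos n]
        linarith
      rw [hFdef]
      show ‖G s * ((Φe s - Φe (s + ε n))/(ε n))‖ ≤ G b * Mφ
      rw [norm_mul, Real.norm_eq_abs, Real.norm_eq_abs, abs_of_nonneg (hG0 s), abs_div,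
        abs_of_pos (hεpos n)]
      have h1 : G s ≤ G b := hG hsb
      have h2 : |Φe s - Φe (s + ε n)| ≤ Mφ * ε n := by
        rw [hd]
        calc |∫ t in (min s b)..(min (s + ε n) b), φ t| ≤ Mφ * |min (s + ε n) b - min s b| := hbnd
        _ ≤ Mφ * ε n := by nlinarith [abs_nonneg (min (s + ε n) b - min s b)]
      have h3 : |Φe s - Φe (s + ε n)| / ε n ≤ Mφ := by
        rw [div_le_iff₀ (hεpos n)]; linarith
      nlinarith [hG0 s, abs_nonneg (Φe s - Φe (s + ε n)), (hεpos n)]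
    · have hae : ∀ᵐ (s:ℝ) ∂(volume.restrict (Set.Ioc a b)), s ∈ Set.Ioo a b := by
        rw [← MeasureTheory.Measure.restrict_congr_set MeasureTheory.Ioo_ae_eq_Ioc]
        exact MeasureTheory.ae_restrict_mem measurableSet_Ioo
      filter_upwards [hae] with s hs
      have hsb : s < b := hs.2
      have hslope : Tendsto (fun n => (P (s + ε n) - P s) / ε n) atTop (𝓝 (φ s)) := by
        have hd := hasDerivAt_iff_tendsto_slope_zero.mp (hP s)
        have hεto' : Tendsto ε atTop (𝓝[≠] (0:ℝ)) :=
          tendsto_nhdsWithin_of_tendsto_nhds_of_eventually_within _ hεto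
            (Filter.Eventually.of_forall fun n => (hεpos n).ne')
        have := hd.comp hεto'
        simpa [Function.comp_def, smul_eq_mul, div_eq_inv_mul] using this
      have heq : ∀ᶠ n in atTop, F n s = G s * ((P (s + ε n) - P s) / ε n) := by
        filter_upwards [hεto.eventually_lt_const (show (0:ℝ) < b - s by linarith)] with n hn
        have h1 : min s b = s := min_eq_left hsb.le
        have h2 : min (s + ε n) b = s + ε n := min_eq_left (by linarith)
        rw [hFdef]
        show G s * ((Φe s - Φe (s + ε n))/(ε n)) = _
        rw [hΦedef]
        simp only [h1, h2]
        ring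
      exact Filter.Tendsto.congr' (heq.mono fun n h => h.symm) (tendsto_const_nhds.mul hslope)
  exact le_of_tendsto hto (Filter.Eventually.of_forall hEn)

set_option maxHeartbeats 1600000 in
/-- Analogue of the corollary for the boundary conditions `f' a = 0`,
`f b = 0`, with a concave and decreasing weight `w : [a,b] → [0,∞)`. -/
theorem hardy_littlewood_concave_decreasing_weight
    (a b : ℝ) (hab : a < b) (w f f' f'' : ℝ → ℝ)
    (hw0 : ∀ x ∈ Set.Icc a b, 0 ≤ w x)
    (hwconc : ConcaveOn ℝ (Set.Icc a b) w)
    (hwanti : AntitoneOn w (Set.Icc a b))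
    (hf' : ∀ x ∈ Set.Icc a b, HasDerivWithinAt f (f' x) (Set.Icc a b) x)
    (hf'' : ∀ x ∈ Set.Icc a b, HasDerivWithinAt f' (f'' x) (Set.Icc a b) x)
    (hf''cont : ContinuousOn f'' (Set.Icc a b))
    (hf'a : f' a = 0) (hfb : f b = 0) :
    (∫ x in a..b, w x * f' x ^ 2) ^ 2 ≤
      (∫ x in a..b, w x * f x ^ 2) * (∫ x in a..b, w x * f'' x ^ 2) := by
  have hab' : a ≤ b := hab.le
  -- clamping map
  set c : ℝ → ℝ := fun x => max a (min x b) with hcdef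
  have hcmono : Monotone c := fun x y h =>
    max_le_max (le_refl a) (min_le_min h (le_refl b))
  have hcmem : ∀ x, c x ∈ Set.Icc a b := fun x =>
    ⟨le_max_left _ _, max_le hab' (min_le_right _ _)⟩
  have hcid : ∀ x ∈ Set.Icc a b, c x = x := fun x hx => by
    rw [hcdef]; simp only [min_eq_left hx.2, max_eq_right hx.1]
  have hccont : Continuous c := continuous_const.max (continuous_id.min continuous_const)
  -- clamped versions
  set W : ℝ → ℝ := fun x => w (c x) with hWdef
  set F : ℝ → ℝ := fun x => f (c x) with hFdef
  set F' : ℝ → ℝ := fun x => f' (c x) with hF'def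
  set F'' : ℝ → ℝ := fun x => f'' (c x) with hF''def
  have hfc : ContinuousOn f (Set.Icc a b) := fun x hx => (hf' x hx).continuousWithinAt
  have hf'c : ContinuousOn f' (Set.Icc a b) := fun x hx => (hf'' x hx).continuousWithinAt
  have hFcont : Continuous F := hfc.comp_continuous hccont hcmem
  have hF'cont : Continuous F' := hf'c.comp_continuous hccont hcmem
  have hF''cont : Continuous F'' := hf''cont.comp_continuous hccont hcmem
  have hWanti : Antitone W := fun x y h => hwanti (hcmem x) (hcmem y) (hcmono h)
  have hWmeas : Measurable W := hWanti.measurable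
  have hW0 : ∀ x, 0 ≤ W x := fun x => hw0 _ (hcmem x)
  have hWle : ∀ x, W x ≤ w a := fun x => hwanti ⟨le_refl a, hab'⟩ (hcmem x) (hcmem x).1
  have intW : ∀ (c' d' : ℝ) (q : ℝ → ℝ), Continuous q →
      IntervalIntegrable (fun x => W x * q x) volume c' d' := fun c' d' q hq =>
    ((hWanti.antitoneOn _).intervalIntegrable).mul_continuousOn hq.continuousOn
  -- the function u = 2 f f' and its clamped version φ
  set φ : ℝ → ℝ := fun x => 2 * (F x * F' x) with hφdef
  have hφcont : Continuous φ := by fun_prop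
  set HC : ℝ → ℝ := fun x => 2 * (F' x * F' x + F x * F'' x) with hHCdef
  have hHCcont : Continuous HC := by fun_prop
  -- derivative facts
  have hDu : ∀ x ∈ Set.Icc a b,
      HasDerivWithinAt (fun y => 2 * (f y * f' y)) (HC x) (Set.Icc a b) x := by
    intro x hx
    have h1 := ((hf' x hx).mul (hf'' x hx)).const_mul (2:ℝ)
    have : HC x = 2 * (f' x * f' x + f x * f'' x) := by
      rw [hHCdef]; simp only [hF'def, hFdef, hF''def, hcid x hx]
    rw [this]
    convert h1 using 1
    · rfl
    · rfl
    · rfl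
  have hDsq : ∀ x ∈ Set.Icc a b,
      HasDerivWithinAt (fun y => f y * f y) (φ x) (Set.Icc a b) x := by
    intro x hx
    have h1 := (hf' x hx).mul (hf' x hx)
    have : φ x = 2 * (f x * f' x) := by
      rw [hφdef]; simp only [hFdef, hF'def, hcid x hx]
    rw [this]
    convert h1 using 1
    · rfl
    · rfl
    · rfl
    ring
  -- the key inner hypothesis for lemII
  have hΦ : ∀ s ∈ Set.Icc a b, (∫ t in s..b, φ t) ≤ 0 := by
    intro s hs
    have hftc : (∫ t in s..b, φ t) = f b * f b - f s * f s := by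
      apply integral_eq_sub_of_hasDeriv_right_of_le hs.2
      · exact (hfc.mono (Set.Icc_subset_Icc hs.1 le_rfl)).mul
          (hfc.mono (Set.Icc_subset_Icc hs.1 le_rfl))
      · intro x hx
        have hxm : x ∈ Set.Icc a b := ⟨le_trans hs.1 hx.1.le, hx.2.le⟩
        exact (hDsq x hxm).mono_of_mem_nhdsWithin (Icc_mem_nhdsGT_of_mem ⟨hxm.1, hx.2⟩)
      · exact hφcont.intervalIntegrable _ _
    rw [hftc, hfb]
    nlinarith [mul_self_nonneg (f s)]
  -- bound for HC on [a,b]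
  obtain ⟨MH, hMH⟩ := isCompact_Icc.exists_bound_of_continuousOn
    (hHCcont.continuousOn (s := Set.Icc a b))
  have hMH0 : 0 ≤ MH := le_trans (norm_nonneg _) (hMH a ⟨le_refl a, hab'⟩)
  -- FTC on subintervals
  have hFTC : ∀ s t, a ≤ s → s ≤ t → t ≤ b → (∫ y in s..t, HC y) = φ t - φ s := by
    intro s t has hst htb
    have hsub : Set.Icc s t ⊆ Set.Icc a b := Set.Icc_subset_Icc has htb
    have h1 : (∫ y in s..t, HC y) = 2 * (f t * f' t) - 2 * (f s * f' s) := by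
      apply integral_eq_sub_of_hasDeriv_right_of_le hst
      · exact (continuousOn_const.mul ((hfc.mono hsub).mul (hf'c.mono hsub)))
      · intro x hx
        have hxm : x ∈ Set.Icc a b := hsub (Set.Ioo_subset_Icc_self hx)
        exact (hDu x hxm).mono_of_mem_nhdsWithin (Icc_mem_nhdsGT_of_mem ⟨hxm.1, lt_of_lt_of_le hx.2 htb⟩)
      · exact hHCcont.intervalIntegrable _ _
    rw [h1]
    have e1 : φ t = 2 * (f t * f' t) := by
      rw [hφdef]; simp only [hFdef, hF'def, hcid t ⟨le_trans has hst, htb⟩]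
    have e2 : φ s = 2 * (f s * f' s) := by
      rw [hφdef]; simp only [hFdef, hF'def, hcid s ⟨has, le_trans hst htb⟩]
    rw [e1, e2]
  have hφdiffb : ∀ s t, a ≤ s → s ≤ t → t ≤ b → |φ t - φ s| ≤ MH * (t - s) := by
    intro s t has hst htb
    rw [← hFTC s t has hst htb]
    have h := intervalIntegral.norm_integral_le_of_norm_le_const (C := MH) (a := s) (b := t)
      (f := HC) (fun x hx => by
        rw [Set.uIoc_of_le hst] at hx
        exact hMH x ⟨le_trans has hx.1.le, le_trans hx.2 htb⟩)
    rw [Real.norm_eq_abs] at h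
    calc |∫ y in s..t, HC y| ≤ MH * |t - s| := h
    _ = MH * (t - s) := by rw [abs_of_nonneg (by linarith)]
  -- monotonicity of difference quotients from concavity
  have hconc2 : ∀ ε : ℝ, 0 < ε → ∀ t1 t2, a + ε ≤ t1 → t1 ≤ t2 → t2 ≤ b →
      W (t1 - ε) - W t1 ≤ W (t2 - ε) - W t2 := by
    intro ε hε t1 t2 ht1 ht12 ht2
    rcases eq_or_lt_of_le ht12 with rfl | hlt
    · exact le_refl _
    have hL : (0:ℝ) < t2 - t1 + ε := by linarith
    set lam : ℝ := (t2 - t1)/(t2 - t1 + ε) with hlam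
    have hlam0 : 0 < lam := div_pos (by linarith) hL
    have hlam1 : lam < 1 := (div_lt_one hL).2 (by linarith)
    have hx : t1 - ε ∈ Set.Icc a b := ⟨by linarith, by linarith⟩
    have hy : t2 ∈ Set.Icc a b := ⟨by linarith, ht2⟩
    have ht1m : t1 ∈ Set.Icc a b := ⟨by linarith, by linarith⟩
    have ht2m : t2 - ε ∈ Set.Icc a b := ⟨by linarith, by linarith⟩
    have harg1 : lam * (t1 - ε) + (1 - lam) * t2 = t1 := by
      rw [hlam]; field_simp; ring
    have harg2 : (1 - lam) * (t1 - ε) + lam * t2 = t2 - ε := by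
      rw [hlam]; field_simp; ring
    have h1 := hwconc.2 hx hy (show (0:ℝ) ≤ lam from hlam0.le)
      (show (0:ℝ) ≤ 1 - lam by linarith) (show lam + (1 - lam) = 1 by ring)
    have h2 := hwconc.2 hx hy (show (0:ℝ) ≤ 1 - lam by linarith)
      (show (0:ℝ) ≤ lam from hlam0.le) (show (1 - lam) + lam = 1 by ring)
    simp only [smul_eq_mul] at h1 h2
    rw [harg1] at h1
    rw [harg2] at h2
    have eW : ∀ z (hz : z ∈ Set.Icc a b), W z = w z := fun z hz => by
      rw [hWdef]; simp only [hcid z hz]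
    rw [eW _ hx, eW _ ht1m, eW _ ht2m, eW _ hy]
    linarith
  -- the per-ε inequality Sε ≤ 0
  have hS : ∀ ε : ℝ, 0 < ε → ε ≤ (b - a)/2 →
      (∫ t in a+ε..b, ((W (t - ε) - W t)/ε) * φ t) ≤ 0 := by
    intro ε hε hε2
    have haeb : a + ε < b := by linarith
    set c2 : ℝ → ℝ := fun t => max (a+ε) (min t b) with hc2def
    have hc2mono : Monotone c2 := fun x y h =>
      max_le_max (le_refl _) (min_le_min h (le_refl _))
    have hc2mem : ∀ t, c2 t ∈ Set.Icc (a+ε) b := fun t =>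
      ⟨le_max_left _ _, max_le haeb.le (min_le_right _ _)⟩
    have hc2id : ∀ t ∈ Set.Icc (a+ε) b, c2 t = t := fun t ht => by
      rw [hc2def]; simp only [min_eq_left ht.2, max_eq_right ht.1]
    set G : ℝ → ℝ := fun t => (W (c2 t - ε) - W (c2 t))/ε with hGdef
    have hGmono : Monotone G := by
      intro x y h
      have := hconc2 ε hε (c2 x) (c2 y) (hc2mem x).1 (hc2mono h) (hc2mem y).2
      exact div_le_div_of_nonneg_right this hε.le
    have hG0 : ∀ t, 0 ≤ G t :=
      fun t => div_nonneg (sub_nonneg.2 (hWanti (by linarith))) hε.le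
    have hlem := lemII (a+ε) b haeb G φ hGmono hG0 hφcont
      (fun s hs => hΦ s ⟨by linarith [hs.1], hs.2⟩)
    have : (∫ t in a+ε..b, ((W (t - ε) - W t)/ε) * φ t) = ∫ t in a+ε..b, G t * φ t := by
      apply intervalIntegral.integral_congr
      intro t ht
      rw [Set.uIcc_of_le haeb.le] at ht
      rw [hGdef]; simp only [hc2id t ht]
    rw [this]
    exact hlem
  -- φ agrees with 2 f f' on [a,b]
  have hφeq : ∀ x ∈ Set.Icc a b, φ x = 2 * (f x * f' x) := fun x hx => by
    rw [hφdef]; simp only [hFdef, hF'def, hcid x hx]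
  have hφa : φ a = 0 := by rw [hφeq a ⟨le_refl a, hab'⟩, hf'a]; ring
  have hφb : φ b = 0 := by rw [hφeq b ⟨hab', le_refl b⟩, hfb]; ring
  -- sequence of ε's
  set ε : ℕ → ℝ := fun n => (b - a)/(2*((n:ℝ)+1)) with hεdef
  have hεpos : ∀ n, 0 < ε n := fun n => by
    have h1 : (0:ℝ) < 2*((n:ℝ)+1) := by positivity
    exact div_pos (by linarith) h1
  have hεle : ∀ n, ε n ≤ (b - a)/2 := fun n => by
    rw [hεdef]
    rw [div_le_div_iff₀ (by positivity) (by norm_num)]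
    have h1 : (1:ℝ) ≤ (n:ℝ) + 1 := by linarith [Nat.cast_nonneg (α := ℝ) n]
    nlinarith
  have hεto : Tendsto ε atTop (𝓝 0) := by
    have h1 : Tendsto (fun n : ℕ => 1/((n:ℝ)+1)) atTop (𝓝 0) :=
      tendsto_one_div_add_atTop_nhds_zero_nat
    have h2 := h1.const_mul ((b - a)/2)
    rw [mul_zero] at h2
    apply h2.congr
    intro n
    rw [hεdef]
    field_simp
  have hεto' : Tendsto ε atTop (𝓝[≠] (0:ℝ)) :=
    tendsto_nhdsWithin_of_tendsto_nhds_of_eventually_within _ hεto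
      (Filter.Eventually.of_forall fun n => (hεpos n).ne')
  -- the main identity
  have ident : ∀ e : ℝ, 0 < e → e ≤ (b - a)/2 →
      (∫ t in a+e..b, ((W (t - e) - W t)/e) * φ t)
        = (1/e) * (∫ s in a..b-e, W s * (φ (s+e) - φ s))
          + (1/e) * (∫ s in a..a+e, W s * φ s)
          - (1/e) * (∫ s in b-e..b, W s * φ s) := by
    intro e he he2
    have hWs : Antitone (fun t => W (t - e)) := fun x y h => hWanti (by linarith)
    have intWs : ∀ (c' d' : ℝ),
        IntervalIntegrable (fun t => W (t - e) * φ t) volume c' d' := fun c' d' =>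
      ((hWs.antitoneOn _).intervalIntegrable).mul_continuousOn hφcont.continuousOn
    have e0 : (∫ t in a+e..b, ((W (t - e) - W t)/e) * φ t)
        = (1/e) * ((∫ t in a+e..b, W (t - e) * φ t) - (∫ t in a+e..b, W t * φ t)) := by
      rw [← intervalIntegral.integral_sub (intWs _ _) (intW _ _ φ hφcont),
        ← intervalIntegral.integral_const_mul]
      apply intervalIntegral.integral_congr
      intro t _
      show ((W (t - e) - W t)/e) * φ t = (1/e) * (W (t - e) * φ t - W t * φ t)
      ring
    have e1 : (∫ t in a+e..b, W (t - e) * φ t) = ∫ s in a..b-e, W s * φ (s+e) := by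
      have h := integral_comp_add_right (a := a) (b := b - e) (fun t => W (t - e) * φ t) e
      simp only [add_sub_cancel_right, sub_add_cancel] at h
      exact h.symm
    have e2 : (∫ s in a..b-e, W s * φ (s+e))
        = (∫ s in a..b-e, W s * (φ (s+e) - φ s)) + ∫ s in a..b-e, W s * φ s := by
      rw [← intervalIntegral.integral_add
        (intW _ _ (fun s => φ (s+e) - φ s) ((hφcont.comp (continuous_add_right e)).sub hφcont))
        (intW _ _ φ hφcont)]
      apply intervalIntegral.integral_congr
      intro t _
      show W t * φ (t+e) = W t * (φ (t+e) - φ t) + W t * φ t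
      ring
    have e3 : (∫ s in a..b-e, W s * φ s)
        = (∫ s in a..a+e, W s * φ s) + ∫ s in a+e..b-e, W s * φ s :=
      (integral_add_adjacent_intervals (intW _ _ φ hφcont) (intW _ _ φ hφcont)).symm
    have e4 : (∫ t in a+e..b, W t * φ t)
        = (∫ t in a+e..b-e, W t * φ t) + ∫ t in b-e..b, W t * φ t :=
      (integral_add_adjacent_intervals (intW _ _ φ hφcont) (intW _ _ φ hφcont)).symm
    rw [e0, e1, e2, e3, e4]
    ring
  -- limit of the main term
  set K : ℝ := ∫ x in a..b, W x * HC x with hKdef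
  have hT1 : Tendsto (fun n => (1/(ε n)) * (∫ s in a..b-(ε n), W s * (φ (s+(ε n)) - φ s)))
      atTop (𝓝 K) := by
    have hKset : K = ∫ s in Set.Ioc a b, (W s * HC s) := by
      rw [hKdef, intervalIntegral.integral_of_le hab']
    have hrw : ∀ n, (1/(ε n)) * (∫ s in a..b-(ε n), W s * (φ (s+(ε n)) - φ s))
        = ∫ s in Set.Ioc a b, (Set.Iic (b - ε n)).indicator
            (fun s => W s * ((φ (s + ε n) - φ s)/(ε n))) s := by
      intro n
      rw [MeasureTheory.integral_indicator measurableSet_Iic,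
          MeasureTheory.Measure.restrict_restrict measurableSet_Iic]
      have hinter : Set.Iic (b - ε n) ∩ Set.Ioc a b = Set.Ioc a (b - ε n) :=
        Set.Iic_inter_Ioc_of_le (by linarith [hεpos n])
      rw [hinter, ← intervalIntegral.integral_of_le
        (show a ≤ b - ε n by linarith [hεpos n, hεle n]),
        ← intervalIntegral.integral_const_mul]
      apply intervalIntegral.integral_congr
      intro t _
      show (1/(ε n)) * (W t * (φ (t + ε n) - φ t)) = W t * ((φ (t + ε n) - φ t)/(ε n))
      ring
    rw [funext hrw, hKset]
    apply MeasureTheory.tendsto_integral_of_dominated_convergence (bound := fun _ => w a * MH)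
    · intro n
      apply Measurable.aestronglyMeasurable
      exact (hWmeas.mul (((hφcont.comp (continuous_add_right (ε n))).sub
        hφcont).measurable.div_const _)).indicator measurableSet_Iic
    · exact MeasureTheory.integrableOn_const measure_Ioc_lt_top.ne
    · intro n
      rw [MeasureTheory.ae_restrict_iff' measurableSet_Ioc]
      apply Filter.Eventually.of_forall
      intro s hs
      by_cases hsle : s ∈ Set.Iic (b - ε n)
      · rw [Set.indicator_of_mem hsle]
        have hd := hφdiffb s (s + ε n) hs.1.le (by linarith [hεpos n])
          (by simp only [Set.mem_Iic] at hsle; linarith)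
        have hd2 : |φ (s + ε n) - φ s| ≤ MH * ε n := by
          calc |φ (s + ε n) - φ s| ≤ MH * (s + ε n - s) := hd
          _ = MH * ε n := by ring_nf
        rw [Real.norm_eq_abs, abs_mul, abs_of_nonneg (hW0 s), abs_div,
          abs_of_pos (hεpos n)]
        have h3 : |φ (s + ε n) - φ s| / ε n ≤ MH := by
          rw [div_le_iff₀ (hεpos n)]; linarith
        nlinarith [hW0 s, hWle s, abs_nonneg (φ (s + ε n) - φ s), hεpos n,
          hw0 a ⟨le_refl a, hab'⟩]
      · rw [Set.indicator_of_notMem hsle]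
        simp only [norm_zero]
        exact mul_nonneg (hw0 a ⟨le_refl a, hab'⟩) hMH0
    · have hae : ∀ᵐ (s:ℝ) ∂(volume.restrict (Set.Ioc a b)), s ∈ Set.Ioo a b := by
        rw [← MeasureTheory.Measure.restrict_congr_set MeasureTheory.Ioo_ae_eq_Ioc]
        exact MeasureTheory.ae_restrict_mem measurableSet_Ioo
      filter_upwards [hae] with s hs
      have hsa : a < s := hs.1
      have hsb : s < b := hs.2
      have hev : ∀ᶠ n in atTop, ε n < b - s :=
        hεto.eventually_lt_const (show (0:ℝ) < b - s by linarith)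
      have hslope : Tendsto (fun n => (φ (s + ε n) - φ s)/(ε n)) atTop (𝓝 (HC s)) := by
        have hd := hDu s ⟨hsa.le, hsb.le⟩
        rw [hasDerivWithinAt_iff_tendsto_slope] at hd
        have hseq : Tendsto (fun n => s + ε n) atTop (𝓝[Set.Icc a b \ {s}] s) := by
          apply tendsto_nhdsWithin_of_tendsto_nhds_of_eventually_within
          · have := (tendsto_const_nhds (x := s) (f := atTop (α := ℕ))).add hεto
            simpa using this
          · filter_upwards [hev] with n hn
            refine ⟨⟨by linarith [hεpos n], by linarith⟩, ?_⟩
            simp only [Set.mem_singleton_iff]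
            intro hcon
            nlinarith [hεpos n]
        have hcomp := hd.comp hseq
        apply Filter.Tendsto.congr' _ hcomp
        filter_upwards [hev] with n hn
        have hmem : s + ε n ∈ Set.Icc a b := ⟨by linarith [hεpos n], by linarith⟩
        show slope (fun y => 2 * (f y * f' y)) s (s + ε n) = _
        rw [slope_def_field, hφeq (s + ε n) hmem, hφeq s ⟨hsa.le, hsb.le⟩]
        ring_nf
      have hind : ∀ᶠ n in atTop, (Set.Iic (b - ε n)).indicator
          (fun s => W s * ((φ (s + ε n) - φ s)/(ε n))) s
          = W s * ((φ (s + ε n) - φ s)/(ε n)) := by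
        filter_upwards [hev] with n hn
        exact Set.indicator_of_mem (by simp only [Set.mem_Iic]; linarith) _
      exact Filter.Tendsto.congr' (hind.mono fun n h => h.symm)
        (tendsto_const_nhds.mul hslope)
  -- primitive of |φ|
  set Q : ℝ → ℝ := fun u => ∫ t in a..u, |φ t| with hQdef
  have hQd : ∀ s, HasDerivAt Q (|φ s|) s := fun s =>
    integral_hasDerivAt_right (hφcont.abs.intervalIntegrable _ _)
      hφcont.abs.stronglyMeasurable.stronglyMeasurableAtFilter hφcont.abs.continuousAt
  have hQdiff : ∀ u v : ℝ, Q v - Q u = ∫ t in u..v, |φ t| := by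
    intro u v
    have := integral_add_adjacent_intervals (hφcont.abs.intervalIntegrable (μ := volume) a u)
      (hφcont.abs.intervalIntegrable (μ := volume) u v)
    simp only [hQdef]
    linarith
  have habs : ∀ u v : ℝ, u ≤ v → |∫ s in u..v, W s * φ s| ≤ w a * (Q v - Q u) := by
    intro u v huv
    rw [hQdiff]
    have h1 : |∫ s in u..v, W s * φ s| ≤ ∫ s in u..v, |W s * φ s| := by
      have := intervalIntegral.norm_integral_le_integral_norm
        (f := fun s => W s * φ s) (μ := volume) huv
      simp only [Real.norm_eq_abs] at this
      exact this
    have heq : (fun s => |W s * φ s|) = fun s => W s * |φ s| :=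
      funext fun s => by rw [abs_mul, abs_of_nonneg (hW0 s)]
    have h2 : (∫ s in u..v, |W s * φ s|) ≤ ∫ s in u..v, w a * |φ s| := by
      rw [heq]
      apply intervalIntegral.integral_mono_on huv (intW _ _ _ hφcont.abs)
        ((hφcont.abs.intervalIntegrable u v).const_mul (w a))
      intro s _
      exact mul_le_mul_of_nonneg_right (hWle s) (abs_nonneg _)
    have h3 : (∫ s in u..v, w a * |φ s|) = w a * ∫ s in u..v, |φ s| :=
      intervalIntegral.integral_const_mul _ _
    linarith
  have hB1 : Tendsto (fun n => (1/(ε n)) * (∫ s in a..a+(ε n), W s * φ s)) atTop (𝓝 0) := by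
    apply squeeze_zero_norm (a := fun n => w a * ((Q (a + ε n) - Q a)/(ε n)))
    · intro n
      have h0 : (0:ℝ) < ε n := hεpos n
      rw [Real.norm_eq_abs, abs_mul, abs_of_pos (by positivity : (0:ℝ) < 1/ε n)]
      have h2 := habs a (a + ε n) (by linarith)
      calc 1/(ε n) * |∫ s in a..a+(ε n), W s * φ s|
          ≤ 1/(ε n) * (w a * (Q (a + ε n) - Q a)) :=
            mul_le_mul_of_nonneg_left h2 (by positivity)
        _ = w a * ((Q (a + ε n) - Q a)/(ε n)) := by field_simp
    · have hsl : Tendsto (fun n => (Q (a + ε n) - Q a)/(ε n)) atTop (𝓝 |φ a|) := by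
        have hd := hasDerivAt_iff_tendsto_slope_zero.mp (hQd a)
        have := hd.comp hεto'
        apply this.congr
        intro n
        simp [smul_eq_mul, div_eq_inv_mul]
      have h2 := hsl.const_mul (w a)
      rw [hφa] at h2
      simpa using h2
  have hB2 : Tendsto (fun n => (1/(ε n)) * (∫ s in b-(ε n)..b, W s * φ s)) atTop (𝓝 0) := by
    apply squeeze_zero_norm (a := fun n => w a * ((Q b - Q (b - ε n))/(ε n)))
    · intro n
      have h0 : (0:ℝ) < ε n := hεpos n
      rw [Real.norm_eq_abs, abs_mul, abs_of_pos (by positivity : (0:ℝ) < 1/ε n)]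
      have h2 := habs (b - ε n) b (by linarith)
      calc 1/(ε n) * |∫ s in b-(ε n)..b, W s * φ s|
          ≤ 1/(ε n) * (w a * (Q b - Q (b - ε n))) :=
            mul_le_mul_of_nonneg_left h2 (by positivity)
        _ = w a * ((Q b - Q (b - ε n))/(ε n)) := by field_simp
    · have hnegto : Tendsto (fun n => -(ε n)) atTop (𝓝[≠] (0:ℝ)) := by
        apply tendsto_nhdsWithin_of_tendsto_nhds_of_eventually_within
        · have := hεto.neg
          simpa using this
        · exact Filter.Eventually.of_forall fun n => (neg_ne_zero.mpr (hεpos n).ne')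
      have hsl : Tendsto (fun n => (Q b - Q (b - ε n))/(ε n)) atTop (𝓝 |φ b|) := by
        have hd := hasDerivAt_iff_tendsto_slope_zero.mp (hQd b)
        have hcomp := hd.comp hnegto
        apply hcomp.congr
        intro n
        show (-(ε n))⁻¹ • (Q (b + -(ε n)) - Q b) = (Q b - Q (b - ε n))/(ε n)
        rw [smul_eq_mul, ← sub_eq_add_neg, inv_neg, div_eq_inv_mul]
        ring
      have h2 := hsl.const_mul (w a)
      rw [hφb] at h2
      simpa using h2
  have hKle : K ≤ 0 := by
    have htend : Tendsto (fun n => ∫ t in a+(ε n)..b, ((W (t - ε n) - W t)/(ε n)) * φ t)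
        atTop (𝓝 K) := by
      have heqn : (fun n => ∫ t in a+(ε n)..b, ((W (t - ε n) - W t)/(ε n)) * φ t)
          = fun n => (1/(ε n)) * (∫ s in a..b-(ε n), W s * (φ (s+(ε n)) - φ s))
            + (1/(ε n)) * (∫ s in a..a+(ε n), W s * φ s)
            - (1/(ε n)) * (∫ s in b-(ε n)..b, W s * φ s) :=
        funext fun n => ident (ε n) (hεpos n) (hεle n)
      rw [heqn]
      have := (hT1.add hB1).sub hB2
      simpa using this
    exact le_of_tendsto htend
      (Filter.Eventually.of_forall fun n => hS (ε n) (hεpos n) (hεle n))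
  -- split K into the two integrals
  set A' : ℝ := ∫ x in a..b, W x * F' x ^ 2 with hA'def
  set B' : ℝ := ∫ x in a..b, W x * F x ^ 2 with hB'def
  set C' : ℝ := ∫ x in a..b, W x * F'' x ^ 2 with hC'def
  set D' : ℝ := ∫ x in a..b, W x * (F x * F'' x) with hD'def
  have hKsplit : K = 2*A' + 2*D' := by
    have e1 : K = ∫ x in a..b, (2*(W x * F' x ^ 2) + 2*(W x * (F x * F'' x))) := by
      rw [hKdef]
      apply intervalIntegral.integral_congr
      intro x _
      show W x * HC x = 2*(W x * F' x ^ 2) + 2*(W x * (F x * F'' x))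
      rw [hHCdef]
      ring
    rw [e1, intervalIntegral.integral_add
      ((intW a b _ (by fun_prop)).const_mul 2)
      ((intW a b _ (by fun_prop)).const_mul 2),
      intervalIntegral.integral_const_mul, intervalIntegral.integral_const_mul]
  have hAD : A' + D' ≤ 0 := by
    rw [hKsplit] at hKle
    linarith
  have hA0 : 0 ≤ A' :=
    intervalIntegral.integral_nonneg hab' (fun x _ => mul_nonneg (hW0 x) (sq_nonneg _))
  have hquad : ∀ t : ℝ, 0 ≤ C' * (t*t) + (2*D') * t + B' := by
    intro t
    have hnn : 0 ≤ ∫ x in a..b, W x * (F x + t * F'' x)^2 :=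
      intervalIntegral.integral_nonneg hab' (fun x _ => mul_nonneg (hW0 x) (sq_nonneg _))
    have hexp : (∫ x in a..b, W x * (F x + t * F'' x)^2)
        = C' * (t*t) + (2*D') * t + B' := by
      have e1 : (∫ x in a..b, W x * (F x + t * F'' x)^2)
          = ∫ x in a..b, ((t*t) * (W x * F'' x ^ 2) + ((2*t) * (W x * (F x * F'' x))
              + W x * F x ^ 2)) := by
        apply intervalIntegral.integral_congr
        intro x _
        show W x * (F x + t * F'' x)^2 = _
        ring
      rw [e1, intervalIntegral.integral_add ((intW a b _ (by fun_prop)).const_mul _)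
          (IntervalIntegrable.add
            ((intW a b _ (by fun_prop)).const_mul _) (intW a b _ (by fun_prop))),
        intervalIntegral.integral_add ((intW a b _ (by fun_prop)).const_mul _)
          (intW a b _ (by fun_prop)),
        intervalIntegral.integral_const_mul, intervalIntegral.integral_const_mul]
      rw [← hC'def, ← hD'def, ← hB'def]
      ring
    rw [hexp] at hnn
    exact hnn
  have hdisc := discrim_le_zero hquad
  rw [discrim] at hdisc
  have g1 : (∫ x in a..b, w x * f' x ^ 2) = A' := by
    rw [hA'def]
    apply intervalIntegral.integral_congr
    intro x hx
    rw [Set.uIcc_of_le hab'] at hx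
    show w x * f' x ^ 2 = W x * F' x ^ 2
    rw [hWdef, hF'def]
    simp only [hcid x hx]
  have g2 : (∫ x in a..b, w x * f x ^ 2) = B' := by
    rw [hB'def]
    apply intervalIntegral.integral_congr
    intro x hx
    rw [Set.uIcc_of_le hab'] at hx
    show w x * f x ^ 2 = W x * F x ^ 2
    rw [hWdef, hFdef]
    simp only [hcid x hx]
  have g3 : (∫ x in a..b, w x * f'' x ^ 2) = C' := by
    rw [hC'def]
    apply intervalIntegral.integral_congr
    intro x hx
    rw [Set.uIcc_of_le hab'] at hx
    show w x * f'' x ^ 2 = W x * F'' x ^ 2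
    rw [hWdef, hF''def]
    simp only [hcid x hx]
  rw [g1, g2, g3]
  nlinarith [mul_nonneg (show (0:ℝ) ≤ -D' - A' by linarith)
    (show (0:ℝ) ≤ -D' + A' by linarith), sq_nonneg (2*D')]
end

section
/- Let a < b be real numbers, let w : [a,b] → ℝ be a concave function (extended continuously to the endpoints), and let f ∈ C¹[a,b] satisfy f(a) = f(b) = 0. Then ∫ₐᵇ w(t) f'(t) dt = − ∫ₐᵇ w'₋(t) f(t) dt, where w'₋ denotes the left derivative of w. -/
open Set MeasureTheory intervalIntegral

/-- FTC-2 for left derivatives, by reflection from the right-derivative version. -/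
lemma integral_eq_sub_of_hasDeriv_left_of_le (a b : ℝ) (hab : a ≤ b) (g g' : ℝ → ℝ)
    (hcont : ContinuousOn g (Set.Icc a b))
    (hderiv : ∀ x ∈ Set.Ioo a b, HasDerivWithinAt g (g' x) (Set.Iio x) x)
    (hint : IntervalIntegrable g' volume a b) :
    ∫ y in a..b, g' y = g b - g a := by
  set G : ℝ → ℝ := fun t => g (a + b - t) with hG
  have hmap : Set.MapsTo (fun t : ℝ => a + b - t) (Set.Icc a b) (Set.Icc a b) := by
    intro t ht
    simp only [Set.mem_Icc] at ht ⊢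
    constructor <;> linarith [ht.1, ht.2]
  have hGcont : ContinuousOn G (Set.Icc a b) :=
    hcont.comp (by fun_prop) hmap
  have hGderiv : ∀ x ∈ Set.Ioo a b, HasDerivWithinAt G (-g' (a + b - x)) (Set.Ioi x) x := by
    intro x hx
    have h1 : HasDerivWithinAt (fun t : ℝ => a + b - t) (-1) (Set.Ioi x) x :=
      ((hasDerivAt_id x).const_sub (a + b)).hasDerivWithinAt
    have hx' : a + b - x ∈ Set.Ioo a b := ⟨by linarith [hx.2], by linarith [hx.1]⟩
    have h2 := (hderiv (a + b - x) hx').comp x h1 (fun y hy => by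
      simp only [Set.mem_Iio]
      have : x < y := hy
      linarith)
    simpa [mul_comm, hG, Function.comp_def] using h2
  have hGint : IntervalIntegrable (fun t => -g' (a + b - t)) volume a b := by
    have := (hint.comp_sub_left (a + b)).neg
    exact (by simpa using this.symm : IntervalIntegrable (-fun x => g' (a + b - x)) volume a b)
  have hftc := integral_eq_sub_of_hasDeriv_right_of_le hab hGcont hGderiv hGint
  have hcomp : (∫ t in a..b, g' (a + b - t)) = ∫ s in a..b, g' s := by
    have := intervalIntegral.integral_comp_sub_left (a := a) (b := b) g' (a + b)
    simpa using this
  have hneg : (∫ t in a..b, -g' (a + b - t)) = -∫ t in a..b, g' (a + b - t) :=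
    intervalIntegral.integral_neg
  rw [hneg, hcomp] at hftc
  have hGb : G b - G a = g a - g b := by
    show g (a + b - b) - g (a + b - a) = g a - g b
    rw [show a + b - b = a by ring, show a + b - a = b by ring]
  rw [hGb] at hftc
  linarith

/-- Lemma 4 (integration by parts for a concave weight): if `w` is concave on
`[a,b]` (continuous up to the endpoints), `w'` is its left derivative on
`(a,b)`, and `f ∈ C¹[a,b]` with `f a = f b = 0`, then
`∫ₐᵇ w f' = − ∫ₐᵇ w'₋ f`. -/
theorem parts_concave_weight
    (a b : ℝ) (hab : a < b) (w w' : ℝ → ℝ)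
    (hwconc : ConcaveOn ℝ (Set.Icc a b) w)
    (hwcont : ContinuousOn w (Set.Icc a b))
    (hw' : ∀ t ∈ Set.Ioo a b, HasDerivWithinAt w (w' t) (Set.Iio t) t)
    (f f' : ℝ → ℝ)
    (hf : ∀ x ∈ Set.Icc a b, HasDerivWithinAt f (f' x) (Set.Icc a b) x)
    (hf'cont : ContinuousOn f' (Set.Icc a b))
    (hfa : f a = 0) (hfb : f b = 0) :
    ∫ t in a..b, w t * f' t = - ∫ t in a..b, w' t * f t := by
  -- continuity of f
  have hfcont : ContinuousOn f (Set.Icc a b) := fun x hx => (hf x hx).continuousWithinAt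
  -- bounds
  obtain ⟨M, hM⟩ := (isCompact_Icc (a := a) (b := b)).exists_bound_of_continuousOn hwcont
  obtain ⟨L, hL0, hL⟩ : ∃ L, 0 ≤ L ∧ ∀ x ∈ Set.Icc a b, ‖f' x‖ ≤ L := by
    obtain ⟨L, hL⟩ := (isCompact_Icc (a := a) (b := b)).exists_bound_of_continuousOn hf'cont
    exact ⟨max L 0, le_max_right _ _, fun x hx => (hL x hx).trans (le_max_left _ _)⟩
  have hflip : ∀ x ∈ Set.Icc a b, ∀ y ∈ Set.Icc a b, ‖f x - f y‖ ≤ L * ‖x - y‖ := by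
    intro x hx y hy
    exact (convex_Icc a b).norm_image_sub_le_of_norm_hasDerivWithin_le hf hL hy hx
  -- slope bounds for w'
  have hup : ∀ t ∈ Set.Ioo a b, ∀ x ∈ Set.Ico a t, w' t ≤ (w t - w x) / (t - x) := by
    intro t ht x hx
    have htend := (hw' t ht)
    rw [hasDerivWithinAt_iff_tendsto_slope,
      Set.diff_singleton_eq_self (by simp : t ∉ Set.Iio t)] at htend
    have hev : ∀ᶠ y in nhdsWithin t (Set.Iio t),
        slope w t y ≤ (w t - w x) / (t - x) := by
      have hmem : Set.Ioo x t ∈ nhdsWithin t (Set.Iio t) := by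
        apply mem_nhdsWithin.2
        exact ⟨Set.Ioi x, isOpen_Ioi, hx.2, fun y hy => ⟨hy.1, hy.2⟩⟩
      filter_upwards [hmem] with y hy
      have hxy : x < y := hy.1
      have hyt : y < t := hy.2
      have h1 := hwconc.slope_anti_adjacent (x := x) (y := y) (z := t)
        ⟨hx.1, (hx.2.trans ht.2).le⟩ ⟨ht.1.le, ht.2.le⟩ hxy hyt
      -- h1 : (w t - w y)/(t - y) ≤ (w y - w x)/(y - x)
      have hslope : slope w t y = (w t - w y) / (t - y) := by
        rw [slope_def_field, div_eq_div_iff (sub_ne_zero.2 hyt.ne) (sub_ne_zero.2 hyt.ne')]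
        ring
      rw [hslope]
      rw [div_le_div_iff₀ (by linarith) (by linarith)] at h1 ⊢
      nlinarith [h1]
    exact le_of_tendsto htend hev
  have hlow : ∀ t ∈ Set.Ioo a b, ∀ u ∈ Set.Ioc t b, (w u - w t) / (u - t) ≤ w' t := by
    intro t ht u hu
    have htend := (hw' t ht)
    rw [hasDerivWithinAt_iff_tendsto_slope,
      Set.diff_singleton_eq_self (by simp : t ∉ Set.Iio t)] at htend
    have hev : ∀ᶠ y in nhdsWithin t (Set.Iio t),
        (w u - w t) / (u - t) ≤ slope w t y := by
      have hmem : Set.Ioo a t ∈ nhdsWithin t (Set.Iio t) := by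
        apply mem_nhdsWithin.2
        exact ⟨Set.Ioi a, isOpen_Ioi, ht.1, fun y hy => ⟨hy.1, hy.2⟩⟩
      filter_upwards [hmem] with y hy
      have hay : a < y := hy.1
      have hyt : y < t := hy.2
      have h1 := hwconc.slope_anti_adjacent (x := y) (y := t) (z := u)
        ⟨hay.le, (hyt.trans ht.2).le⟩ ⟨(ht.1.trans hu.1).le, hu.2⟩ hyt hu.1
      -- h1 : (w u - w t)/(u - t) ≤ (w t - w y)/(t - y)
      have hslope : slope w t y = (w t - w y) / (t - y) := by
        rw [slope_def_field, div_eq_div_iff (sub_ne_zero.2 hyt.ne) (sub_ne_zero.2 hyt.ne')]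
        ring
      rw [hslope]
      exact h1
    exact ge_of_tendsto htend hev
  -- w' is antitone on (a,b)
  have hanti : AntitoneOn w' (Set.Ioo a b) := by
    intro s hs t ht hst
    rcases eq_or_lt_of_le hst with rfl | hlt
    · exact le_refl _
    · exact (hup t ht s ⟨hs.1.le, hlt⟩).trans (hlow s hs t ⟨hlt, ht.2.le⟩)
  -- bound on w' * f on Ioo
  have hbound : ∀ t ∈ Set.Ioo a b, ‖w' t * f t‖ ≤ 2 * M * L := by
    intro t ht
    have htI : t ∈ Set.Icc a b := Set.mem_Icc_of_Ioo ht
    have hfa' : ‖f t‖ ≤ L * (t - a) := by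
      have := hflip t htI a ⟨le_refl a, hab.le⟩
      rw [hfa, sub_zero] at this
      simpa [Real.norm_eq_abs, abs_of_nonneg (by linarith [ht.1] : (0:ℝ) ≤ t - a)] using this
    have hfb' : ‖f t‖ ≤ L * (b - t) := by
      have := hflip t htI b ⟨hab.le, le_refl b⟩
      rw [hfb, sub_zero] at this
      have h2 : |t - b| = b - t := by
        rw [abs_sub_comm]; exact abs_of_nonneg (by linarith [ht.2])
      simpa [Real.norm_eq_abs, h2] using this
    have hMt : |w t| ≤ M := by simpa [Real.norm_eq_abs] using hM t htI
    have hMa : |w a| ≤ M := by simpa [Real.norm_eq_abs] using hM a ⟨le_refl a, hab.le⟩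
    have hMb : |w b| ≤ M := by simpa [Real.norm_eq_abs] using hM b ⟨hab.le, le_refl b⟩
    rw [norm_mul]
    rcases le_or_gt 0 (w' t) with hpos | hneg
    · have h1 : w' t ≤ (w t - w a) / (t - a) := hup t ht a ⟨le_refl a, ht.1⟩
      have hta : (0:ℝ) < t - a := by linarith [ht.1]
      have hs : (0:ℝ) ≤ (w t - w a) / (t - a) := le_trans hpos h1
      have hkey : ‖w' t‖ * ‖f t‖ ≤ ((w t - w a) / (t - a)) * (L * (t - a)) := by
        rw [Real.norm_eq_abs, abs_of_nonneg hpos]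
        exact mul_le_mul h1 hfa' (norm_nonneg _) hs
      calc ‖w' t‖ * ‖f t‖ ≤ ((w t - w a) / (t - a)) * (L * (t - a)) := hkey
        _ = (w t - w a) * L := by field_simp
        _ ≤ 2 * M * L := by
            apply mul_le_mul_of_nonneg_right _ hL0
            linarith [(abs_le.mp hMt).1, (abs_le.mp hMt).2, (abs_le.mp hMa).1, (abs_le.mp hMa).2]
    · have h1 : (w b - w t) / (b - t) ≤ w' t := hlow t ht b ⟨ht.2, le_refl b⟩
      have hbt : (0:ℝ) < b - t := by linarith [ht.2]
      have h1' : -w' t ≤ (w t - w b) / (b - t) := by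
        have h2 := neg_le_neg h1
        rw [show -((w b - w t) / (b - t)) = (w t - w b) / (b - t) by ring] at h2
        exact h2
      have hs : (0:ℝ) ≤ (w t - w b) / (b - t) := le_trans (by linarith) h1'
      have hkey : ‖w' t‖ * ‖f t‖ ≤ ((w t - w b) / (b - t)) * (L * (b - t)) := by
        rw [Real.norm_eq_abs, abs_of_neg hneg]
        exact mul_le_mul h1' hfb' (norm_nonneg _) hs
      calc ‖w' t‖ * ‖f t‖ ≤ ((w t - w b) / (b - t)) * (L * (b - t)) := hkey
        _ = (w t - w b) * L := by field_simp
        _ ≤ 2 * M * L := by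
            apply mul_le_mul_of_nonneg_right _ hL0
            linarith [(abs_le.mp hMt).1, (abs_le.mp hMt).2, (abs_le.mp hMb).1, (abs_le.mp hMb).2]
  -- integrability of w' * f
  have haemeas : AEStronglyMeasurable (fun t => w' t * f t) (volume.restrict (Set.Ioc a b)) := by
    have hres : volume.restrict (Set.Ioc a b) = volume.restrict (Set.Ioo a b) :=
      (Measure.restrict_congr_set MeasureTheory.Ioo_ae_eq_Ioc).symm
    rw [hres]
    have h1 : AEMeasurable w' (volume.restrict (Set.Ioo a b)) :=
      aemeasurable_restrict_of_antitoneOn measurableSet_Ioo hanti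
    have h2 : AEMeasurable f (volume.restrict (Set.Ioo a b)) :=
      (hfcont.mono Set.Ioo_subset_Icc_self).aemeasurable measurableSet_Ioo
    exact (h1.mul h2).aestronglyMeasurable
  have hintwf : IntervalIntegrable (fun t => w' t * f t) volume a b := by
    rw [intervalIntegrable_iff_integrableOn_Ioc_of_le hab.le]
    refine Integrable.mono' (g := fun _ => 2 * M * L)
      (integrableOn_const measure_Ioc_lt_top.ne) haemeas ?_
    have hae : ∀ᵐ x ∂(volume.restrict (Set.Ioc a b)), x ∈ Set.Ioo a b := by
      rw [(Measure.restrict_congr_set MeasureTheory.Ioo_ae_eq_Ioc).symm]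
      exact ae_restrict_mem measurableSet_Ioo
    filter_upwards [hae] with x hx
    exact hbound x hx
  have hintwf' : IntervalIntegrable (fun t => w t * f' t) volume a b := by
    apply ContinuousOn.intervalIntegrable
    rw [Set.uIcc_of_le hab.le]
    exact hwcont.mul hf'cont
  -- FTC for g = w * f
  have hgcont : ContinuousOn (fun t => w t * f t) (Set.Icc a b) := hwcont.mul hfcont
  have hgderiv : ∀ t ∈ Set.Ioo a b,
      HasDerivWithinAt (fun t => w t * f t) (w' t * f t + w t * f' t) (Set.Iio t) t := by
    intro t ht
    have hfd : HasDerivAt f (f' t) t :=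
      (hf t (Set.mem_Icc_of_Ioo ht)).hasDerivAt (Icc_mem_nhds ht.1 ht.2)
    exact (hw' t ht).mul hfd.hasDerivWithinAt
  have hftc := integral_eq_sub_of_hasDeriv_left_of_le a b hab.le _ _ hgcont hgderiv
    (hintwf.add hintwf')
  rw [hfa, hfb, mul_zero, mul_zero, sub_zero] at hftc
  rw [intervalIntegral.integral_add hintwf hintwf'] at hftc
  linarith
end

section
/- Let a < b be real numbers and let w : [a,b] → [0,∞) be a concave function (extended continuously to the endpoints). Then there exists a sequence (wₙ)ₙ of functions wₙ : [a,b] → [0,∞) such that each wₙ is concave, nonnegative, and twice continuously differentiable on [a,b], and wₙ converges to w uniformly on [a,b]. -/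
open MeasureTheory Set Metric
open scoped Convolution

lemma aux_smooth (a b : ℝ) (hab : a < b) (w : ℝ → ℝ)
    (hw0 : ∀ x ∈ Set.Icc a b, 0 ≤ w x)
    (hwconc : ConcaveOn ℝ (Set.Icc a b) w)
    (hwcont : ContinuousOn w (Set.Icc a b))
    (θ δ : ℝ) (hθ0 : 0 ≤ θ) (hθ1 : θ ≤ 1) (hδ : 0 < δ)
    (hmap : θ * ((b - a) / 2 + δ) ≤ (b - a) / 2) :
    ∃ W : ℝ → ℝ, ConcaveOn ℝ (Set.Icc a b) W ∧ (∀ x ∈ Set.Icc a b, 0 ≤ W x) ∧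
      ContDiffOn ℝ 2 W (Set.Icc a b) ∧
      ∀ ε : ℝ, (∀ p ∈ Set.Icc a b, ∀ q ∈ Set.Icc a b,
          |p - q| ≤ (1 - θ) * ((b - a) / 2 + δ) + δ / 2 → |w p - w q| ≤ ε) →
        ∀ x ∈ Set.Icc a b, |W x - w x| ≤ ε := by
  set m : ℝ := (a + b) / 2 with hm
  set R : ℝ := (b - a) / 2 with hR
  have hR0 : 0 < R := by simp [hR]; linarith
  set φ : ℝ → ℝ := fun z => m + θ * (z - m) with hφ
  set clampf : ℝ → ℝ := fun z => max (a - δ) (min (b + δ) z) with hclamp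
  have hab' : a - δ ≤ b + δ := by linarith
  have hclampmem : ∀ z, clampf z ∈ Icc (a - δ) (b + δ) := by
    intro z
    constructor
    · exact le_max_left _ _
    · simp only [hclamp, max_le_iff]
      exact ⟨hab', min_le_left _ _⟩
  have hclampid : ∀ z ∈ Icc (a - δ) (b + δ), clampf z = z := by
    intro z hz
    simp only [hclamp]
    rw [min_eq_right hz.2, max_eq_right hz.1]
  have hφmem : ∀ z ∈ Icc (a - δ) (b + δ), φ z ∈ Icc a b := by
    intro z hz
    obtain ⟨h1, h2⟩ := hz
    have e1 : θ * (z - m) ≤ θ * (R + δ) := by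
      apply mul_le_mul_of_nonneg_left _ hθ0
      simp only [hR, hm]; linarith
    have e2 : -(θ * (R + δ)) ≤ θ * (z - m) := by
      rw [neg_le, ← mul_neg]
      apply mul_le_mul_of_nonneg_left _ hθ0
      simp only [hR, hm]; linarith
    constructor
    · simp only [hφ, hm, hR] at *; linarith
    · simp only [hφ, hm, hR] at *; linarith
  set u : ℝ → ℝ := fun z => w (φ (clampf z)) with hu
  have hgc : Continuous fun z => φ (clampf z) := by
    apply Continuous.add continuous_const
    exact continuous_const.mul ((continuous_const.max (continuous_const.min continuous_id)).sub continuous_const)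
  have huc : Continuous u := by
    apply hwcont.comp_continuous hgc
    intro z; exact hφmem _ (hclampmem z)
  have hu0 : ∀ z, 0 ≤ u z := fun z => hw0 _ (hφmem _ (hclampmem z))
  have huw : ∀ z ∈ Icc (a - δ) (b + δ), u z = w (φ z) := by
    intro z hz; simp only [hu, hclampid z hz]
  -- concavity of u on the enlarged interval
  have hconcu : ConcaveOn ℝ (Icc (a - δ) (b + δ)) u := by
    refine ⟨convex_Icc _ _, ?_⟩
    intro z1 hz1 z2 hz2 p q hp hq hpq
    have hmemc : p • z1 + q • z2 ∈ Icc (a - δ) (b + δ) :=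
      (convex_Icc _ _) hz1 hz2 hp hq hpq
    rw [huw _ hz1, huw _ hz2, huw _ hmemc]
    have hφaff : φ (p • z1 + q • z2) = p • φ z1 + q • φ z2 := by
      have hq' : q = 1 - p := by linarith
      simp only [hφ, smul_eq_mul, hq']; ring
    rw [hφaff]
    exact hwconc.2 (hφmem _ hz1) (hφmem _ hz2) hp hq hpq
  -- the bump function
  set φb : ContDiffBump (0 : ℝ) := ⟨δ / 4, δ / 2, by positivity, by linarith⟩ with hφb
  set ρ : ℝ → ℝ := φb.normed volume with hρ
  have hρ0 : ∀ t, 0 ≤ ρ t := fun t => φb.nonneg_normed t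
  have hρsupp : ∀ t : ℝ, ρ t ≠ 0 → |t| < δ / 2 := by
    intro t ht
    have : t ∈ Function.support ρ := ht
    rw [hρ, φb.support_normed_eq] at this
    simpa [Real.dist_eq] using mem_ball_iff_norm.mp this
  have hint : ∀ g : ℝ → ℝ, Continuous g → Integrable (fun t => ρ t * g t) := by
    intro g hg
    apply Continuous.integrable_of_hasCompactSupport
      ((φb.contDiff_normed (n := 0)).continuous.mul hg)
    exact (φb.hasCompactSupport_normed).mul_right
  set W : ℝ → ℝ := ρ ⋆[ContinuousLinearMap.lsmul ℝ ℝ, volume] u with hW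
  have hWdef : ∀ x, W x = ∫ t, ρ t * u (x - t) := by
    intro x; rw [hW, convolution_def]; simp
  refine ⟨W, ?_, ?_, ?_, ?_⟩
  · -- concavity
    refine ⟨convex_Icc _ _, ?_⟩
    intro x hx y hy p q hp hq hpq
    have hcx : Continuous fun t : ℝ => u (x - t) := huc.comp (continuous_const.sub continuous_id)
    have hcy : Continuous fun t : ℝ => u (y - t) := huc.comp (continuous_const.sub continuous_id)
    have hcz : Continuous fun t : ℝ => u (p * x + q * y - t) :=
      huc.comp (continuous_const.sub continuous_id)
    have hix := hint _ hcx
    have hiy := hint _ hcy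
    have hiz := hint _ hcz
    simp only [smul_eq_mul, hWdef]
    rw [← integral_const_mul, ← integral_const_mul, ← integral_add (hix.const_mul p) (hiy.const_mul q)]
    apply integral_mono ((hix.const_mul p).add (hiy.const_mul q)) hiz
    intro t
    simp only [Pi.add_apply]
    rcases eq_or_ne (ρ t) 0 with h0 | h0
    · simp [h0]
    · have htb : |t| < δ / 2 := hρsupp t h0
      have hxm : x - t ∈ Icc (a - δ) (b + δ) := by
        obtain ⟨h1, h2⟩ := hx
        constructor <;> [skip; skip] <;> cases' abs_lt.mp htb with ha hb <;> linarith
      have hym : y - t ∈ Icc (a - δ) (b + δ) := by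
        obtain ⟨h1, h2⟩ := hy
        constructor <;> [skip; skip] <;> cases' abs_lt.mp htb with ha hb <;> linarith
      have key := hconcu.2 hxm hym hp hq hpq
      simp only [smul_eq_mul] at key
      have harg : p * (x - t) + q * (y - t) = p * x + q * y - t := by linear_combination (-t) * hpq
      rw [harg] at key
      nlinarith [mul_le_mul_of_nonneg_left key (hρ0 t)]
  · -- nonnegativity
    intro x hx
    rw [hWdef]
    exact integral_nonneg fun t => mul_nonneg (hρ0 t) (hu0 _)
  · -- smoothness
    have : ContDiff ℝ 2 W :=
      HasCompactSupport.contDiff_convolution_left _ φb.hasCompactSupport_normed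
        φb.contDiff_normed huc.locallyIntegrable
    exact this.contDiffOn
  · -- closeness
    intro ε hmod x hx
    have hcx : Continuous fun t : ℝ => u (x - t) := huc.comp (continuous_const.sub continuous_id)
    have hsub : W x - w x = ∫ t, ρ t * (u (x - t) - w x) := by
      have h2 : ∫ t, ρ t * (u (x - t) - w x) = (∫ t, ρ t * u (x - t)) - ∫ t, ρ t * w x := by
        rw [← integral_sub (hint _ hcx) (hint _ continuous_const)]
        congr 1; funext t; ring
      rw [hWdef, h2, integral_mul_const, hρ, φb.integral_normed, one_mul]
    rw [hsub]
    have hb : ∀ t, |ρ t * (u (x - t) - w x)| ≤ ρ t * ε := by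
      intro t
      rcases eq_or_ne (ρ t) 0 with h0 | h0
      · simp [h0]
      · have htb : |t| < δ / 2 := hρsupp t h0
        have hxm : x - t ∈ Icc (a - δ) (b + δ) := by
          obtain ⟨h1, h2⟩ := hx
          constructor <;> [skip; skip] <;> cases' abs_lt.mp htb with ha hb <;> linarith
        rw [abs_mul, abs_of_nonneg (hρ0 t)]
        apply mul_le_mul_of_nonneg_left _ (hρ0 t)
        rw [huw _ hxm]
        apply hmod _ (hφmem _ hxm) _ hx
        have : φ (x - t) - x = -((1 - θ) * (x - m)) - θ * t := by simp [hφ]; ring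
        rw [this]
        have h1 : |(1 - θ) * (x - m)| ≤ (1 - θ) * R := by
          rw [abs_mul, abs_of_nonneg (by linarith : (0:ℝ) ≤ 1 - θ)]
          apply mul_le_mul_of_nonneg_left _ (by linarith)
          rw [abs_le]; obtain ⟨hx1, hx2⟩ := hx
          constructor <;> simp [hm, hR] <;> linarith
        have h2 : |θ * t| ≤ δ / 2 := by
          rw [abs_mul, abs_of_nonneg hθ0]
          calc θ * |t| ≤ 1 * |t| := mul_le_mul_of_nonneg_right hθ1 (abs_nonneg t)
          _ ≤ δ / 2 := by rw [one_mul]; linarith [htb]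
        calc |-((1 - θ) * (x - m)) - θ * t| ≤ |(1 - θ) * (x - m)| + |θ * t| := by
              rw [← abs_neg ((1-θ)*(x-m))] at h1 ⊢; exact abs_sub _ _
        _ ≤ (1 - θ) * R + δ / 2 := add_le_add h1 h2
        _ ≤ (1 - θ) * (R + δ) + δ / 2 := by nlinarith
    have hnorm : ‖∫ t, ρ t * (u (x - t) - w x)‖ ≤ ∫ t, ρ t * ε :=
      norm_integral_le_of_norm_le (hint _ continuous_const)
        (Filter.Eventually.of_forall fun t => by rw [Real.norm_eq_abs]; exact hb t)
    rw [Real.norm_eq_abs] at hnorm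
    calc |∫ t, ρ t * (u (x - t) - w x)| ≤ ∫ t, ρ t * ε := hnorm
    _ = ε := by rw [integral_mul_const, hρ, φb.integral_normed, one_mul]


/-- Lemma 5: every nonnegative concave function on `[a,b]` (continuous up to
the endpoints) is the uniform limit on `[a,b]` of a sequence of nonnegative
concave `C²` functions. -/
theorem concave_smooth_approximation
    (a b : ℝ) (hab : a < b) (w : ℝ → ℝ)
    (hw0 : ∀ x ∈ Set.Icc a b, 0 ≤ w x)
    (hwconc : ConcaveOn ℝ (Set.Icc a b) w)
    (hwcont : ContinuousOn w (Set.Icc a b)) :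
    ∃ W : ℕ → ℝ → ℝ,
      (∀ n : ℕ, ConcaveOn ℝ (Set.Icc a b) (W n) ∧
        (∀ x ∈ Set.Icc a b, 0 ≤ W n x) ∧
        ContDiffOn ℝ 2 (W n) (Set.Icc a b)) ∧
      TendstoUniformlyOn W w Filter.atTop (Set.Icc a b) := by
  set R : ℝ := (b - a) / 2 with hR
  have hR0 : 0 < R := by rw [hR]; linarith
  have key : ∀ n : ℕ, ∃ W : ℝ → ℝ, ConcaveOn ℝ (Set.Icc a b) W ∧
      (∀ x ∈ Set.Icc a b, 0 ≤ W x) ∧ ContDiffOn ℝ 2 W (Set.Icc a b) ∧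
      ∀ ε : ℝ, (∀ p ∈ Set.Icc a b, ∀ q ∈ Set.Icc a b,
          |p - q| ≤ 3 * R * (1 / ((n : ℝ) + 1)) → |w p - w q| ≤ ε) →
        ∀ x ∈ Set.Icc a b, |W x - w x| ≤ ε := by
    intro n
    set s : ℝ := 1 / ((n : ℝ) + 1) with hs
    have hn0 : (0:ℝ) ≤ (n : ℝ) := Nat.cast_nonneg n
    have hs0 : 0 < s := by rw [hs]; positivity
    have hs1 : s ≤ 1 := by
      rw [hs, div_le_one (by positivity)]; linarith
    obtain ⟨W, h1, h2, h3, h4⟩ := aux_smooth a b hab w hw0 hwconc hwcont (1 - s) (R * s)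
      (by linarith) (by linarith) (by positivity)
      (by rw [← hR]; nlinarith [sq_nonneg s])
    refine ⟨W, h1, h2, h3, ?_⟩
    intro ε hmod
    apply h4
    intro p hp q hq hpq
    apply hmod p hp q hq
    refine hpq.trans ?_
    rw [← hR]
    nlinarith [mul_nonneg (mul_nonneg hR0.le hs0.le) (sub_nonneg.mpr hs1)]
  choose W hW using key
  refine ⟨W, fun n => ⟨(hW n).1, (hW n).2.1, (hW n).2.2.1⟩, ?_⟩
  rw [Metric.tendstoUniformlyOn_iff]
  intro ε hε
  have hucw : UniformContinuousOn w (Set.Icc a b) :=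
    isCompact_Icc.uniformContinuousOn_of_continuous hwcont
  rw [Metric.uniformContinuousOn_iff] at hucw
  obtain ⟨d, hd0, hd⟩ := hucw (ε / 2) (by linarith)
  obtain ⟨N, hN⟩ := exists_nat_gt (3 * R / d)
  rw [Filter.eventually_atTop]
  refine ⟨N, fun n hn x hx => ?_⟩
  have hbnd : |W n x - w x| ≤ ε / 2 := by
    refine (hW n).2.2.2 (ε / 2) ?_ x hx
    intro p hp q hq hpq
    have hnN : (N : ℝ) ≤ (n : ℝ) := Nat.cast_le.mpr hn
    have hlt : 3 * R * (1 / ((n : ℝ) + 1)) < d := by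
      rw [div_lt_iff₀ hd0] at hN
      rw [mul_one_div, div_lt_iff₀ (by positivity : (0:ℝ) < (n : ℝ) + 1)]
      nlinarith
    have hdist : dist p q < d := by
      rw [Real.dist_eq]; exact lt_of_le_of_lt hpq hlt
    have := hd p hp q hq hdist
    rw [Real.dist_eq] at this
    linarith
  rw [Real.dist_eq]
  have habs : |w x - W n x| = |W n x - w x| := abs_sub_comm _ _
  linarith [habs ▸ hbnd]
end

section
/- Let a < b be real numbers, let w : [a,b] → [0,∞) be a concave function, and let f ∈ C²[a,b] satisfy f(a) = f(b) = 0. Then ∫ₐᵇ w(x) f'(x)² dx ≤ − ∫ₐᵇ w(x) f(x) f''(x) dx. -/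
open Set MeasureTheory

private lemma concave_le_bound {a b : ℝ} {w : ℝ → ℝ}
    (hw0 : ∀ x ∈ Set.Icc a b, 0 ≤ w x)
    (hwconc : ConcaveOn ℝ (Set.Icc a b) w) {x : ℝ} (hx : x ∈ Set.Icc a b) :
    w x ≤ 2 * w ((a + b) / 2) := by
  have hy : a + b - x ∈ Set.Icc a b := ⟨by linarith [hx.2], by linarith [hx.1]⟩
  have h := hwconc.2 hx hy (by norm_num : (0:ℝ) ≤ 1/2) (by norm_num : (0:ℝ) ≤ 1/2)
    (by norm_num)
  simp only [smul_eq_mul] at h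
  have hyy : (1/2 : ℝ) * x + (1/2 : ℝ) * (a + b - x) = (a + b)/2 := by ring
  rw [hyy] at h
  have h0 := hw0 _ hy
  linarith

private lemma integrable_mul_of_bound {a b : ℝ} (hab : a ≤ b) {w g : ℝ → ℝ} (B : ℝ)
    (hwB : ∀ x ∈ Set.Ioo a b, |w x| ≤ B)
    (hwc : ContinuousOn w (Set.Ioo a b))
    (hg : ContinuousOn g (Set.Icc a b)) :
    IntervalIntegrable (fun x => w x * g x) MeasureTheory.volume a b := by
  obtain ⟨C, hC⟩ := isCompact_Icc.exists_bound_of_continuousOn hg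
  rw [intervalIntegrable_iff_integrableOn_Ioo_of_le hab]
  have hmeas : MeasureTheory.AEStronglyMeasurable (fun x => w x * g x)
      (MeasureTheory.volume.restrict (Set.Ioo a b)) :=
    (hwc.aestronglyMeasurable measurableSet_Ioo).mul
      ((hg.mono Set.Ioo_subset_Icc_self).aestronglyMeasurable measurableSet_Ioo)
  refine MeasureTheory.Integrable.mono' (g := fun _ => B * C)
    (MeasureTheory.integrableOn_const measure_Ioo_lt_top.ne) hmeas ?_
  filter_upwards [MeasureTheory.ae_restrict_mem measurableSet_Ioo] with x hx
  have h1 := hwB x hx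
  have h2 := hC x (Set.Ioo_subset_Icc_self hx)
  rw [Real.norm_eq_abs] at h2 ⊢
  rw [abs_mul]
  exact mul_le_mul h1 h2 (abs_nonneg _) (le_trans (abs_nonneg _) h1)

private lemma chord_le_concave {a b : ℝ} {w : ℝ → ℝ}
    (hwconc : ConcaveOn ℝ (Set.Icc a b) w) {u v t : ℝ}
    (hu : u ∈ Set.Icc a b) (hv : v ∈ Set.Icc a b) (huv : u < v) (ht : t ∈ Set.Icc u v) :
    w u + (w v - w u) / (v - u) * (t - u) ≤ w t := by
  have hvu : 0 < v - u := by linarith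
  have h1 : 0 ≤ (v - t)/(v - u) := div_nonneg (by linarith [ht.2]) hvu.le
  have h2 : 0 ≤ (t - u)/(v - u) := div_nonneg (by linarith [ht.1]) hvu.le
  have h3 : (v - t)/(v - u) + (t - u)/(v - u) = 1 := by field_simp; ring
  have h := hwconc.2 hu hv h1 h2 h3
  simp only [smul_eq_mul] at h
  have h4 : (v - t)/(v - u) * u + (t - u)/(v - u) * v = t := by field_simp; ring
  rw [h4] at h
  have h5 : w u + (w v - w u)/(v - u)*(t - u) = (v - t)/(v - u) * w u + (t - u)/(v - u) * w v := by
    field_simp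
    ring
  rw [h5]
  exact h

private lemma core_ineq (a b : ℝ) (hab : a < b) (w H H' H'' : ℝ → ℝ)
    (hw0 : ∀ x ∈ Set.Icc a b, 0 ≤ w x)
    (hwconc : ConcaveOn ℝ (Set.Icc a b) w)
    (hH' : ∀ x ∈ Set.Icc a b, HasDerivWithinAt H (H' x) (Set.Icc a b) x)
    (hH'' : ∀ x ∈ Set.Icc a b, HasDerivWithinAt H' (H'' x) (Set.Icc a b) x)
    (hH''c : ContinuousOn H'' (Set.Icc a b))
    (hHpos : ∀ x ∈ Set.Icc a b, 0 ≤ H x)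
    (hHa : H a = 0) (hHb : H b = 0) (hH'a : H' a = 0) (hH'b : H' b = 0) :
    ∫ x in a..b, w x * H'' x ≤ 0 := by
  have hmid : (a + b) / 2 ∈ Set.Icc a b := ⟨by linarith, by linarith⟩
  set B := 2 * w ((a + b) / 2) with hBdef
  have hB : ∀ x ∈ Set.Icc a b, w x ≤ B := fun x hx => concave_le_bound hw0 hwconc hx
  have hB0 : 0 ≤ B := by have := hw0 _ hmid; positivity
  obtain ⟨M, hM⟩ := isCompact_Icc.exists_bound_of_continuousOn hH''c
  have hM0 : 0 ≤ M := le_trans (norm_nonneg _) (hM a ⟨le_refl a, hab.le⟩)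
  have hHc : ContinuousOn H (Set.Icc a b) := fun x hx => (hH' x hx).continuousWithinAt
  have hH'c : ContinuousOn H' (Set.Icc a b) := fun x hx => (hH'' x hx).continuousWithinAt
  have hwc : ContinuousOn w (Set.Ioo a b) :=
    (hwconc.subset Set.Ioo_subset_Icc_self (convex_Ioo a b)).continuousOn isOpen_Ioo
  have hwB' : ∀ x ∈ Set.Ioo a b, |w x| ≤ B := fun x hx => by
    rw [abs_of_nonneg (hw0 x (Set.Ioo_subset_Icc_self hx))]
    exact hB x (Set.Ioo_subset_Icc_self hx)
  have hint : IntervalIntegrable (fun x => w x * H'' x) MeasureTheory.volume a b :=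
    integrable_mul_of_bound hab.le B hwB' hwc hH''c
  -- the key estimate for each n
  have key : ∀ n : ℕ, 0 < n → (∫ x in a..b, w x * H'' x) ≤ 3 * M * B * ((b - a) / n) := by
    intro n hn
    have hn' : (0:ℝ) < n := Nat.cast_pos.2 hn
    set Δ := (b - a) / n with hΔdef
    have hΔ : 0 < Δ := div_pos (by linarith) hn'
    set X : ℕ → ℝ := fun i => a + i * Δ with hXdef
    have hX0 : X 0 = a := by simp [hXdef]
    have hXn : X n = b := by
      simp only [hXdef, hΔdef]
      field_simp
      ring
    have hXstep : ∀ i : ℕ, X (i + 1) = X i + Δ := by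
      intro i; simp only [hXdef]; push_cast; ring
    have hXdiff : ∀ i : ℕ, X (i + 1) - X i = Δ := fun i => by rw [hXstep]; ring
    have hXlt : ∀ i : ℕ, X i < X (i + 1) := fun i => by rw [hXstep]; linarith
    have hXmono : ∀ i j : ℕ, i ≤ j → X i ≤ X j := by
      intro i j h
      simp only [hXdef]
      have : (i:ℝ) ≤ (j:ℝ) := Nat.cast_le.2 h
      nlinarith
    have hXmem : ∀ i, i ≤ n → X i ∈ Set.Icc a b := fun i h =>
      ⟨by rw [← hX0]; exact hXmono 0 i (Nat.zero_le i), by rw [← hXn]; exact hXmono i n h⟩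
    have hsub : ∀ i, i < n → Set.Icc (X i) (X (i + 1)) ⊆ Set.Icc a b := fun i h =>
      Set.Icc_subset_Icc (hXmem i h.le).1 (hXmem (i + 1) h).2
    set s : ℕ → ℝ := fun i => (w (X (i + 1)) - w (X i)) / Δ with hsdef
    have hslope : ∀ i : ℕ, i + 2 ≤ n → s (i + 1) ≤ s i := by
      intro i h
      have h1 := hwconc.slope_anti_adjacent (hXmem i (by omega)) (hXmem (i + 2) h)
        (hXlt i) (hXlt (i + 1))
      simp only [hsdef]
      rw [show (i:ℕ) + 2 = (i + 1) + 1 from rfl] at h1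
      rw [hXdiff, hXdiff] at h1
      exact h1
    have hchord : ∀ i, i < n → ∀ t ∈ Set.Icc (X i) (X (i + 1)),
        w (X i) + s i * (t - X i) ≤ w t := by
      intro i hi t ht
      have h := chord_le_concave hwconc (hXmem i hi.le) (hXmem (i + 1) hi) (hXlt i) ht
      rw [hXdiff] at h
      exact h
    set c : ℕ → ℝ := fun i => if i = 0 then B else (s (i - 1) - s i) * Δ with hcdef
    have hc0' : c 0 = B := by simp [hcdef]
    have hcs : ∀ j : ℕ, c (j + 1) = (s j - s (j + 1)) * Δ := fun j => by simp [hcdef]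
    have hc0 : ∀ i, i < n → 0 ≤ c i := by
      intro i hi
      rcases i with _ | j
      · rw [hc0']; exact hB0
      ·
        rw [hcs]
        have hs := hslope j (by omega)
        have : 0 ≤ s j - s (j + 1) := by linarith
        exact mul_nonneg this hΔ.le
    have hupper : ∀ i, i < n → ∀ t ∈ Set.Icc (X i) (X (i + 1)),
        w t - (w (X i) + s i * (t - X i)) ≤ c i := by
      intro i hi
      rcases i with _ | j
      · intro t ht
        have htab : t ∈ Set.Icc a b := hsub 0 hi ht
        rw [hc0']
        have hL : 0 ≤ w (X 0) + s 0 * (t - X 0) := by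
          have e : w (X 0) + s 0 * (t - X 0)
              = ((X 1 - t) * w (X 0) + (t - X 0) * w (X 1)) / Δ := by
            simp only [hsdef]
            rw [← hXdiff 0]
            have h10 : X 1 - X 0 ≠ 0 := by rw [hXdiff 0]; exact hΔ.ne'
            field_simp
            ring
          rw [e]
          apply div_nonneg _ hΔ.le
          have h1 : 0 ≤ X 1 - t := by linarith [ht.2]
          have h2 : 0 ≤ t - X 0 := by linarith [ht.1]
          have h3 := hw0 _ (hXmem 0 (by omega))
          have h4 := hw0 _ (hXmem 1 (by omega))
          positivity
        have := hB t htab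
        linarith
      · intro t ht
        have htab : t ∈ Set.Icc a b := hsub (j + 1) hi ht
        rw [hcs]
        have hsj : s (j + 1) ≤ s j := hslope j (by omega)
        rcases eq_or_lt_of_le ht.1 with heq | hlt
        · rw [← heq]
          simp only [sub_self, mul_zero, add_zero, sub_self]
          exact mul_nonneg (by linarith) hΔ.le
        · have hj1 := hwconc.slope_anti_adjacent (hXmem j (by omega)) htab (hXlt j) hlt
          rw [hXdiff] at hj1
          have htpos : 0 < t - X (j + 1) := by linarith
          have h2 : w t - w (X (j + 1)) ≤ s j * (t - X (j + 1)) := by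
            rw [div_le_iff₀ htpos] at hj1
            simpa only [hsdef] using hj1
          have h3 : t - X (j + 1) ≤ Δ := by
            have := ht.2
            rw [hXstep (j + 1)] at this
            linarith
          nlinarith [mul_le_mul_of_nonneg_left h3 (sub_nonneg.2 hsj)]
    have haffcont : ∀ i : ℕ, Continuous (fun t : ℝ => w (X i) + s i * (t - X i)) :=
      fun i => continuous_const.add (continuous_const.mul (continuous_id.sub continuous_const))
    have hintL : ∀ i, i < n → IntervalIntegrable (fun t => (w (X i) + s i * (t - X i)) * H'' t)
        MeasureTheory.volume (X i) (X (i + 1)) := by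
      intro i hi
      apply ContinuousOn.intervalIntegrable
      apply ContinuousOn.mul (haffcont i).continuousOn
      exact hH''c.mono (by rw [Set.uIcc_of_le (hXlt i).le]; exact hsub i hi)
    have hFTC : ∀ i, i < n →
        (∫ t in X i..X (i + 1), (w (X i) + s i * (t - X i)) * H'' t)
          = (w (X (i + 1)) * H' (X (i + 1)) - w (X i) * H' (X i))
            - s i * (H (X (i + 1)) - H (X i)) := by
      intro i hi
      have hcontF : ContinuousOn
          (fun t => (w (X i) + s i * (t - X i)) * H' t - s i * H t)
          (Set.Icc (X i) (X (i + 1))) := by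
        apply ContinuousOn.sub
        · exact (haffcont i).continuousOn.mul (hH'c.mono (hsub i hi))
        · exact continuousOn_const.mul (hHc.mono (hsub i hi))
      have hderivF : ∀ t ∈ Set.Ioo (X i) (X (i + 1)),
          HasDerivWithinAt (fun t => (w (X i) + s i * (t - X i)) * H' t - s i * H t)
            ((w (X i) + s i * (t - X i)) * H'' t) (Set.Ioi t) t := by
        intro t ht
        have htab : t ∈ Set.Ioo a b :=
          ⟨lt_of_le_of_lt (hXmem i hi.le).1 ht.1, lt_of_lt_of_le ht.2 (hXmem (i + 1) hi).2⟩
        have hnbd : Set.Icc a b ∈ nhds t := Icc_mem_nhds htab.1 htab.2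
        have h1 : HasDerivAt H (H' t) t :=
          (hH' t (Set.Ioo_subset_Icc_self htab)).hasDerivAt hnbd
        have h2 : HasDerivAt H' (H'' t) t :=
          (hH'' t (Set.Ioo_subset_Icc_self htab)).hasDerivAt hnbd
        have haff : HasDerivAt (fun u : ℝ => w (X i) + s i * (u - X i)) (s i) t := by
          have := (((hasDerivAt_id t).sub_const (X i)).const_mul (s i)).const_add (w (X i))
          simpa using this
        have hd := (haff.mul h2).sub (h1.const_mul (s i))
        have heq : s i * H' t + (w (X i) + s i * (t - X i)) * H'' t - s i * H' t
            = (w (X i) + s i * (t - X i)) * H'' t := by ring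
        rw [heq] at hd
        exact hd.hasDerivWithinAt
      have heq := intervalIntegral.integral_eq_sub_of_hasDeriv_right_of_le (hXlt i).le
        hcontF hderivF (hintL i hi)
      rw [heq]
      have e2 : w (X i) + s i * (X (i + 1) - X i) = w (X (i + 1)) := by
        rw [hXdiff]
        simp only [hsdef]
        field_simp
        ring
      simp only [sub_self, mul_zero, add_zero]
      rw [e2]
      ring
    have hone : ∀ i, i < n → (∫ t in X i..X (i + 1), w t * H'' t)
        ≤ ((w (X (i + 1)) * H' (X (i + 1)) - w (X i) * H' (X i))
            - s i * (H (X (i + 1)) - H (X i))) + Δ * (c i * M) := by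
      intro i hi
      have hintW : IntervalIntegrable (fun t => w t * H'' t)
          MeasureTheory.volume (X i) (X (i + 1)) :=
        hint.mono_set (by
          rw [Set.uIcc_of_le (hXlt i).le, Set.uIcc_of_le hab.le]; exact hsub i hi)
      have hintR : IntervalIntegrable
          (fun t => (w (X i) + s i * (t - X i)) * H'' t + c i * M)
          MeasureTheory.volume (X i) (X (i + 1)) :=
        (hintL i hi).add intervalIntegrable_const
      have hpt : ∀ t ∈ Set.Icc (X i) (X (i + 1)), w t * H'' t
          ≤ (w (X i) + s i * (t - X i)) * H'' t + c i * M := by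
        intro t ht
        have h1 := hchord i hi t ht
        have h2 := hupper i hi t ht
        have h3 : |H'' t| ≤ M := by
          have := hM t (hsub i hi ht); rwa [Real.norm_eq_abs] at this
        have h4 : (w t - (w (X i) + s i * (t - X i))) * H'' t ≤ c i * M := by
          calc (w t - (w (X i) + s i * (t - X i))) * H'' t
              ≤ (w t - (w (X i) + s i * (t - X i))) * |H'' t| :=
                mul_le_mul_of_nonneg_left (le_abs_self _) (by linarith)
            _ ≤ c i * M := mul_le_mul h2 h3 (abs_nonneg _) (hc0 i hi)
        nlinarith [h4]
      have hmono := intervalIntegral.integral_mono_on (hXlt i).le hintW hintR hpt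
      rw [intervalIntegral.integral_add (hintL i hi) intervalIntegrable_const,
        intervalIntegral.integral_const, hXdiff i, smul_eq_mul, hFTC i hi] at hmono
      exact hmono
    have hsplit : (∫ x in a..b, w x * H'' x)
        = ∑ i ∈ Finset.range n, ∫ t in X i..X (i + 1), w t * H'' t := by
      have h := intervalIntegral.sum_integral_adjacent_intervals
        (a := X) (n := n) (f := fun t => w t * H'' t) (μ := MeasureTheory.volume)
        (fun i hi => hint.mono_set (by
          rw [Set.uIcc_of_le (hXlt i).le, Set.uIcc_of_le hab.le]; exact hsub i hi))
      rw [hX0, hXn] at h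
      exact h.symm
    have hsum1 : ∑ i ∈ Finset.range n,
        (w (X (i + 1)) * H' (X (i + 1)) - w (X i) * H' (X i)) = 0 := by
      rw [Finset.sum_range_sub (fun i => w (X i) * H' (X i))]
      rw [hX0, hXn, hH'a, hH'b]
      ring
    have hsum2 : 0 ≤ ∑ i ∈ Finset.range n, s i * (H (X (i + 1)) - H (X i)) := by
      have habel := Finset.sum_range_by_parts s (fun i => H (X (i + 1)) - H (X i)) n
      simp only [smul_eq_mul] at habel
      have hG : ∀ k : ℕ, ∑ j ∈ Finset.range k, (H (X (j + 1)) - H (X j)) = H (X k) := by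
        intro k
        rw [Finset.sum_range_sub (fun j => H (X j)), hX0, hHa, sub_zero]
      simp only [hG] at habel
      rw [habel, hXn, hHb, mul_zero, zero_sub]
      rw [neg_nonneg]
      apply Finset.sum_nonpos
      intro i hi
      have hi' := Finset.mem_range.1 hi
      have hs : s (i + 1) ≤ s i := hslope i (by omega)
      have hH := hHpos _ (hXmem (i + 1) (by omega))
      exact mul_nonpos_of_nonpos_of_nonneg (by linarith) hH
    have hsum3 : ∑ i ∈ Finset.range n, c i ≤ 3 * B := by
      obtain ⟨m, rfl⟩ := Nat.exists_eq_succ_of_ne_zero hn.ne'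
      rw [Finset.sum_range_succ']
      simp only [hcs, hc0']
      rw [← Finset.sum_mul, Finset.sum_range_sub' s m]
      have h1 : s 0 * Δ ≤ B := by
        simp only [hsdef]
        rw [div_mul_cancel₀ _ hΔ.ne']
        have ha1 := hB _ (hXmem 1 (by omega))
        have ha2 := hw0 _ (hXmem 0 (by omega))
        linarith
      have h2 : -(s m * Δ) ≤ B := by
        simp only [hsdef]
        rw [div_mul_cancel₀ _ hΔ.ne']
        have ha1 := hB _ (hXmem m (by omega))
        have ha2 := hw0 _ (hXmem (m + 1) (by omega))
        linarith
      nlinarith [h1, h2]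
    calc (∫ x in a..b, w x * H'' x)
        = ∑ i ∈ Finset.range n, ∫ t in X i..X (i + 1), w t * H'' t := hsplit
      _ ≤ ∑ i ∈ Finset.range n, (((w (X (i + 1)) * H' (X (i + 1)) - w (X i) * H' (X i))
            - s i * (H (X (i + 1)) - H (X i))) + Δ * (c i * M)) :=
          Finset.sum_le_sum (fun i hi => hone i (Finset.mem_range.1 hi))
      _ = (∑ i ∈ Finset.range n, (w (X (i + 1)) * H' (X (i + 1)) - w (X i) * H' (X i)))
            - (∑ i ∈ Finset.range n, s i * (H (X (i + 1)) - H (X i)))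
            + (Δ * M) * (∑ i ∈ Finset.range n, c i) := by
          rw [Finset.sum_add_distrib, Finset.sum_sub_distrib, Finset.mul_sum]
          congr 1
          apply Finset.sum_congr rfl
          intro i _
          ring
      _ ≤ 0 - 0 + (Δ * M) * (3 * B) := by
          have hΔM : 0 ≤ Δ * M := mul_nonneg hΔ.le hM0
          have := mul_le_mul_of_nonneg_left hsum3 hΔM
          rw [hsum1]
          linarith [hsum2]
      _ = 3 * M * B * ((b - a) / n) := by rw [hΔdef]; ring
  -- conclude
  by_contra hcon
  push_neg at hcon
  set I := ∫ x in a..b, w x * H'' x with hIdef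
  obtain ⟨n, hnlt⟩ := exists_nat_gt (3 * M * B * (b - a) / I)
  have hge0 : (0:ℝ) ≤ 3 * M * B * (b - a) / I := by
    apply div_nonneg _ hcon.le
    have : (0:ℝ) ≤ b - a := by linarith
    positivity
  have hn' : (0:ℝ) < n := lt_of_le_of_lt hge0 hnlt
  have hn : 0 < n := Nat.cast_pos.1 hn'
  have hkey := key n hn
  have : 3 * M * B * (b - a) < I * n := by
    have := (div_lt_iff₀ hcon).1 hnlt
    linarith [this]
  have : 3 * M * B * ((b - a) / n) < I := by
    rw [mul_div_assoc'] at *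
    rw [div_lt_iff₀ hn']
    linarith
  linarith

/-- Inequality (3.7)/(3.9): for a concave weight `w : [a,b] → [0,∞)` and
`f ∈ C²[a,b]` with `f a = f b = 0`, `∫ₐᵇ w f'² ≤ − ∫ₐᵇ w f f''`. -/
theorem first_inequality
    (a b : ℝ) (hab : a < b) (w f f' f'' : ℝ → ℝ)
    (hw0 : ∀ x ∈ Set.Icc a b, 0 ≤ w x)
    (hwconc : ConcaveOn ℝ (Set.Icc a b) w)
    (hf' : ∀ x ∈ Set.Icc a b, HasDerivWithinAt f (f' x) (Set.Icc a b) x)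
    (hf'' : ∀ x ∈ Set.Icc a b, HasDerivWithinAt f' (f'' x) (Set.Icc a b) x)
    (hf''cont : ContinuousOn f'' (Set.Icc a b))
    (hfa : f a = 0) (hfb : f b = 0) :
    ∫ x in a..b, w x * f' x ^ 2 ≤ - ∫ x in a..b, w x * (f x * f'' x) := by
  have hfc : ContinuousOn f (Set.Icc a b) := fun x hx => (hf' x hx).continuousWithinAt
  have hf'c : ContinuousOn f' (Set.Icc a b) := fun x hx => (hf'' x hx).continuousWithinAt
  have hH' : ∀ x ∈ Set.Icc a b,
      HasDerivWithinAt (fun y => f y ^ 2) (2 * (f x * f' x)) (Set.Icc a b) x := by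
    intro x hx
    have h := (hf' x hx).pow 2
    exact h.congr_deriv (by norm_num; ring)
  have hH'' : ∀ x ∈ Set.Icc a b,
      HasDerivWithinAt (fun y => 2 * (f y * f' y))
        (2 * (f' x ^ 2 + f x * f'' x)) (Set.Icc a b) x := by
    intro x hx
    have h := ((hf' x hx).mul (hf'' x hx)).const_mul (2:ℝ)
    exact h.congr_deriv (by ring)
  have hH''c : ContinuousOn (fun y => 2 * (f' y ^ 2 + f y * f'' y)) (Set.Icc a b) :=
    continuousOn_const.mul ((hf'c.pow 2).add (hfc.mul hf''cont))
  have hcore := core_ineq a b hab w (fun y => f y ^ 2) (fun y => 2 * (f y * f' y))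
    (fun y => 2 * (f' y ^ 2 + f y * f'' y)) hw0 hwconc hH' hH'' hH''c
    (fun x _ => sq_nonneg (f x)) (by simp [hfa]) (by simp [hfb]) (by simp [hfa]) (by simp [hfb])
  have hmid : (a + b) / 2 ∈ Set.Icc a b := ⟨by linarith, by linarith⟩
  set B := 2 * w ((a + b) / 2) with hBdef
  have hB : ∀ x ∈ Set.Icc a b, w x ≤ B := fun x hx => concave_le_bound hw0 hwconc hx
  have hwc : ContinuousOn w (Set.Ioo a b) :=
    (hwconc.subset Set.Ioo_subset_Icc_self (convex_Ioo a b)).continuousOn isOpen_Ioo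
  have hwB' : ∀ x ∈ Set.Ioo a b, |w x| ≤ B := fun x hx => by
    rw [abs_of_nonneg (hw0 x (Set.Ioo_subset_Icc_self hx))]
    exact hB x (Set.Ioo_subset_Icc_self hx)
  have int1 : IntervalIntegrable (fun x => w x * f' x ^ 2) MeasureTheory.volume a b :=
    integrable_mul_of_bound hab.le B hwB' hwc (hf'c.pow 2)
  have int2 : IntervalIntegrable (fun x => w x * (f x * f'' x)) MeasureTheory.volume a b :=
    integrable_mul_of_bound hab.le B hwB' hwc (hfc.mul hf''cont)
  simp only [show ∀ x, w x * (2 * (f' x ^ 2 + f x * f'' x))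
      = 2 * (w x * f' x ^ 2 + w x * (f x * f'' x)) from fun x => by ring] at hcore
  rw [intervalIntegral.integral_const_mul] at hcore
  rw [intervalIntegral.integral_add int1 int2] at hcore
  linarith
end

section
/- Let W : [0,π] → ℝ be a concave function (extended continuously to the endpoints). If ∫₀^π W(t) cos²(t) dt = ∫₀^π W(t) sin²(t) dt, then W is linear (affine) on [0,π], i.e., there exist real constants α, β with W(t) = αt + β for all t ∈ [0,π]. -/
open Real Set intervalIntegral MeasureTheory

private lemma int_cos2 : ∫ t in (0:ℝ)..Real.pi, Real.cos (2 * t) = 0 := by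
  rw [intervalIntegral.integral_comp_mul_left Real.cos (two_ne_zero)]
  simp [Real.sin_two_pi]

private lemma hd2 (t : ℝ) : HasDerivAt (fun s : ℝ => 2 * s) 2 t := by
  simpa using (hasDerivAt_id t).const_mul 2

private lemma int_t_cos2 : ∫ t in (0:ℝ)..Real.pi, t * Real.cos (2 * t) = 0 := by
  have key : ∀ t ∈ Set.uIcc (0:ℝ) Real.pi,
      HasDerivAt (fun s => s * Real.sin (2 * s) / 2 + Real.cos (2 * s) / 4)
        (t * Real.cos (2 * t)) t := by
    intro t _
    have hs : HasDerivAt (fun s => Real.sin (2 * s)) (2 * Real.cos (2 * t)) t := by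
      simpa [Function.comp_def, mul_comm] using (Real.hasDerivAt_sin (2 * t)).comp t (hd2 t)
    have hc : HasDerivAt (fun s => Real.cos (2 * s)) (-(2 * Real.sin (2 * t))) t := by
      simpa [Function.comp_def, mul_comm] using (Real.hasDerivAt_cos (2 * t)).comp t (hd2 t)
    have := (((hasDerivAt_id t).mul hs).div_const 2).add (hc.div_const 4)
    refine this.congr_deriv ?_
    simp [id]
    ring
  rw [intervalIntegral.integral_eq_sub_of_hasDerivAt key
    ((Continuous.intervalIntegrable (by continuity) 0 Real.pi))]
  simp [Real.sin_two_pi, Real.cos_two_pi]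

-- generic concavity lemmas, multiplied form
private lemma conc_mid (W : ℝ → ℝ) {s : Set ℝ} (hW : ConcaveOn ℝ s W) {p q t : ℝ}
    (hp : p ∈ s) (hq : q ∈ s) (hpq : p < q) (ht : t ∈ Set.Icc p q) :
    (q - t) * W p + (t - p) * W q ≤ (q - p) * W t := by
  have hd : (0:ℝ) < q - p := by linarith
  have ha0 : 0 ≤ (q - t) / (q - p) := by apply div_nonneg <;> linarith [ht.2]
  have hb0 : 0 ≤ (t - p) / (q - p) := by apply div_nonneg <;> linarith [ht.1]
  have hab : (q - t) / (q - p) + (t - p) / (q - p) = 1 := by field_simp; ring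
  have hcomb : ((q - t) / (q - p)) * p + ((t - p) / (q - p)) * q = t := by
    field_simp; ring
  have hcc := hW.2 hp hq ha0 hb0 hab
  rw [smul_eq_mul, smul_eq_mul, smul_eq_mul, smul_eq_mul, hcomb] at hcc
  have := mul_le_mul_of_nonneg_left hcc hd.le
  have e1 : (q - p) * ((q - t) / (q - p) * W p + (t - p) / (q - p) * W q)
      = (q - t) * W p + (t - p) * W q := by field_simp
  linarith [e1 ▸ this]

private lemma conc_left (W : ℝ → ℝ) {s : Set ℝ} (hW : ConcaveOn ℝ s W) {p q t : ℝ}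
    (hq : q ∈ s) (hpq : p < q) (ht : t ∈ s) (htp : t < p) :
    (q - p) * W t ≤ (q - t) * W p - (p - t) * W q := by
  have hqt : (0:ℝ) < q - t := by linarith
  have ha0 : 0 ≤ (q - p) / (q - t) := by apply div_nonneg <;> linarith
  have hb0 : 0 ≤ (p - t) / (q - t) := by apply div_nonneg <;> linarith
  have hab : (q - p) / (q - t) + (p - t) / (q - t) = 1 := by field_simp; ring
  have hcomb : ((q - p) / (q - t)) * t + ((p - t) / (q - t)) * q = p := by
    field_simp; ring
  have hcc := hW.2 ht hq ha0 hb0 hab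
  rw [smul_eq_mul, smul_eq_mul, smul_eq_mul, smul_eq_mul, hcomb] at hcc
  have := mul_le_mul_of_nonneg_left hcc hqt.le
  have e1 : (q - t) * ((q - p) / (q - t) * W t + (p - t) / (q - t) * W q)
      = (q - p) * W t + (p - t) * W q := by field_simp
  rw [e1] at this
  linarith

private lemma conc_right (W : ℝ → ℝ) {s : Set ℝ} (hW : ConcaveOn ℝ s W) {p q t : ℝ}
    (hp : p ∈ s) (hpq : p < q) (ht : t ∈ s) (hqt : q < t) :
    (q - p) * W t ≤ (t - p) * W q - (t - q) * W p := by
  have htp : (0:ℝ) < t - p := by linarith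
  have ha0 : 0 ≤ (t - q) / (t - p) := by apply div_nonneg <;> linarith
  have hb0 : 0 ≤ (q - p) / (t - p) := by apply div_nonneg <;> linarith
  have hab : (t - q) / (t - p) + (q - p) / (t - p) = 1 := by field_simp; ring
  have hcomb : ((t - q) / (t - p)) * p + ((q - p) / (t - p)) * t = q := by
    field_simp; ring
  have hcc := hW.2 hp ht ha0 hb0 hab
  rw [smul_eq_mul, smul_eq_mul, smul_eq_mul, smul_eq_mul, hcomb] at hcc
  have := mul_le_mul_of_nonneg_left hcc htp.le
  have e1 : (t - p) * ((t - q) / (t - p) * W p + (q - p) / (t - p) * W t)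
      = (t - q) * W p + (q - p) * W t := by field_simp
  rw [e1] at this
  linarith

/-- If `W` is concave on `[0,π]` (continuous up to the endpoints) and
`∫₀^π W cos² = ∫₀^π W sin²`, then `W` is affine on `[0,π]`. -/
theorem concave_equal_moments_affine
    (W : ℝ → ℝ)
    (hWconc : ConcaveOn ℝ (Set.Icc 0 Real.pi) W)
    (hWcont : ContinuousOn W (Set.Icc 0 Real.pi))
    (h : ∫ t in (0:ℝ)..Real.pi, W t * Real.cos t ^ 2 =
         ∫ t in (0:ℝ)..Real.pi, W t * Real.sin t ^ 2) :
    ∃ α β : ℝ, ∀ t ∈ Set.Icc 0 Real.pi, W t = α * t + β := by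
  have hπ : (0:ℝ) < Real.pi := Real.pi_pos
  obtain ⟨p, q, hp, hq⟩ : ∃ p q : ℝ, p = Real.pi / 4 ∧ q = 3 * Real.pi / 4 :=
    ⟨_, _, rfl, rfl⟩
  have hpq : p < q := by rw [hp, hq]; linarith
  have hpmem : p ∈ Set.Icc (0:ℝ) Real.pi := by rw [hp]; constructor <;> linarith
  have hqmem : q ∈ Set.Icc (0:ℝ) Real.pi := by rw [hq]; constructor <;> linarith
  have hd : (0:ℝ) < q - p := by linarith
  obtain ⟨α, β, hAp, hAq⟩ : ∃ α β : ℝ, α * p + β = W p ∧ α * q + β = W q := by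
    refine ⟨(W q - W p) / (q - p), W p - (W q - W p) / (q - p) * p, by ring, ?_⟩
    field_simp
    ring
  refine ⟨α, β, fun t ht => ?_⟩
  -- key sign facts for g t := W t - (α t + β)
  have key1 : ∀ u ∈ Set.Icc p q, α * u + β ≤ W u := by
    intro u hu
    have h1 := conc_mid W hWconc hpmem hqmem hpq hu
    rw [← hAp, ← hAq] at h1
    have e1 : (q - u) * (α * p + β) + (u - p) * (α * q + β)
        = (q - p) * (α * u + β) := by ring
    exact (mul_le_mul_iff_right₀ hd).mp (by linarith)
  have key2 : ∀ u ∈ Set.Icc (0:ℝ) Real.pi, u ≤ p → W u ≤ α * u + β := by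
    intro u hu hup
    rcases eq_or_lt_of_le hup with he | hlt
    · rw [he, hAp]
    have h1 := conc_left W hWconc hqmem hpq hu hlt
    rw [← hAp, ← hAq] at h1
    have e1 : (q - u) * (α * p + β) - (p - u) * (α * q + β)
        = (q - p) * (α * u + β) := by ring
    exact (mul_le_mul_iff_right₀ hd).mp (by linarith)
  have key3 : ∀ u ∈ Set.Icc (0:ℝ) Real.pi, q ≤ u → W u ≤ α * u + β := by
    intro u hu huq
    rcases eq_or_lt_of_le huq with he | hlt
    · rw [← he, hAq]
    have h1 := conc_right W hWconc hpmem hpq hu hlt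
    rw [← hAp, ← hAq] at h1
    have e1 : (u - p) * (α * q + β) - (u - q) * (α * p + β)
        = (q - p) * (α * u + β) := by ring
    exact (mul_le_mul_iff_right₀ hd).mp (by linarith)
  -- sign of cos(2u)
  have cos_sign1 : ∀ u ∈ Set.Icc (0:ℝ) Real.pi, u ≤ p → 0 ≤ Real.cos (2 * u) := by
    intro u hu hup
    apply Real.cos_nonneg_of_mem_Icc
    rw [hp] at hup
    constructor <;> [linarith [hu.1]; linarith]
  have cos_sign2 : ∀ u ∈ Set.Icc p q, Real.cos (2 * u) ≤ 0 := by
    intro u hu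
    have h1 := hu.1; have h2 := hu.2
    rw [hp] at h1; rw [hq] at h2
    exact Real.cos_nonpos_of_pi_div_two_le_of_le (by linarith) (by linarith)
  have cos_sign3 : ∀ u ∈ Set.Icc (0:ℝ) Real.pi, q ≤ u → 0 ≤ Real.cos (2 * u) := by
    intro u hu huq
    rw [hq] at huq
    rw [← Real.cos_sub_two_pi]
    apply Real.cos_nonneg_of_mem_Icc
    constructor <;> [linarith; linarith [hu.2]]
  set f : ℝ → ℝ := fun u => -((W u - (α * u + β)) * Real.cos (2 * u)) with hf
  have hf_nonneg : ∀ u ∈ Set.Icc (0:ℝ) Real.pi, 0 ≤ f u := by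
    intro u hu
    simp only [hf, neg_nonneg]
    rcases le_or_gt u p with h1 | h1
    · exact mul_nonpos_of_nonpos_of_nonneg (by linarith [key2 u hu h1])
        (cos_sign1 u hu h1)
    rcases le_or_gt u q with h2 | h2
    · exact mul_nonpos_of_nonneg_of_nonpos (by linarith [key1 u ⟨h1.le, h2⟩])
        (cos_sign2 u ⟨h1.le, h2⟩)
    · exact mul_nonpos_of_nonpos_of_nonneg (by linarith [key3 u hu h2.le])
        (cos_sign3 u hu h2.le)
  have hcos2 : Continuous fun u : ℝ => Real.cos (2 * u) := by fun_prop
  have huIcc : Set.uIcc (0:ℝ) Real.pi = Set.Icc 0 Real.pi := Set.uIcc_of_le hπ.le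
  have hWint : ∀ (c : ℝ → ℝ), Continuous c →
      IntervalIntegrable (fun u => W u * c u) volume 0 Real.pi := fun c hc =>
    ContinuousOn.intervalIntegrable (by rw [huIcc]; exact hWcont.mul hc.continuousOn)
  have hWcos2 : ∫ u in (0:ℝ)..Real.pi, W u * Real.cos (2 * u) = 0 := by
    have heq : (fun u => W u * Real.cos (2 * u))
        = fun u => W u * Real.cos u ^ 2 - W u * Real.sin u ^ 2 := by
      funext u
      have h1 := Real.cos_two_mul u
      have h2 := Real.sin_sq_add_cos_sq u
      have h3 : Real.cos (2 * u) = Real.cos u ^ 2 - Real.sin u ^ 2 := by linarith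
      rw [h3]; ring
    rw [heq, intervalIntegral.integral_sub
      (hWint (fun u => Real.cos u ^ 2) (Real.continuous_cos.pow 2)) (hWint (fun u => Real.sin u ^ 2) (Real.continuous_sin.pow 2)), h,
      sub_self]
  have hfint : ∫ u in (0:ℝ)..Real.pi, f u = 0 := by
    have heq : f = fun u => -(W u * Real.cos (2 * u))
        + (α * (u * Real.cos (2 * u)) + β * Real.cos (2 * u)) := by
      funext u; simp only [hf]; ring
    have h1 : IntervalIntegrable (fun u => -(W u * Real.cos (2 * u))) volume 0 Real.pi :=
      (hWint _ hcos2).neg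
    have h2 : IntervalIntegrable (fun u : ℝ => α * (u * Real.cos (2 * u))) volume 0 Real.pi :=
      Continuous.intervalIntegrable (continuous_const.mul (continuous_id.mul hcos2)) 0 Real.pi
    have h3 : IntervalIntegrable (fun u : ℝ => β * Real.cos (2 * u)) volume 0 Real.pi :=
      Continuous.intervalIntegrable (continuous_const.mul hcos2) 0 Real.pi
    rw [heq, intervalIntegral.integral_add h1 (h2.add h3),
      intervalIntegral.integral_add h2 h3,
      intervalIntegral.integral_const_mul, intervalIntegral.integral_const_mul,
      intervalIntegral.integral_neg, int_cos2, int_t_cos2, hWcos2]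
    ring
  have hfcont : ContinuousOn f (Set.Icc 0 Real.pi) := by
    simp only [hf]
    exact ((hWcont.sub (by fun_prop)).mul hcos2.continuousOn).neg
  have hf0 : f t = 0 := by
    by_contra hne
    have hpos : 0 < f t := lt_of_le_of_ne (hf_nonneg t ht) (Ne.symm hne)
    have := intervalIntegral.integral_pos hπ hfcont
      (fun x hx => hf_nonneg x ⟨hx.1.le, hx.2⟩) ⟨t, ht, hpos⟩
    rw [hfint] at this
    exact lt_irrefl 0 this
  have hg0 : (W t - (α * t + β)) * Real.cos (2 * t) = 0 := by
    have := hf0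
    simp only [hf, neg_eq_zero] at this
    exact this
  rcases mul_eq_zero.mp hg0 with h1 | h1
  · linarith
  · rcases lt_trichotomy t p with h2 | h2 | h2
    · exfalso
      have : 0 < Real.cos (2 * t) := by
        apply Real.cos_pos_of_mem_Ioo
        rw [hp] at h2
        constructor <;> [linarith [ht.1]; linarith]
      linarith
    · rw [h2, ← hAp]
    rcases lt_trichotomy t q with h3 | h3 | h3
    · exfalso
      rw [hp] at h2; rw [hq] at h3
      have : Real.cos (2 * t) < 0 :=
        Real.cos_neg_of_pi_div_two_lt_of_lt (by linarith) (by linarith)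
      linarith
    · rw [h3, ← hAq]
    · exfalso
      rw [hq] at h3
      have : 0 < Real.cos (2 * t) := by
        rw [← Real.cos_sub_two_pi]
        apply Real.cos_pos_of_mem_Ioo
        constructor <;> [linarith; linarith [ht.2, hπ]]
      linarith
end

section
/- Let w(x) = x⁴ on [0,1]. For every constant C > 0 there exists a function f ∈ C²[0,1] with f(0) = f(1) = 0, f not identically zero, such that (∫₀¹ w(x) f'(x)² dx)² > C · (∫₀¹ w(x) f(x)² dx) · (∫₀¹ w(x) f''(x)² dx). In particular, the weighted Hardy–Littlewood inequality fails with every finite constant for the convex weight w(x) = x⁴, so neither the concavity hypothesis of the main theorem can be removed nor does a corresponding result hold for convex weights. -/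
lemma hp_aux (x : ℝ) : HasDerivAt (fun x : ℝ => 1 - x) (-1) x :=
  (hasDerivAt_id x).const_sub 1

lemma hp (p : ℕ) (x : ℝ) :
    HasDerivAt (fun x : ℝ => (1 - x) ^ (p + 1)) (-((p : ℝ) + 1) * (1 - x) ^ p) x := by
  have h := (hp_aux x).fun_pow (p + 1)
  refine h.congr_deriv ?_
  push_cast
  ring

noncomputable def Faux (k : ℕ) (x : ℝ) : ℝ :=
  -((1 - x) ^ (k + 1) / ((k : ℝ) + 1)) + 4 * ((1 - x) ^ (k + 1 + 1) / ((k : ℝ) + 2))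
    - 6 * ((1 - x) ^ (k + 2 + 1) / ((k : ℝ) + 3)) + 4 * ((1 - x) ^ (k + 3 + 1) / ((k : ℝ) + 4))
    - (1 - x) ^ (k + 4 + 1) / ((k : ℝ) + 5)

lemma Jint (k : ℕ) : (∫ x in (0:ℝ)..1, x ^ 4 * (1 - x) ^ k) =
    24 / (((k : ℝ) + 1) * ((k : ℝ) + 2) * ((k : ℝ) + 3) * ((k : ℝ) + 4) * ((k : ℝ) + 5)) := by
  have h1 : ((k : ℝ) + 1) ≠ 0 := by positivity
  have h2 : ((k : ℝ) + 2) ≠ 0 := by positivity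
  have h3 : ((k : ℝ) + 3) ≠ 0 := by positivity
  have h4 : ((k : ℝ) + 4) ≠ 0 := by positivity
  have h5 : ((k : ℝ) + 5) ≠ 0 := by positivity
  have hD : ∀ x ∈ Set.uIcc (0:ℝ) 1, HasDerivAt (Faux k) (x ^ 4 * (1 - x) ^ k) x := by
    intro x _
    have e1 := ((hp k x).div_const ((k : ℝ) + 1)).neg
    have e2 := ((hp (k+1) x).div_const ((k : ℝ) + 2)).const_mul (4:ℝ)
    have e3 := ((hp (k+2) x).div_const ((k : ℝ) + 3)).const_mul (6:ℝ)
    have e4 := ((hp (k+3) x).div_const ((k : ℝ) + 4)).const_mul (4:ℝ)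
    have e5 := (hp (k+4) x).div_const ((k : ℝ) + 5)
    have H := (((e1.add e2).sub e3).add e4).sub e5
    refine H.congr_deriv ?_
    push_cast
    field_simp
    ring
  have hI : IntervalIntegrable (fun x : ℝ => x ^ 4 * (1 - x) ^ k)
      MeasureTheory.volume 0 1 := by
    apply Continuous.intervalIntegrable; fun_prop
  rw [intervalIntegral.integral_eq_sub_of_hasDerivAt hD hI]
  simp only [Faux, sub_self, one_pow, sub_zero, zero_pow, Nat.succ_ne_zero, Nat.add_eq_zero,
    and_false, ne_eq, not_false_iff, mul_zero, zero_div, neg_zero, zero_add, zero_sub]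
  field_simp
  ring

/-- For the convex weight `w x = x⁴` on `[0,1]`, no finite constant works:
for every `C > 0` there is `f ∈ C²[0,1]` with `f 0 = f 1 = 0`, `f ≢ 0`, and
`(∫₀¹ w f'²)² > C (∫₀¹ w f²)(∫₀¹ w f''²)`. -/
theorem convex_weight_counterexample :
    ∀ C : ℝ, 0 < C → ∃ f f' f'' : ℝ → ℝ,
      (∀ x ∈ Set.Icc (0:ℝ) 1, HasDerivWithinAt f (f' x) (Set.Icc (0:ℝ) 1) x) ∧
      (∀ x ∈ Set.Icc (0:ℝ) 1, HasDerivWithinAt f' (f'' x) (Set.Icc (0:ℝ) 1) x) ∧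
      ContinuousOn f'' (Set.Icc (0:ℝ) 1) ∧
      f 0 = 0 ∧ f 1 = 0 ∧ (∃ x ∈ Set.Icc (0:ℝ) 1, f x ≠ 0) ∧
      C * ((∫ x in (0:ℝ)..1, x ^ 4 * f x ^ 2) * (∫ x in (0:ℝ)..1, x ^ 4 * f'' x ^ 2)) <
        (∫ x in (0:ℝ)..1, x ^ 4 * f' x ^ 2) ^ 2 := by
  intro C hC
  obtain ⟨m, hMC⟩ : ∃ m : ℕ, 135 * C ≤ (m : ℝ) := by
    refine ⟨⌈135 * C⌉₊, Nat.le_ceil _⟩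
  set M : ℝ := (m : ℝ) with hM
  have hM0 : (0:ℝ) ≤ M := Nat.cast_nonneg m
  refine ⟨fun x => (1 - x) - (1 - x) ^ (m + 1 + 1),
    fun x => (M + 2) * (1 - x) ^ (m + 1) - 1,
    fun x => -((M + 1) * (M + 2) * (1 - x) ^ m), ?_, ?_, ?_, ?_, ?_, ?_, ?_⟩
  · intro x _
    have h := (hp_aux x).sub (hp (m + 1) x)
    have h2 : HasDerivAt (fun x : ℝ => (1 - x) - (1 - x) ^ (m + 1 + 1))
        ((M + 2) * (1 - x) ^ (m + 1) - 1) x := by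
      refine h.congr_deriv ?_
      push_cast [hM]
      ring
    exact h2.hasDerivWithinAt
  · intro x _
    have h := ((hp m x).const_mul (M + 2)).sub_const 1
    have h2 : HasDerivAt (fun x : ℝ => (M + 2) * (1 - x) ^ (m + 1) - 1)
        (-((M + 1) * (M + 2) * (1 - x) ^ m)) x := by
      refine h.congr_deriv ?_
      push_cast [hM]
      ring
    exact h2.hasDerivWithinAt
  · fun_prop
  · norm_num
  · norm_num
  · refine ⟨1/2, by norm_num, ?_⟩
    have h : ((1:ℝ) - 1/2) ^ (m + 1 + 1) < (1 - 1/2) ^ 1 := by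
      apply pow_lt_pow_right_of_lt_one₀ (by norm_num) (by norm_num)
      omega
    norm_num at h ⊢
    linarith
  · -- the integral inequality
    set I0 : ℝ := ∫ x in (0:ℝ)..1, x ^ 4 * ((1 - x) - (1 - x) ^ (m + 1 + 1)) ^ 2 with hI0def
    set I1 : ℝ := ∫ x in (0:ℝ)..1, x ^ 4 * ((M + 2) * (1 - x) ^ (m + 1) - 1) ^ 2 with hI1def
    set I2 : ℝ := ∫ x in (0:ℝ)..1, x ^ 4 * (-((M + 1) * (M + 2) * (1 - x) ^ m)) ^ 2 with hI2def
    -- I0 bounds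
    have hI0nonneg : 0 ≤ I0 := by
      rw [hI0def]
      apply intervalIntegral.integral_nonneg (by norm_num)
      intro x _
      positivity
    have hI0le : I0 ≤ 1/5 := by
      have h5 : (∫ x in (0:ℝ)..1, x ^ 4 * (1 - x) ^ 0) = 1/5 := by
        rw [Jint]; norm_num
      rw [hI0def, ← h5]
      apply intervalIntegral.integral_mono_on (by norm_num)
      · apply Continuous.intervalIntegrable; fun_prop
      · apply Continuous.intervalIntegrable; fun_prop
      · intro x hx
        obtain ⟨hx0, hx1⟩ := hx
        have hy0 : (0:ℝ) ≤ 1 - x := by linarith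
        have hy1 : (1:ℝ) - x ≤ 1 := by linarith
        have h1 : (1 - x) ^ (m + 1 + 1) ≤ 1 - x := pow_le_of_le_one hy0 hy1 (by omega)
        have h2 : 0 ≤ (1 - x) ^ (m + 1 + 1) := by positivity
        have h3 : ((1 - x) - (1 - x) ^ (m + 1 + 1)) ^ 2 ≤ 1 := by nlinarith
        have h4 : (0:ℝ) ≤ x ^ 4 := by positivity
        calc x ^ 4 * ((1 - x) - (1 - x) ^ (m + 1 + 1)) ^ 2 ≤ x ^ 4 * 1 :=
              mul_le_mul_of_nonneg_left h3 h4
          _ = x ^ 4 * (1 - x) ^ 0 := by ring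
    -- I2 exact value and bounds
    have hI2eq : I2 = ((M + 1) * (M + 2)) ^ 2 *
        (24 / ((2*M + 1) * (2*M + 2) * (2*M + 3) * (2*M + 4) * (2*M + 5))) := by
      have e : (fun x : ℝ => x ^ 4 * (-((M + 1) * (M + 2) * (1 - x) ^ m)) ^ 2) =
          fun x : ℝ => ((M + 1) * (M + 2)) ^ 2 * (x ^ 4 * (1 - x) ^ (2 * m)) := by
        funext x
        rw [two_mul, pow_add]
        ring
      rw [hI2def, e, intervalIntegral.integral_const_mul, Jint]
      push_cast [hM]
      ring_nf
    have hI2nonneg : 0 ≤ I2 := by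
      rw [hI2eq]; positivity
    have hI2le : I2 ≤ 6 / (2*M + 5) := by
      rw [hI2eq]
      rw [mul_div_assoc', div_le_div_iff₀ (by positivity) (by positivity)]
      nlinarith [sq_nonneg M, hM0, mul_nonneg hM0 hM0, mul_nonneg (mul_nonneg hM0 hM0) hM0,
        mul_nonneg (mul_nonneg (mul_nonneg hM0 hM0) hM0) hM0,
        mul_nonneg (mul_nonneg (mul_nonneg (mul_nonneg hM0 hM0) hM0) hM0) hM0]
    -- I1 lower bound
    have hI1ge : 1/15 ≤ I1 := by
      have hlow : (∫ x in (0:ℝ)..1,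
          (x ^ 4 * (1 - x) ^ 0 - 2 * (M + 2) * (x ^ 4 * (1 - x) ^ (m + 1)))) ≤ I1 := by
        rw [hI1def]
        apply intervalIntegral.integral_mono_on (by norm_num)
        · apply Continuous.intervalIntegrable; fun_prop
        · apply Continuous.intervalIntegrable; fun_prop
        · intro x hx
          obtain ⟨hx0, hx1⟩ := hx
          have h4 : (0:ℝ) ≤ x ^ 4 := by positivity
          have hkey : 0 ≤ x ^ 4 * ((M + 2) * (1 - x) ^ (m + 1)) ^ 2 := by positivity
          nlinarith [hkey]
      have hsub : (∫ x in (0:ℝ)..1,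
          (x ^ 4 * (1 - x) ^ 0 - 2 * (M + 2) * (x ^ 4 * (1 - x) ^ (m + 1)))) =
          (∫ x in (0:ℝ)..1, x ^ 4 * (1 - x) ^ 0) -
          2 * (M + 2) * (∫ x in (0:ℝ)..1, x ^ 4 * (1 - x) ^ (m + 1)) := by
        rw [intervalIntegral.integral_sub, intervalIntegral.integral_const_mul]
        · apply Continuous.intervalIntegrable; fun_prop
        · apply Continuous.intervalIntegrable; fun_prop
      have hJ0 : (∫ x in (0:ℝ)..1, x ^ 4 * (1 - x) ^ 0) = 1/5 := by rw [Jint]; norm_num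
      have hJm : (∫ x in (0:ℝ)..1, x ^ 4 * (1 - x) ^ (m + 1)) =
          24 / ((M + 2) * (M + 3) * (M + 4) * (M + 5) * (M + 6)) := by
        rw [Jint]; push_cast [hM]; ring_nf
      have hterm : 2 * (M + 2) * (24 / ((M + 2) * (M + 3) * (M + 4) * (M + 5) * (M + 6)))
          ≤ 2/15 := by
        rw [mul_div_assoc', div_le_div_iff₀ (by positivity) (by norm_num)]
        nlinarith [hM0, mul_nonneg hM0 hM0, mul_nonneg (mul_nonneg hM0 hM0) hM0,
          mul_nonneg (mul_nonneg (mul_nonneg hM0 hM0) hM0) hM0]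
      rw [hsub, hJ0, hJm] at hlow
      linarith
    -- combine
    have hI1sq : (1/225 : ℝ) ≤ I1 ^ 2 := by nlinarith
    have hstep : C * (I0 * I2) ≤ C * ((1/5) * (6 / (2*M + 5))) := by
      apply mul_le_mul_of_nonneg_left _ hC.le
      apply mul_le_mul hI0le hI2le hI2nonneg (by norm_num)
    have hfin : C * ((1/5) * (6 / (2*M + 5))) < 1/225 := by
      have hpos : (0:ℝ) < 2*M + 5 := by linarith
      rw [show C * ((1/5) * (6 / (2*M + 5))) = (6*C/5) / (2*M + 5) by ring,
        div_lt_div_iff₀ hpos (by norm_num)]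
      nlinarith
    linarith
end

section
/- Let w(x) = 1 − x and f(x) = sin(πx/2) on [0,1]. Then (∫₀¹ w(x) f'(x)² dx)² = ((π² + 4)/(π² − 4))² · (∫₀¹ w(x) f(x)² dx) · (∫₀¹ w(x) f''(x)² dx); in particular, since ((π²+4)/(π²−4))² > 1, the inequality (∫₀¹ w f'²)² ≤ (∫₀¹ w f²)(∫₀¹ w f''²) fails for this concave but decreasing weight w even though f(0) = 0 and f'(1) = 0, showing that the monotonicity hypothesis in the corollary cannot be eliminated. -/
open Real

lemma intA : ∫ x in (0:ℝ)..1, (1 - x) * Real.sin (Real.pi * x / 2) ^ 2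
    = (Real.pi ^ 2 - 4) / (4 * Real.pi ^ 2) := by
  have hπ : Real.pi ≠ 0 := Real.pi_ne_zero
  have key : ∀ x ∈ Set.uIcc (0:ℝ) 1, HasDerivAt
      (fun y : ℝ => (y - y^2/2)/2 -
        ((1-y) * Real.sin (Real.pi*y) / Real.pi - Real.cos (Real.pi*y) / Real.pi^2)/2)
      ((1 - x) * Real.sin (Real.pi * x / 2) ^ 2) x := by
    intro x _
    have hid : HasDerivAt (fun y : ℝ => Real.pi * y) Real.pi x := by
      simpa using (hasDerivAt_id x).const_mul Real.pi
    have hsin : HasDerivAt (fun y : ℝ => Real.sin (Real.pi*y))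
        (Real.cos (Real.pi*x) * Real.pi) x := (Real.hasDerivAt_sin _).comp x hid
    have hcos : HasDerivAt (fun y : ℝ => Real.cos (Real.pi*y))
        (-Real.sin (Real.pi*x) * Real.pi) x := (Real.hasDerivAt_cos _).comp x hid
    have hlin : HasDerivAt (fun y : ℝ => 1 - y) (-1) x := by
      simpa using (hasDerivAt_id' x).const_sub (1:ℝ)
    have h1 : HasDerivAt (fun y : ℝ => y - y^2/2) (1 - x) x := by
      have := (hasDerivAt_id' x).sub ((hasDerivAt_pow 2 x).div_const 2)
      exact this.congr_deriv (by norm_num)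
    have h2 := hlin.mul hsin
    have full := (h1.div_const 2).sub (((h2.div_const Real.pi).sub
      (hcos.div_const (Real.pi^2))).div_const 2)
    refine full.congr_deriv ?_
    have hhalf : Real.sin (Real.pi*x/2) ^ 2 = (1 - Real.cos (Real.pi*x))/2 := by
      rw [Real.sin_sq, Real.cos_sq, show 2*(Real.pi*x/2) = Real.pi*x by ring]; ring
    rw [hhalf]
    field_simp
    ring
  have hcont : IntervalIntegrable (fun x : ℝ => (1 - x) * Real.sin (Real.pi * x / 2) ^ 2)
      MeasureTheory.volume 0 1 := by
    apply Continuous.intervalIntegrable; continuity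
  rw [intervalIntegral.integral_eq_sub_of_hasDerivAt key hcont]
  simp [Real.sin_pi, Real.cos_pi]
  field_simp
  ring

lemma intB : ∫ x in (0:ℝ)..1, (1 - x) * Real.cos (Real.pi * x / 2) ^ 2
    = (Real.pi ^ 2 + 4) / (4 * Real.pi ^ 2) := by
  have hπ : Real.pi ≠ 0 := Real.pi_ne_zero
  have key : ∀ x ∈ Set.uIcc (0:ℝ) 1, HasDerivAt
      (fun y : ℝ => (y - y^2/2)/2 +
        ((1-y) * Real.sin (Real.pi*y) / Real.pi - Real.cos (Real.pi*y) / Real.pi^2)/2)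
      ((1 - x) * Real.cos (Real.pi * x / 2) ^ 2) x := by
    intro x _
    have hid : HasDerivAt (fun y : ℝ => Real.pi * y) Real.pi x := by
      simpa using (hasDerivAt_id x).const_mul Real.pi
    have hsin : HasDerivAt (fun y : ℝ => Real.sin (Real.pi*y))
        (Real.cos (Real.pi*x) * Real.pi) x := (Real.hasDerivAt_sin _).comp x hid
    have hcos : HasDerivAt (fun y : ℝ => Real.cos (Real.pi*y))
        (-Real.sin (Real.pi*x) * Real.pi) x := (Real.hasDerivAt_cos _).comp x hid
    have hlin : HasDerivAt (fun y : ℝ => 1 - y) (-1) x := by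
      simpa using (hasDerivAt_id' x).const_sub (1:ℝ)
    have h1 : HasDerivAt (fun y : ℝ => y - y^2/2) (1 - x) x := by
      have := (hasDerivAt_id' x).sub ((hasDerivAt_pow 2 x).div_const 2)
      exact this.congr_deriv (by norm_num)
    have h2 := hlin.mul hsin
    have full := (h1.div_const 2).add (((h2.div_const Real.pi).sub
      (hcos.div_const (Real.pi^2))).div_const 2)
    refine full.congr_deriv ?_
    have hhalf : Real.cos (Real.pi*x/2) ^ 2 = (1 + Real.cos (Real.pi*x))/2 := by
      rw [Real.cos_sq, show 2*(Real.pi*x/2) = Real.pi*x by ring]; ring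
    rw [hhalf]
    field_simp
    ring
  have hcont : IntervalIntegrable (fun x : ℝ => (1 - x) * Real.cos (Real.pi * x / 2) ^ 2)
      MeasureTheory.volume 0 1 := by
    apply Continuous.intervalIntegrable; continuity
  rw [intervalIntegral.integral_eq_sub_of_hasDerivAt key hcont]
  simp [Real.sin_pi, Real.cos_pi]
  field_simp
  ring

/-- For `w x = 1 - x` and `f x = sin (πx/2)` on `[0,1]` (so `f 0 = 0` and
`f' 1 = 0`), one has `(∫₀¹ w f'²)² = ((π²+4)/(π²-4))² (∫₀¹ w f²)(∫₀¹ w f''²)`;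
since `((π²+4)/(π²-4))² > 1`, the Hardy–Littlewood inequality fails for this
concave but decreasing weight, so monotonicity cannot be dropped. -/
theorem decreasing_weight_counterexample
    (f : ℝ → ℝ) (hf : ∀ x, f x = Real.sin (Real.pi * x / 2)) :
    f 0 = 0 ∧ deriv f 1 = 0 ∧
    (∫ x in (0:ℝ)..1, (1 - x) * deriv f x ^ 2) ^ 2 =
      ((Real.pi ^ 2 + 4) / (Real.pi ^ 2 - 4)) ^ 2 *
        ((∫ x in (0:ℝ)..1, (1 - x) * f x ^ 2) *
          (∫ x in (0:ℝ)..1, (1 - x) * deriv (deriv f) x ^ 2)) ∧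
    1 < ((Real.pi ^ 2 + 4) / (Real.pi ^ 2 - 4)) ^ 2 ∧
    ¬ ((∫ x in (0:ℝ)..1, (1 - x) * deriv f x ^ 2) ^ 2 ≤
        (∫ x in (0:ℝ)..1, (1 - x) * f x ^ 2) *
          (∫ x in (0:ℝ)..1, (1 - x) * deriv (deriv f) x ^ 2)) := by
  have hπ : Real.pi ≠ 0 := Real.pi_ne_zero
  have hπ3 : 3 < Real.pi := Real.pi_gt_three
  have h4 : (0:ℝ) < Real.pi ^ 2 - 4 := by nlinarith
  have hf' : f = fun x => Real.sin (Real.pi * x / 2) := funext hf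
  subst hf'
  -- first derivative
  have hd1 : deriv (fun x => Real.sin (Real.pi * x / 2))
      = fun x => Real.pi / 2 * Real.cos (Real.pi * x / 2) := by
    funext x
    have hid : HasDerivAt (fun y : ℝ => Real.pi * y / 2) (Real.pi / 2) x := by
      simpa using ((hasDerivAt_id x).const_mul Real.pi).div_const 2
    have h : HasDerivAt (fun y : ℝ => Real.sin (Real.pi * y / 2))
        (Real.cos (Real.pi * x / 2) * (Real.pi / 2)) x :=
      (Real.hasDerivAt_sin _).comp x hid
    rw [h.deriv]; ring
  have hd2 : deriv (fun x => Real.pi / 2 * Real.cos (Real.pi * x / 2))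
      = fun x => -(Real.pi / 2) ^ 2 * Real.sin (Real.pi * x / 2) := by
    funext x
    have hid : HasDerivAt (fun y : ℝ => Real.pi * y / 2) (Real.pi / 2) x := by
      simpa using ((hasDerivAt_id x).const_mul Real.pi).div_const 2
    have h : HasDerivAt (fun y : ℝ => Real.pi / 2 * Real.cos (Real.pi * y / 2))
        (Real.pi / 2 * (-Real.sin (Real.pi * x / 2) * (Real.pi / 2))) x :=
      ((Real.hasDerivAt_cos _).comp x hid).const_mul _
    rw [h.deriv]; ring
  rw [hd1, hd2]
  beta_reduce
  have e1 : (∫ x in (0:ℝ)..1, (1 - x) * (Real.pi / 2 * Real.cos (Real.pi * x / 2)) ^ 2)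
      = (Real.pi ^ 2 + 4) / 16 := by
    have : (fun x : ℝ => (1 - x) * (Real.pi / 2 * Real.cos (Real.pi * x / 2)) ^ 2)
        = fun x : ℝ => (Real.pi / 2) ^ 2 * ((1 - x) * Real.cos (Real.pi * x / 2) ^ 2) :=
      funext fun x => by ring
    rw [this, intervalIntegral.integral_const_mul, intB]
    field_simp; ring
  have e2 : (∫ x in (0:ℝ)..1, (1 - x) * Real.sin (Real.pi * x / 2) ^ 2)
      = (Real.pi ^ 2 - 4) / (4 * Real.pi ^ 2) := intA
  have e3 : (∫ x in (0:ℝ)..1, (1 - x) * (-(Real.pi / 2) ^ 2 * Real.sin (Real.pi * x / 2)) ^ 2)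
      = Real.pi ^ 2 * (Real.pi ^ 2 - 4) / 64 := by
    have : (fun x : ℝ => (1 - x) * (-(Real.pi / 2) ^ 2 * Real.sin (Real.pi * x / 2)) ^ 2)
        = fun x : ℝ => (Real.pi / 2) ^ 4 * ((1 - x) * Real.sin (Real.pi * x / 2) ^ 2) :=
      funext fun x => by ring
    rw [this, intervalIntegral.integral_const_mul, intA]
    field_simp; ring
  rw [e1, e2, e3]
  refine ⟨by simp, ?_, ?_, ?_, ?_⟩
  · show Real.pi / 2 * Real.cos (Real.pi * 1 / 2) = 0
    norm_num [Real.cos_pi_div_two]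
  · field_simp
    ring
  · rw [one_lt_pow_iff_of_nonneg (by positivity) (by norm_num)]
    rw [lt_div_iff₀ h4]
    nlinarith
  · push_neg
    have hval : (Real.pi ^ 2 - 4) / (4 * Real.pi ^ 2) * (Real.pi ^ 2 * (Real.pi ^ 2 - 4) / 64)
        = (Real.pi ^ 2 - 4) ^ 2 / 256 := by field_simp; ring
    rw [hval]
    have : ((Real.pi ^ 2 + 4) / 16) ^ 2 = (Real.pi ^ 2 + 4) ^ 2 / 256 := by ring
    rw [this]
    have h : (Real.pi ^ 2 - 4) ^ 2 < (Real.pi ^ 2 + 4) ^ 2 := by nlinarith [Real.pi_pos]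
    linarith
end
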